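/- arXiv:0901.2717 — 6 statements merged into one kernel-verified Lean document; each statement's English description precedes it below -/
import Mathlib

section
/- If H(t), P(t) are families of bounded operators with t ↦ H(t) differentiable, P(t) skew-adjoint with norm-continuous dependence on t, and the Lax equation dH/dt = P(t)H(t) − H(t)P(t) holds, then H(t) = U(t,s)H(s)U(t,s)^{-1} where U is the propagator of P; in particular ‖H(t)‖ = ‖H(s)‖ for all t, s. -/
open ContinuousLinearMap Set

/-- If `H(t)`, `P(t)` are bounded operator families, `t ↦ H(t)` differentiable,
`P(t)` skew-adjoint and norm-continuous, and the Lax equation `dH/dt = P(t)H(t) − H(t)P(t)`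
holds, then `H(t) = U(t,s) H(s) U(t,s)⁻¹` where `U` is the propagator of `P`; in particular
`‖H(t)‖ = ‖H(s)‖` for all `t, s`. -/
theorem lax_equation_unitary_equivalence
    {𝓗 : Type*} [NormedAddCommGroup 𝓗] [InnerProductSpace ℂ 𝓗] [CompleteSpace 𝓗]
    (H P : ℝ → 𝓗 →L[ℂ] 𝓗)
    (hPcont : Continuous P)
    (hPskew : ∀ t, ContinuousLinearMap.adjoint (P t) = -(P t))
    (hLax : ∀ t, HasDerivAt H (P t ∘L H t - H t ∘L P t) t)
    (U V : ℝ → ℝ → 𝓗 →L[ℂ] 𝓗)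
    (hUderiv : ∀ s t, HasDerivAt (fun τ => U τ s) (P t ∘L U t s) t)
    (hUinit : ∀ s, U s s = 1)
    (hV : ∀ t s, U t s ∘L V t s = 1 ∧ V t s ∘L U t s = 1) :
    ∀ t s, H t = U t s ∘L H s ∘L V t s ∧ ‖H t‖ = ‖H s‖ := by
  simp only [← ContinuousLinearMap.mul_def] at hLax hUderiv hV ⊢
  -- Step 1: U is isometric, i.e. star (U t s) * U t s = 1
  have hstar : ∀ s t, star (U t s) * U t s = 1 := by
    intro s
    have hF : ∀ τ, HasDerivAt (fun τ => star (U τ s) * U τ s) 0 τ := by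
      intro τ
      have h1 := HasDerivAt.mul (hUderiv s τ).star (hUderiv s τ)
      have hPs : star (P τ) = -(P τ) := by
        rw [ContinuousLinearMap.star_eq_adjoint, hPskew]
      have : star (P τ * U τ s) * U τ s + star (U τ s) * (P τ * U τ s) = 0 := by
        rw [star_mul, hPs]
        noncomm_ring
      rwa [this] at h1
    have hconst : ∀ τ, star (U τ s) * U τ s = star (U s s) * U s s := fun τ =>
      is_const_of_deriv_eq_zero (f := fun τ => star (U τ s) * U τ s)
        (fun x => (hF x).differentiableAt) (fun x => (hF x).deriv) τ s
    intro t
    rw [hconst t, hUinit]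
    simp
  -- U t s is an isometry pointwise
  have hUiso : ∀ s t (x : 𝓗), ‖U t s x‖ = ‖x‖ := by
    intro s t x
    have h1 : (inner ℂ (U t s x) (U t s x) : ℂ) = inner ℂ x x := by
      rw [← ContinuousLinearMap.adjoint_inner_left]
      have : (ContinuousLinearMap.adjoint (U t s)) (U t s x) = x := by
        have := congrArg (fun A => A x) (hstar s t)
        simpa [ContinuousLinearMap.star_eq_adjoint, ContinuousLinearMap.mul_apply] using this
      rw [this]
    rw [inner_self_eq_norm_sq_to_K, inner_self_eq_norm_sq_to_K] at h1
    have h2 : ‖U t s x‖ ^ 2 = ‖x‖ ^ 2 := by exact_mod_cast h1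
    nlinarith [norm_nonneg (U t s x), norm_nonneg x]
  have hViso : ∀ s t (x : 𝓗), ‖V t s x‖ = ‖x‖ := by
    intro s t x
    have : ‖U t s (V t s x)‖ = ‖x‖ := by
      have := congrArg (fun A => A x) (hV t s).1
      simp only [ContinuousLinearMap.mul_apply, ContinuousLinearMap.one_apply] at this
      rw [this]
    rwa [hUiso] at this
  -- Step 2: the intertwining relation H t * U t s = U t s * H s
  have hkey : ∀ s t, H t * U t s = U t s * H s := by
    intro s t
    set W : ℝ → 𝓗 →L[ℂ] 𝓗 := fun τ => U τ s * H s - H τ * U τ s with hW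
    have hWd : ∀ τ, HasDerivAt W (P τ * W τ) τ := by
      intro τ
      have h1 : HasDerivAt (fun τ => U τ s * H s) (P τ * U τ s * H s + U τ s * 0) τ :=
        HasDerivAt.mul (hUderiv s τ) (hasDerivAt_const τ (H s))
      have h2 : HasDerivAt (fun τ => H τ * U τ s)
          ((P τ * H τ - H τ * P τ) * U τ s + H τ * (P τ * U τ s)) τ :=
        HasDerivAt.mul (hLax τ) (hUderiv s τ)
      have h3 := h1.sub h2
      have : P τ * U τ s * H s + U τ s * 0 -
          ((P τ * H τ - H τ * P τ) * U τ s + H τ * (P τ * U τ s))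
          = P τ * W τ := by
        simp only [hW]
        noncomm_ring
      rwa [this] at h3
    -- uniqueness of ODE solutions on a compact interval
    set a : ℝ := min s t - 1 with ha
    set b : ℝ := max s t + 1 with hb
    have hab : a ≤ b := by
      have h1 : min s t ≤ max s t := le_trans (min_le_left _ _) (le_max_left _ _)
      simp only [ha, hb]; linarith
    set c : ℝ → ℝ := fun τ => max a (min τ b) with hc
    have hcmem : ∀ τ, c τ ∈ Icc a b := fun τ =>
      ⟨le_max_left _ _, max_le hab (min_le_right _ _)⟩
    have hceq : ∀ τ ∈ Icc a b, c τ = τ := by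
      intro τ hτ
      simp only [hc]
      rw [min_eq_left hτ.2, max_eq_right hτ.1]
    obtain ⟨C, hC⟩ := isCompact_Icc.exists_bound_of_continuousOn
      (hPcont.continuousOn : ContinuousOn P (Icc a b))
    set v : ℝ → (𝓗 →L[ℂ] 𝓗) → (𝓗 →L[ℂ] 𝓗) := fun τ y => P (c τ) * y with hv
    have hlip : ∀ τ, LipschitzWith C.toNNReal (v τ) := by
      intro τ
      apply LipschitzWith.of_dist_le_mul
      intro y z
      rw [dist_eq_norm, dist_eq_norm]
      have hsub : v τ y - v τ z = P (c τ) * (y - z) := by simp [hv, mul_sub]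
      rw [hsub]
      calc ‖P (c τ) * (y - z)‖ ≤ ‖P (c τ)‖ * ‖y - z‖ := norm_mul_le _ _
        _ ≤ C.toNNReal * ‖y - z‖ := by
            apply mul_le_mul_of_nonneg_right _ (norm_nonneg _)
            exact le_trans (hC _ (hcmem τ)) (Real.le_coe_toNNReal C)
    have hsmem : s ∈ Ioo a b := by
      constructor
      · have := min_le_left s t; simp only [ha]; linarith
      · have := le_max_left s t; simp only [hb]; linarith
    have htmem : t ∈ Icc a b := by
      constructor
      · have := min_le_right s t; simp only [ha]; linarith
      · have := le_max_right s t; simp only [hb]; linarith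
    have heq : EqOn W (fun _ => (0 : 𝓗 →L[ℂ] 𝓗)) (Icc a b) := by
      apply ODE_solution_unique_of_mem_Icc (v := v) (s := fun _ => univ)
        (K := C.toNNReal) (t₀ := s)
        (fun τ _ => (hlip τ).lipschitzOnWith) hsmem
      · exact fun τ _ => (hWd τ).continuousAt.continuousWithinAt
      · intro τ hτ
        have hd := hWd τ
        rwa [show P τ * W τ = v τ (W τ) by
          simp only [hv]; rw [hceq τ (Ioo_subset_Icc_self hτ)]] at hd
      · intro τ _; trivial
      · exact continuousOn_const
      · intro τ _
        have hz : v τ (0 : 𝓗 →L[ℂ] 𝓗) = 0 := by simp [hv]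
        rw [hz]
        exact hasDerivAt_const _ _
      · intro τ _; trivial
      · show W s = 0
        simp [hW, hUinit]
    have hWt : W t = 0 := heq htmem
    have h0 : U t s * H s - H t * U t s = 0 := hWt
    linear_combination (norm := noncomm_ring) -h0
  -- conclude
  intro t s
  have hUV := (hV t s).1
  have hVU := (hV t s).2
  have hrel : H t = U t s * (H s * V t s) := by
    calc H t = H t * (U t s * V t s) := by rw [hUV, mul_one]
    _ = (H t * U t s) * V t s := by rw [mul_assoc]
    _ = (U t s * H s) * V t s := by rw [hkey]
    _ = U t s * (H s * V t s) := by rw [mul_assoc]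
  refine ⟨hrel, ?_⟩
  have hrel' : H s = V t s * (H t * U t s) := by
    rw [hkey, ← mul_assoc, hVU, one_mul]
  have le1 : ‖H t‖ ≤ ‖H s‖ := by
    rw [hrel]
    apply ContinuousLinearMap.opNorm_le_bound _ (norm_nonneg _)
    intro x
    simp only [ContinuousLinearMap.mul_apply]
    rw [hUiso]
    calc ‖H s (V t s x)‖ ≤ ‖H s‖ * ‖V t s x‖ := (H s).le_opNorm _
    _ = ‖H s‖ * ‖x‖ := by rw [hViso]
  have le2 : ‖H s‖ ≤ ‖H t‖ := by
    rw [hrel']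
    apply ContinuousLinearMap.opNorm_le_bound _ (norm_nonneg _)
    intro x
    simp only [ContinuousLinearMap.mul_apply]
    rw [hViso]
    calc ‖H t (U t s x)‖ ≤ ‖H t‖ * ‖U t s x‖ := (H t).le_opNorm _
    _ = ‖H t‖ * ‖x‖ := by rw [hUiso]
  linarith
end

section
/- Main theorem (preservation of spatial asymptotics): Let w(n) ≥ 1 with sup_n(w(n+1)/w(n) + w(n)/w(n+1)) < ∞ and 1 ≤ p ≤ ∞. Suppose a₀, b₀, ã₀, b̃₀ are bounded sequences with ‖(a₀⁺−a₀, b₀⁺−b₀)‖_{w,p} < ∞ and ‖(ã₀, b̃₀)‖_{w,p} < ∞, and let (a(t), b(t)) be the unique Toda solution with a(0) = a₀ + ã₀ ≠ 0, b(0) = b₀ + b̃₀. Then a(t) = a₀ + ã(t), b(t) = b₀ + b̃(t) with ‖(ã(t), b̃(t))‖_{w,p} < ∞ for all t ∈ ℝ. -/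
open scoped ENNReal

/-- The weighted `ℓ^p_w` "norm" of a pair of sequences, valued in `ℝ≥0∞`:
`‖(a,b)‖_{w,p} = (Σ_n w(n)(|a(n)|^p + |b(n)|^p))^{1/p}` for `p < ∞` and
`sup_n w(n)(|a(n)| + |b(n)|)` for `p = ∞`. -/
noncomputable def wnorm2 (w : ℤ → ℝ) (p : ℝ≥0∞) (f g : ℤ → ℝ) : ℝ≥0∞ :=
  if p = ∞ then ⨆ n, ENNReal.ofReal (w n * (|f n| + |g n|))
  else (∑' n, ENNReal.ofReal (w n * (|f n| ^ p.toReal + |g n| ^ p.toReal))) ^ (1 / p.toReal)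




noncomputable def chainIter (g : ℤ → ℝ) : ℕ → ℤ → ℝ
  | 0 => g
  | (k+1) => fun n => chainIter g k (n-1) + chainIter g k n + chainIter g k (n+1)

lemma gronwall_chain
    (ε : ℝ → ℤ → ℝ) (g : ℤ → ℝ) (B K t : ℝ)
    (hK : 0 ≤ K)
    (hcont : ∀ n, ContinuousOn (fun s => ε s n) (Set.Icc 0 t))
    (hεB : ∀ s ∈ Set.Icc (0:ℝ) t, ∀ n, ε s n ≤ B)
    (hint : ∀ s ∈ Set.Icc (0:ℝ) t, ∀ n, ε s n ≤ g n +
      K * ∫ σ in (0:ℝ)..s, (ε σ (n-1) + ε σ n + ε σ (n+1))) :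
    ∀ N : ℕ, ∀ s ∈ Set.Icc (0:ℝ) t, ∀ n, ε s n ≤
      (∑ k ∈ Finset.range N, (K*s)^k / k.factorial * chainIter g k n)
        + (3*(K*s))^N / N.factorial * B := by
  intro N
  induction N with
  | zero =>
    intro s hs n
    simpa using hεB s hs n
  | succ N IH =>
    intro s hs n
    obtain ⟨hs0, hst⟩ := hs
    have hIcc : Set.Icc (0:ℝ) s ⊆ Set.Icc 0 t := Set.Icc_subset_Icc le_rfl hst
    have hInt : ∀ m : ℤ, IntervalIntegrable (fun σ => ε σ m) MeasureTheory.volume 0 s := by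
      intro m
      apply ContinuousOn.intervalIntegrable
      rw [Set.uIcc_of_le hs0]
      exact (hcont m).mono hIcc
    have hIntF : IntervalIntegrable
        (fun σ => ε σ (n-1) + ε σ n + ε σ (n+1)) MeasureTheory.volume 0 s :=
      ((hInt (n-1)).add (hInt n)).add (hInt (n+1))
    have hQcont : Continuous (fun σ : ℝ =>
        ∑ k ∈ Finset.range N, (K^k / k.factorial * chainIter g (k+1) n) * σ^k
          + (3^N * K^N / N.factorial * (3*B)) * σ^N) := by
      apply Continuous.add
      · exact continuous_finset_sum _ fun k _ => continuous_const.mul (continuous_pow k)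
      · exact continuous_const.mul (continuous_pow N)
    have hIntQ : IntervalIntegrable (fun σ : ℝ =>
        ∑ k ∈ Finset.range N, (K^k / k.factorial * chainIter g (k+1) n) * σ^k
          + (3^N * K^N / N.factorial * (3*B)) * σ^N) MeasureTheory.volume 0 s :=
      hQcont.intervalIntegrable 0 s
    have hptw : ∀ σ ∈ Set.Icc (0:ℝ) s,
        ε σ (n-1) + ε σ n + ε σ (n+1) ≤
        ∑ k ∈ Finset.range N, (K^k / k.factorial * chainIter g (k+1) n) * σ^k
          + (3^N * K^N / N.factorial * (3*B)) * σ^N := by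
      intro σ hσ
      have h1 := IH σ (hIcc hσ) (n-1)
      have h2 := IH σ (hIcc hσ) n
      have h3 := IH σ (hIcc hσ) (n+1)
      have key : (∑ k ∈ Finset.range N, (K*σ)^k / k.factorial * chainIter g k (n-1))
          + (∑ k ∈ Finset.range N, (K*σ)^k / k.factorial * chainIter g k n)
          + (∑ k ∈ Finset.range N, (K*σ)^k / k.factorial * chainIter g k (n+1))
          + 3 * ((3*(K*σ))^N / N.factorial * B) =
          ∑ k ∈ Finset.range N, (K^k / k.factorial * chainIter g (k+1) n) * σ^k
            + (3^N * K^N / N.factorial * (3*B)) * σ^N := by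
        simp only [← Finset.sum_add_distrib]
        rw [Finset.sum_congr rfl (fun k _ => ?_)]
        · ring
        · show (K*σ)^k / k.factorial * chainIter g k (n-1)
            + (K*σ)^k / k.factorial * chainIter g k n
            + (K*σ)^k / k.factorial * chainIter g k (n+1)
            = (K^k / k.factorial * chainIter g (k+1) n) * σ^k
          simp only [chainIter, mul_pow]
          ring
      linarith
    have hmono : (∫ σ in (0:ℝ)..s, (ε σ (n-1) + ε σ n + ε σ (n+1)))
        ≤ ∫ σ in (0:ℝ)..s,
          (∑ k ∈ Finset.range N, (K^k / k.factorial * chainIter g (k+1) n) * σ^k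
            + (3^N * K^N / N.factorial * (3*B)) * σ^N) :=
      intervalIntegral.integral_mono_on hs0 hIntF hIntQ hptw
    have hQval : (∫ σ in (0:ℝ)..s,
          (∑ k ∈ Finset.range N, (K^k / k.factorial * chainIter g (k+1) n) * σ^k
            + (3^N * K^N / N.factorial * (3*B)) * σ^N))
        = ∑ k ∈ Finset.range N, (K^k / k.factorial * chainIter g (k+1) n) * (s^(k+1)/(k+1))
          + (3^N * K^N / N.factorial * (3*B)) * (s^(N+1)/(N+1)) := by
      rw [intervalIntegral.integral_add
        (f := fun σ => ∑ k ∈ Finset.range N, (K^k / k.factorial * chainIter g (k+1) n) * σ^k)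
        (g := fun σ => (3^N * K^N / N.factorial * (3*B)) * σ^N)
        ((continuous_finset_sum _ fun k _ =>
          continuous_const.mul (continuous_pow k)).intervalIntegrable 0 s)
        ((continuous_const.mul (continuous_pow N)).intervalIntegrable 0 s)]
      rw [intervalIntegral.integral_finset_sum
        (f := fun k σ => (K^k / k.factorial * chainIter g (k+1) n) * σ^k)
        (fun k _ => ((continuous_const.mul (continuous_pow k)).intervalIntegrable 0 s))]
      simp only [intervalIntegral.integral_const_mul, integral_pow]
      norm_num
    have hfin := hint s ⟨hs0, hst⟩ n
    have hle : ε s n ≤ g n +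
        K * (∑ k ∈ Finset.range N, (K^k / k.factorial * chainIter g (k+1) n) * (s^(k+1)/(k+1))
          + (3^N * K^N / N.factorial * (3*B)) * (s^(N+1)/(N+1))) := by
      rw [← hQval]
      refine hfin.trans ?_
      have := mul_le_mul_of_nonneg_left hmono hK
      linarith
    refine hle.trans (le_of_eq ?_)
    have hfac : ∀ k : ℕ, ((k+1).factorial : ℝ) = (k+1) * k.factorial := by
      intro k; exact_mod_cast Nat.factorial_succ k
    have e2 : ∀ k ∈ Finset.range N,
        K * ((K ^ k / k.factorial * chainIter g (k + 1) n) * (s ^ (k + 1) / (k + 1)))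
        = (K * s) ^ (k + 1) / (k + 1).factorial * chainIter g (k + 1) n := by
      intro k _
      have hk0 : (k.factorial : ℝ) ≠ 0 := Nat.cast_ne_zero.mpr (Nat.factorial_ne_zero k)
      have hk1 : ((k:ℝ)+1) ≠ 0 := by positivity
      rw [hfac k]
      push_cast
      field_simp
      ring
    have e3 : K * ((3^N * K^N / N.factorial * (3*B)) * (s^(N+1)/(N+1)))
        = (3*(K*s))^(N+1) / (N+1).factorial * B := by
      have hN0 : (N.factorial : ℝ) ≠ 0 := Nat.cast_ne_zero.mpr (Nat.factorial_ne_zero N)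
      have hN1 : ((N:ℝ)+1) ≠ 0 := by positivity
      rw [hfac N]
      push_cast
      field_simp
      ring
    rw [mul_add, Finset.mul_sum, Finset.sum_congr rfl e2, e3, Finset.sum_range_succ']
    simp [chainIter]
    ring

lemma chainIter_nonneg {g : ℤ → ℝ} (hg : ∀ n, 0 ≤ g n) : ∀ k n, 0 ≤ chainIter g k n := by
  intro k
  induction k with
  | zero => exact hg
  | succ k ih => intro n; exact add_nonneg (add_nonneg (ih _) (ih _)) (ih _)

lemma toda_pointwise_bound
    (a₀ b₀ ta₀ tb₀ : ℤ → ℝ)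
    (a b : ℝ → ℤ → ℝ) (t : ℝ) (ht : 0 ≤ t) (M M₀ : ℝ) (hM0 : 0 ≤ M)
    (hM : ∀ s ∈ Set.Icc (-t) t, ∀ n, |a s n| + |b s n| ≤ M)
    (hM₀ : ∀ n, |a₀ n| + |b₀ n| ≤ M₀)
    (toda_a : ∀ t n, HasDerivAt (fun s => a s n) (a t n * (b t (n + 1) - b t n)) t)
    (toda_b : ∀ t n, HasDerivAt (fun s => b s n)
      (2 * ((a t n) ^ 2 - (a t (n - 1)) ^ 2)) t)
    (hinit_a : ∀ n, a 0 n = a₀ n + ta₀ n)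
    (hinit_b : ∀ n, b 0 n = b₀ n + tb₀ n) :
    ∀ N : ℕ, ∀ n, |a t n - a₀ n| + |b t n - b₀ n| ≤
      (∑ k ∈ Finset.range N, ((5*M+1)*t)^k / k.factorial *
        chainIter (fun n => (|ta₀ n| + |tb₀ n|) + (5*M+1) * t *
          ((|a₀ (n+1) - a₀ n| + |b₀ (n+1) - b₀ n|) +
           (|a₀ n - a₀ (n-1)| + |b₀ n - b₀ (n-1)|))) k n)
        + (3*((5*M+1)*t))^N / N.factorial * (M + M₀) := by
  set K := 5*M+1 with hKdef
  have hK : 0 ≤ K := by positivity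
  set ε : ℝ → ℤ → ℝ := fun s n => |a s n - a₀ n| + |b s n - b₀ n| with hεdef
  set d : ℤ → ℝ := fun n => |a₀ (n+1) - a₀ n| + |b₀ (n+1) - b₀ n| with hddef
  set g : ℤ → ℝ := fun n => (|ta₀ n| + |tb₀ n|) + K * t * (d n + d (n-1)) with hgdef
  have hca : ∀ n, Continuous (fun s => a s n) :=
    fun n => continuous_iff_continuousAt.2 (fun s => (toda_a s n).continuousAt)
  have hcb : ∀ n, Continuous (fun s => b s n) :=
    fun n => continuous_iff_continuousAt.2 (fun s => (toda_b s n).continuousAt)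
  have hcε : ∀ n, Continuous (fun s => ε s n) := fun n =>
    (((hca n).sub continuous_const).abs.add ((hcb n).sub continuous_const).abs)
  have hεnn : ∀ s n, 0 ≤ ε s n := fun s n => by positivity
  have hdnn : ∀ n, 0 ≤ d n := fun n => by positivity
  have hmem : ∀ s ∈ Set.Icc (0:ℝ) t, s ∈ Set.Icc (-t) t := by
    intro s hs; exact ⟨le_trans (by linarith) hs.1, hs.2⟩
  have hεB : ∀ s ∈ Set.Icc (0:ℝ) t, ∀ n, ε s n ≤ M + M₀ := by
    intro s hs n
    have h1 := hM s (hmem s hs) n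
    have h2 := hM₀ n
    have h3 : |a s n - a₀ n| ≤ |a s n| + |a₀ n| := abs_sub _ _
    have h4 : |b s n - b₀ n| ≤ |b s n| + |b₀ n| := abs_sub _ _
    simp only [hεdef]; linarith
  have hint : ∀ s ∈ Set.Icc (0:ℝ) t, ∀ n, ε s n ≤ g n +
      K * ∫ σ in (0:ℝ)..s, (ε σ (n-1) + ε σ n + ε σ (n+1)) := by
    intro s hs n
    obtain ⟨hs0, hst⟩ := hs
    have hsub : Set.Icc (0:ℝ) s ⊆ Set.Icc (-t) t := fun σ hσ =>
      ⟨le_trans (by linarith) hσ.1, le_trans hσ.2 hst⟩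
    -- integrands
    set fa : ℝ → ℝ := fun σ => a σ n * (b σ (n+1) - b σ n) with hfadef
    set fb : ℝ → ℝ := fun σ => 2 * ((a σ n)^2 - (a σ (n-1))^2) with hfbdef
    have hcfa : Continuous fa := (hca n).mul ((hcb (n+1)).sub (hcb n))
    have hcfb : Continuous fb := continuous_const.mul
      (((hca n).pow 2).sub ((hca (n-1)).pow 2))
    have hFTCa : ∫ σ in (0:ℝ)..s, fa σ = a s n - a 0 n :=
      intervalIntegral.integral_eq_sub_of_hasDerivAt
        (fun σ _ => toda_a σ n) (hcfa.intervalIntegrable 0 s)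
    have hFTCb : ∫ σ in (0:ℝ)..s, fb σ = b s n - b 0 n :=
      intervalIntegral.integral_eq_sub_of_hasDerivAt
        (fun σ _ => toda_b σ n) (hcfb.intervalIntegrable 0 s)
    have hta : |a s n - a₀ n| ≤ |ta₀ n| + |∫ σ in (0:ℝ)..s, fa σ| := by
      rw [hFTCa]
      have : a s n - a₀ n = ta₀ n + (a s n - a 0 n) := by rw [hinit_a n]; ring
      rw [this]; exact abs_add_le _ _
    have htb : |b s n - b₀ n| ≤ |tb₀ n| + |∫ σ in (0:ℝ)..s, fb σ| := by
      rw [hFTCb]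
      have : b s n - b₀ n = tb₀ n + (b s n - b 0 n) := by rw [hinit_b n]; ring
      rw [this]; exact abs_add_le _ _
    have habsa : |∫ σ in (0:ℝ)..s, fa σ| ≤ ∫ σ in (0:ℝ)..s, |fa σ| :=
      intervalIntegral.abs_integral_le_integral_abs hs0
    have habsb : |∫ σ in (0:ℝ)..s, fb σ| ≤ ∫ σ in (0:ℝ)..s, |fb σ| :=
      intervalIntegral.abs_integral_le_integral_abs hs0
    -- pointwise bound on |fa|+|fb|
    have hptw : ∀ σ ∈ Set.Icc (0:ℝ) s, |fa σ| + |fb σ| ≤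
        K * (ε σ (n-1) + ε σ n + ε σ (n+1)) + K * (d n + d (n-1)) := by
      intro σ hσ
      have hMa : ∀ m, |a σ m| ≤ M := fun m => by
        have := hM σ (hsub hσ) m; have := abs_nonneg (b σ m); linarith
      have hMb : ∀ m, |b σ m| ≤ M := fun m => by
        have := hM σ (hsub hσ) m; have := abs_nonneg (a σ m); linarith
      have hba : |b σ (n+1) - b σ n| ≤ ε σ (n+1) + ε σ n + d n := by
        have e : b σ (n+1) - b σ n =
          (b σ (n+1) - b₀ (n+1)) - (b σ n - b₀ n) + (b₀ (n+1) - b₀ n) := by ring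
        rw [e]
        refine (abs_add_le _ _).trans ?_
        have h1 : |(b σ (n+1) - b₀ (n+1)) - (b σ n - b₀ n)| ≤
            |b σ (n+1) - b₀ (n+1)| + |b σ n - b₀ n| := abs_sub _ _
        have h2 : |b σ (n+1) - b₀ (n+1)| ≤ ε σ (n+1) :=
          le_add_of_nonneg_left (abs_nonneg _)
        have h3 : |b σ n - b₀ n| ≤ ε σ n := le_add_of_nonneg_left (abs_nonneg _)
        have h4 : |b₀ (n+1) - b₀ n| ≤ d n := le_add_of_nonneg_left (abs_nonneg _)
        linarith
      have haa : |a σ n - a σ (n-1)| ≤ ε σ n + ε σ (n-1) + d (n-1) := by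
        have e : a σ n - a σ (n-1) =
          (a σ n - a₀ n) - (a σ (n-1) - a₀ (n-1)) + (a₀ n - a₀ (n-1)) := by ring
        rw [e]
        refine (abs_add_le _ _).trans ?_
        have h1 : |(a σ n - a₀ n) - (a σ (n-1) - a₀ (n-1))| ≤
            |a σ n - a₀ n| + |a σ (n-1) - a₀ (n-1)| := abs_sub _ _
        have h2 : |a σ n - a₀ n| ≤ ε σ n := le_add_of_nonneg_right (abs_nonneg _)
        have h3 : |a σ (n-1) - a₀ (n-1)| ≤ ε σ (n-1) := le_add_of_nonneg_right (abs_nonneg _)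
        have h4 : |a₀ n - a₀ (n-1)| ≤ d (n-1) := by
          have : d (n-1) = |a₀ (n-1+1) - a₀ (n-1)| + |b₀ (n-1+1) - b₀ (n-1)| := rfl
          rw [this]
          simp only [sub_add_cancel]
          exact le_add_of_nonneg_right (abs_nonneg _)
        linarith
      have hfa_bd : |fa σ| ≤ M * (ε σ (n+1) + ε σ n + d n) := by
        rw [hfadef]
        simp only [abs_mul]
        exact mul_le_mul (hMa n) hba (abs_nonneg _) hM0
      have hfb_bd : |fb σ| ≤ 4 * M * (ε σ n + ε σ (n-1) + d (n-1)) := by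
        have e : fb σ = 2 * ((a σ n + a σ (n-1)) * (a σ n - a σ (n-1))) := by
          rw [hfbdef]; ring
        rw [e, abs_mul, abs_mul]
        have h1 : |a σ n + a σ (n-1)| ≤ 2 * M := by
          have := abs_add_le (a σ n) (a σ (n-1))
          have := hMa n; have := hMa (n-1); linarith
        have h2 : |(2:ℝ)| = 2 := by norm_num
        rw [h2]
        calc 2 * (|a σ n + a σ (n-1)| * |a σ n - a σ (n-1)|)
            ≤ 2 * ((2*M) * (ε σ n + ε σ (n-1) + d (n-1))) := by
              refine mul_le_mul_of_nonneg_left ?_ (by norm_num)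
              refine mul_le_mul h1 haa (abs_nonneg _) (by positivity)
          _ = 4 * M * (ε σ n + ε σ (n-1) + d (n-1)) := by ring
      have hnn1 := hεnn σ (n-1); have hnn2 := hεnn σ n; have hnn3 := hεnn σ (n+1)
      have hnn4 := hdnn n; have hnn5 := hdnn (n-1)
      nlinarith [mul_nonneg hM0 hnn1, mul_nonneg hM0 hnn2, mul_nonneg hM0 hnn3,
        mul_nonneg hM0 hnn4, mul_nonneg hM0 hnn5]
    -- integrate
    have hIntabs : IntervalIntegrable (fun σ => |fa σ| + |fb σ|) MeasureTheory.volume 0 s :=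
      (hcfa.abs.add hcfb.abs).intervalIntegrable 0 s
    have hIntRHS : IntervalIntegrable
        (fun σ => K * (ε σ (n-1) + ε σ n + ε σ (n+1)) + K * (d n + d (n-1)))
        MeasureTheory.volume 0 s :=
      ((continuous_const.mul (((hcε (n-1)).add (hcε n)).add (hcε (n+1)))).add
        continuous_const).intervalIntegrable 0 s
    have hintmono : (∫ σ in (0:ℝ)..s, (|fa σ| + |fb σ|)) ≤
        ∫ σ in (0:ℝ)..s, (K * (ε σ (n-1) + ε σ n + ε σ (n+1)) + K * (d n + d (n-1))) :=
      intervalIntegral.integral_mono_on hs0 hIntabs hIntRHS hptw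
    have hsplit1 : (∫ σ in (0:ℝ)..s, (|fa σ| + |fb σ|)) =
        (∫ σ in (0:ℝ)..s, |fa σ|) + ∫ σ in (0:ℝ)..s, |fb σ| :=
      intervalIntegral.integral_add (hcfa.abs.intervalIntegrable 0 s)
        (hcfb.abs.intervalIntegrable 0 s)
    have hsplit2 : (∫ σ in (0:ℝ)..s,
          (K * (ε σ (n-1) + ε σ n + ε σ (n+1)) + K * (d n + d (n-1)))) =
        K * (∫ σ in (0:ℝ)..s, (ε σ (n-1) + ε σ n + ε σ (n+1)))
          + s * (K * (d n + d (n-1))) := by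
      rw [intervalIntegral.integral_add
        (f := fun σ => K * (ε σ (n-1) + ε σ n + ε σ (n+1)))
        (g := fun _ => K * (d n + d (n-1)))
        ((continuous_const.mul (((hcε (n-1)).add (hcε n)).add (hcε (n+1)))).intervalIntegrable 0 s)
        (intervalIntegrable_const)]
      rw [intervalIntegral.integral_const_mul, intervalIntegral.integral_const]
      simp
    have hconst : s * (K * (d n + d (n-1))) ≤ K * t * (d n + d (n-1)) := by
      have h1 : 0 ≤ d n + d (n-1) := by have := hdnn n; have := hdnn (n-1); linarith
      have h2 : s * K ≤ K * t := by
        rw [mul_comm]; exact mul_le_mul_of_nonneg_left hst hK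
      calc s * (K * (d n + d (n-1))) = (s * K) * (d n + d (n-1)) := by ring
        _ ≤ (K * t) * (d n + d (n-1)) := mul_le_mul_of_nonneg_right h2 h1
    have : ε s n ≤ (|ta₀ n| + |tb₀ n|) +
        ((∫ σ in (0:ℝ)..s, |fa σ|) + ∫ σ in (0:ℝ)..s, |fb σ|) := by
      simp only [hεdef]; linarith
    rw [← hsplit1] at this
    simp only [hgdef]
    linarith [hintmono.trans_eq hsplit2, hconst, this]
  intro N n
  have hg' : (fun n => (|ta₀ n| + |tb₀ n|) + K * t *
      ((|a₀ (n+1) - a₀ n| + |b₀ (n+1) - b₀ n|) +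
       (|a₀ n - a₀ (n-1)| + |b₀ n - b₀ (n-1)|))) = g := by
    funext m
    simp only [hgdef, hddef, sub_add_cancel]
  rw [hg']
  exact gronwall_chain ε g (M+M₀) K t hK
    (fun n => (hcε n).continuousOn) hεB hint N t ⟨ht, le_refl t⟩ n


lemma ennreal_add_rpow_le (x y : ℝ≥0∞) {q : ℝ} (hq : 0 ≤ q) :
    (x + y) ^ q ≤ (2:ℝ≥0∞)^q * (x^q + y^q) := by
  have h1 : x + y ≤ 2 * max x y := by
    rw [two_mul]; exact add_le_add (le_max_left x y) (le_max_right x y)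
  calc (x+y)^q ≤ (2 * max x y)^q := ENNReal.rpow_le_rpow h1 hq
    _ = 2^q * (max x y)^q := ENNReal.mul_rpow_of_nonneg _ _ hq
    _ ≤ 2^q * (x^q + y^q) := by
        refine mul_le_mul_right ?_ _
        rcases max_cases x y with ⟨h, _⟩ | ⟨h, _⟩ <;> rw [h]
        · exact le_self_add
        · exact le_add_self

lemma exp_series_ne_top {c r : ℝ} (hc : 0 ≤ c) (hr : 0 ≤ r) :
    (∑' k : ℕ, ENNReal.ofReal (c^k / k.factorial) * (ENNReal.ofReal r)^k) ≠ ⊤ := by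
  have he : ∀ k:ℕ, ENNReal.ofReal (c^k / k.factorial) * (ENNReal.ofReal r)^k
      = ENNReal.ofReal ((c*r)^k / k.factorial) := by
    intro k
    rw [← ENNReal.ofReal_pow hr, ← ENNReal.ofReal_mul (by positivity)]
    congr 1
    rw [mul_pow]; ring
  rw [tsum_congr he,
    ← ENNReal.ofReal_tsum_of_nonneg (fun k => by positivity)
      (Real.summable_pow_div_factorial _)]
  exact ENNReal.ofReal_ne_top

lemma tsum_Lp_tsum_le (W : ℤ → ℝ≥0∞) (hW : ∀ n, W n ≠ ∞)
    (Y : ℕ → ℤ → ℝ≥0∞) {q : ℝ} (hq : 1 ≤ q) :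
    (∑' n, W n * (∑' k, Y k n) ^ q) ^ (1/q) ≤
      ∑' k, (∑' n, W n * (Y k n) ^ q) ^ (1/q) := by
  have hq0 : (0:ℝ) < q := lt_of_lt_of_le one_pos hq
  have hqne : q ≠ 0 := ne_of_gt hq0
  have hWpow : ∀ (n : ℤ) (x : ℝ≥0∞), ((W n)^(1/q) * x)^q = W n * x^q := by
    intro n x
    rw [ENNReal.mul_rpow_of_nonneg _ _ hq0.le, ← ENNReal.rpow_mul,
      one_div, inv_mul_cancel₀ hqne, ENNReal.rpow_one]
  have hmono : ∀ n, Monotone (fun N => ∑ k ∈ Finset.range N, Y k n) := fun n =>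
    fun i j hij => Finset.sum_le_sum_of_subset (Finset.range_subset_range.mpr hij)
  have stepA : ∀ N : ℕ,
      (∑' n, W n * (∑ k ∈ Finset.range N, Y k n) ^ q) ^ (1/q) ≤
      ∑ k ∈ Finset.range N, (∑' n, W n * (Y k n) ^ q) ^ (1/q) := by
    intro N
    induction N with
    | zero =>
      have h0 : (∑' n : ℤ, W n * (∑ k ∈ Finset.range 0, Y k n) ^ q) = 0 := by
        have : ∀ n : ℤ, W n * (∑ k ∈ Finset.range 0, Y k n) ^ q = 0 := by
          intro n
          simp only [Finset.range_zero, Finset.sum_empty]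
          rw [ENNReal.zero_rpow_of_pos hq0, mul_zero]
        rw [tsum_congr this]; simp
      rw [h0, ENNReal.zero_rpow_of_pos (by positivity : (0:ℝ) < 1/q)]
      simp
    | succ N IH =>
      have hconv : ∀ (Z : ℤ → ℝ≥0∞), (∑' n, W n * (Z n)^q)
          = ∫⁻ n, ((W n)^(1/q) * Z n)^q ∂(MeasureTheory.Measure.count) := by
        intro Z
        rw [MeasureTheory.lintegral_count]
        exact tsum_congr fun n => (hWpow n (Z n)).symm
      have key : (∑' n, W n * (∑ k ∈ Finset.range (N+1), Y k n) ^ q) ^ (1/q) ≤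
          (∑' n, W n * (∑ k ∈ Finset.range N, Y k n) ^ q) ^ (1/q)
            + (∑' n, W n * (Y N n) ^ q) ^ (1/q) := by
        rw [hconv, hconv, hconv]
        have hmink := ENNReal.lintegral_Lp_add_le
          (f := fun n => (W n)^(1/q) * (∑ k ∈ Finset.range N, Y k n))
          (g := fun n => (W n)^(1/q) * Y N n)
          (μ := MeasureTheory.Measure.count)
          (measurable_of_countable _).aemeasurable
          (measurable_of_countable _).aemeasurable hq
        refine le_trans (le_of_eq ?_) hmink
        congr 1
        refine MeasureTheory.lintegral_congr fun n => ?_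
        rw [Finset.sum_range_succ, mul_add]
        rfl
      refine key.trans ?_
      rw [Finset.sum_range_succ]
      exact add_le_add_left IH _
  have hptlim : ∀ n, W n * (∑' k, Y k n) ^ q
      = ⨆ N, W n * (∑ k ∈ Finset.range N, Y k n) ^ q := by
    intro n
    have h1 : Filter.Tendsto (fun N => ∑ k ∈ Finset.range N, Y k n) Filter.atTop
        (nhds (∑' k, Y k n)) := ENNReal.tendsto_nat_tsum _
    have h2 : Filter.Tendsto (fun N => W n * (∑ k ∈ Finset.range N, Y k n) ^ q)
        Filter.atTop (nhds (W n * (∑' k, Y k n) ^ q)) := by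
      have h3 := ((ENNReal.continuous_rpow_const (y := q)).continuousAt).tendsto.comp h1
      exact ENNReal.Tendsto.const_mul h3 (Or.inr (hW n))
    refine (iSup_eq_of_tendsto ?_ h2).symm
    intro i j hij
    exact mul_le_mul_right (ENNReal.rpow_le_rpow (hmono n hij) hq0.le) _
  have hswap : (∑' n, W n * (∑' k, Y k n) ^ q)
      = ⨆ N, ∑' n, W n * (∑ k ∈ Finset.range N, Y k n) ^ q := by
    calc (∑' n, W n * (∑' k, Y k n) ^ q)
        = ∑' n, ⨆ N, W n * (∑ k ∈ Finset.range N, Y k n) ^ q := tsum_congr hptlim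
      _ = ∫⁻ n, (⨆ N, W n * (∑ k ∈ Finset.range N, Y k n)^q)
            ∂MeasureTheory.Measure.count := (MeasureTheory.lintegral_count _).symm
      _ = ⨆ N, ∫⁻ n, W n * (∑ k ∈ Finset.range N, Y k n)^q
            ∂MeasureTheory.Measure.count :=
          MeasureTheory.lintegral_iSup (fun N => measurable_of_countable _)
            (fun i j hij n => mul_le_mul_right
              (ENNReal.rpow_le_rpow (hmono n hij) hq0.le) _)
      _ = ⨆ N, ∑' n, W n * (∑ k ∈ Finset.range N, Y k n)^q :=
          iSup_congr fun N => MeasureTheory.lintegral_count _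
  have hqq : ∀ x : ℝ≥0∞, (x^(1/q))^q = x := by
    intro x
    rw [← ENNReal.rpow_mul, one_div, inv_mul_cancel₀ hqne, ENNReal.rpow_one]
  have hqq' : ∀ x : ℝ≥0∞, (x^q)^(1/q) = x := by
    intro x
    rw [← ENNReal.rpow_mul, one_div, mul_inv_cancel₀ hqne, ENNReal.rpow_one]
  have hfinal : (∑' n, W n * (∑' k, Y k n) ^ q) ≤
      (∑' k, (∑' n, W n * (Y k n)^q)^(1/q))^q := by
    rw [hswap]
    refine iSup_le fun N => ?_
    have h1 := stepA N
    calc (∑' n, W n * (∑ k ∈ Finset.range N, Y k n) ^ q)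
        = ((∑' n, W n * (∑ k ∈ Finset.range N, Y k n) ^ q)^(1/q))^q := (hqq _).symm
      _ ≤ (∑ k ∈ Finset.range N, (∑' n, W n * (Y k n)^q)^(1/q))^q :=
          ENNReal.rpow_le_rpow h1 hq0.le
      _ ≤ (∑' k, (∑' n, W n * (Y k n)^q)^(1/q))^q :=
          ENNReal.rpow_le_rpow (ENNReal.sum_le_tsum _) hq0.le
  calc (∑' n, W n * (∑' k, Y k n) ^ q) ^ (1/q)
      ≤ ((∑' k, (∑' n, W n * (Y k n)^q)^(1/q))^q)^(1/q) :=
        ENNReal.rpow_le_rpow hfinal (by positivity)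
    _ = _ := hqq' _


lemma ennreal_add_rpow_le' (x y : ℝ≥0∞) {q : ℝ} (hq : 0 ≤ q) :
    (x + y) ^ q ≤ (2:ℝ≥0∞)^q * (x^q + y^q) := by
  have h1 : x + y ≤ 2 * max x y := by
    rw [two_mul]; exact add_le_add (le_max_left x y) (le_max_right x y)
  calc (x+y)^q ≤ (2 * max x y)^q := ENNReal.rpow_le_rpow h1 hq
    _ = 2^q * (max x y)^q := ENNReal.mul_rpow_of_nonneg _ _ hq
    _ ≤ 2^q * (x^q + y^q) := by
        refine mul_le_mul_right ?_ _
        rcases max_cases x y with ⟨h, _⟩ | ⟨h, _⟩ <;> rw [h]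
        · exact le_self_add
        · exact le_add_self

lemma ennreal_add3_rpow_le (x y z : ℝ≥0∞) {q : ℝ} (hq : 0 ≤ q) :
    (x + y + z)^q ≤ (4:ℝ≥0∞)^q * (x^q + y^q + z^q) := by
  have h24 : (2:ℝ≥0∞)^q ≤ 4^q := ENNReal.rpow_le_rpow (by norm_num) hq
  have h44 : (2:ℝ≥0∞)^q * 2^q = 4^q := by
    rw [← ENNReal.mul_rpow_of_nonneg _ _ hq]; norm_num
  calc (x+y+z)^q ≤ 2^q * ((x+y)^q + z^q) := ennreal_add_rpow_le' _ _ hq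
    _ ≤ 2^q * (2^q * (x^q + y^q) + z^q) :=
        mul_le_mul_right (add_le_add_left (ennreal_add_rpow_le' _ _ hq) _) _
    _ = (2^q*2^q)*(x^q+y^q) + 2^q*z^q := by ring
    _ ≤ 4^q*(x^q+y^q) + 4^q*z^q := add_le_add (by rw [h44]) (mul_le_mul_left h24 _)
    _ = 4^q*(x^q+y^q+z^q) := by ring

lemma tsum_shift_up (w : ℤ → ℝ) (C : ℝ) (hC0 : 0 ≤ C)
    (hshift : ∀ n : ℤ, w (n - 1) ≤ C * w n) (X : ℤ → ℝ≥0∞) :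
    (∑' n, ENNReal.ofReal (w n) * X (n+1)) ≤
      ENNReal.ofReal C * ∑' n, ENNReal.ofReal (w n) * X n := by
  have e : (∑' n : ℤ, ENNReal.ofReal (w n) * X (n+1))
      = ∑' n : ℤ, ENNReal.ofReal (w (n-1)) * X n := by
    have h := (Equiv.addRight (1:ℤ)).tsum_eq
      (f := fun n : ℤ => ENNReal.ofReal (w (n-1)) * X n)
    rw [← h]
    refine tsum_congr fun n => ?_
    simp
  rw [e, ← ENNReal.tsum_mul_left]
  refine ENNReal.tsum_le_tsum fun n => ?_
  rw [← mul_assoc, ← ENNReal.ofReal_mul hC0]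
  exact mul_le_mul_left (ENNReal.ofReal_le_ofReal (hshift n)) _

lemma tsum_shift_down (w : ℤ → ℝ) (C : ℝ) (hC0 : 0 ≤ C)
    (hshift : ∀ n : ℤ, w (n + 1) ≤ C * w n) (X : ℤ → ℝ≥0∞) :
    (∑' n, ENNReal.ofReal (w n) * X (n-1)) ≤
      ENNReal.ofReal C * ∑' n, ENNReal.ofReal (w n) * X n := by
  have e : (∑' n : ℤ, ENNReal.ofReal (w n) * X (n-1))
      = ∑' n : ℤ, ENNReal.ofReal (w (n+1)) * X n := by
    have h := (Equiv.subRight (1:ℤ)).tsum_eq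
      (f := fun n : ℤ => ENNReal.ofReal (w (n+1)) * X n)
    rw [← h]
    refine tsum_congr fun n => ?_
    simp
  rw [e, ← ENNReal.tsum_mul_left]
  refine ENNReal.tsum_le_tsum fun n => ?_
  rw [← mul_assoc, ← ENNReal.ofReal_mul hC0]
  exact mul_le_mul_left (ENNReal.ofReal_le_ofReal (hshift n)) _

lemma ofReal_le_tsum_of_bounds (x B : ℝ) (c h : ℕ → ℝ) (r : ℕ → ℝ)
    (hc : ∀ k, 0 ≤ c k) (hh : ∀ k, 0 ≤ h k)
    (hr : Filter.Tendsto r Filter.atTop (nhds 0))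
    (hbound : ∀ N, x ≤ (∑ k ∈ Finset.range N, c k * h k) + r N * B) :
    ENNReal.ofReal x ≤ ∑' k, ENNReal.ofReal (c k) * ENNReal.ofReal (h k) := by
  rcases eq_or_ne (∑' k, ENNReal.ofReal (c k) * ENNReal.ofReal (h k)) ⊤ with htop | hne
  · rw [htop]; exact le_top
  refine ENNReal.le_of_forall_pos_le_add fun δ hδ _ => ?_
  have h2 : Filter.Tendsto (fun N => r N * B) Filter.atTop (nhds 0) := by
    simpa using hr.mul_const B
  obtain ⟨N, hN⟩ := (h2.eventually_lt_const (by exact_mod_cast hδ : (0:ℝ) < δ)).exists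
  calc ENNReal.ofReal x
      ≤ ENNReal.ofReal ((∑ k ∈ Finset.range N, c k * h k) + r N * B) :=
        ENNReal.ofReal_le_ofReal (hbound N)
    _ ≤ ENNReal.ofReal (∑ k ∈ Finset.range N, c k * h k) + ENNReal.ofReal (r N * B) :=
        ENNReal.ofReal_add_le
    _ ≤ (∑' k, ENNReal.ofReal (c k) * ENNReal.ofReal (h k)) + ↑δ := by
        refine add_le_add ?_ ?_
        · calc ENNReal.ofReal (∑ k ∈ Finset.range N, c k * h k)
              = ∑ k ∈ Finset.range N, ENNReal.ofReal (c k * h k) :=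
                ENNReal.ofReal_sum_of_nonneg fun k _ => mul_nonneg (hc k) (hh k)
            _ = ∑ k ∈ Finset.range N, ENNReal.ofReal (c k) * ENNReal.ofReal (h k) :=
                Finset.sum_congr rfl fun k _ => ENNReal.ofReal_mul (hc k)
            _ ≤ ∑' k, ENNReal.ofReal (c k) * ENNReal.ofReal (h k) :=
                ENNReal.sum_le_tsum _
        · calc ENNReal.ofReal (r N * B) ≤ ENNReal.ofReal ↑δ :=
                ENNReal.ofReal_le_ofReal hN.le
            _ = ↑δ := ENNReal.ofReal_coe_nnreal



lemma toda_core
    (w : ℤ → ℝ) (hw1 : ∀ n, 1 ≤ w n)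
    (hw2 : ∃ C : ℝ, ∀ n, w (n + 1) / w n + w n / w (n + 1) ≤ C)
    (p : ℝ≥0∞) (hp : 1 ≤ p)
    (a₀ b₀ ta₀ tb₀ : ℤ → ℝ)
    (ha₀bdd : ∃ C, ∀ n, |a₀ n| + |b₀ n| ≤ C)
    (h₀ : wnorm2 w p (fun n => a₀ (n + 1) - a₀ n) (fun n => b₀ (n + 1) - b₀ n) ≠ ∞)
    (ht₀ : wnorm2 w p ta₀ tb₀ ≠ ∞)
    (a b : ℝ → ℤ → ℝ)
    (hbdd : ∀ T : ℝ, ∃ C, ∀ t ∈ Set.Icc (-T) T, ∀ n, |a t n| + |b t n| ≤ C)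
    (toda_a : ∀ t n, HasDerivAt (fun s => a s n) (a t n * (b t (n + 1) - b t n)) t)
    (toda_b : ∀ t n, HasDerivAt (fun s => b s n)
      (2 * ((a t n) ^ 2 - (a t (n - 1)) ^ 2)) t)
    (hinit_a : ∀ n, a 0 n = a₀ n + ta₀ n)
    (hinit_b : ∀ n, b 0 n = b₀ n + tb₀ n)
    (t : ℝ) (ht : 0 ≤ t) :
    wnorm2 w p (fun n => a t n - a₀ n) (fun n => b t n - b₀ n) ≠ ∞ := by
  -- bounds
  obtain ⟨C₁, hC₁⟩ := hbdd t
  obtain ⟨C₀', hC₀'⟩ := ha₀bdd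
  set M := max C₁ 0 with hMdef
  have hM0 : (0:ℝ) ≤ M := le_max_right _ _
  have hM : ∀ s ∈ Set.Icc (-t) t, ∀ n, |a s n| + |b s n| ≤ M :=
    fun s hs n => (hC₁ s hs n).trans (le_max_left _ _)
  set M₀ := max C₀' 0 with hM₀def
  have hM₀ : ∀ n, |a₀ n| + |b₀ n| ≤ M₀ := fun n => (hC₀' n).trans (le_max_left _ _)
  have hptws := toda_pointwise_bound a₀ b₀ ta₀ tb₀ a b t ht M M₀ hM0 hM hM₀
    toda_a toda_b hinit_a hinit_b
  set K := 5*M+1 with hKdef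
  have hK : (0:ℝ) ≤ K := by positivity
  have hKt : (0:ℝ) ≤ K * t := mul_nonneg hK ht
  set g : ℤ → ℝ := fun n => (|ta₀ n| + |tb₀ n|) + K * t *
      ((|a₀ (n+1) - a₀ n| + |b₀ (n+1) - b₀ n|) +
       (|a₀ n - a₀ (n-1)| + |b₀ n - b₀ (n-1)|)) with hgdef
  have hgnn : ∀ n, 0 ≤ g n := by
    intro n
    refine add_nonneg (by positivity) (mul_nonneg hKt (by positivity))
  -- the pointwise series bound, in ℝ≥0∞
  have hE : ∀ n, ENNReal.ofReal (|a t n - a₀ n| + |b t n - b₀ n|) ≤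
      ∑' k, ENNReal.ofReal ((K*t)^k / k.factorial) * ENNReal.ofReal (chainIter g k n) := by
    intro n
    refine ofReal_le_tsum_of_bounds _ (M+M₀) _ _
      (fun N => (3*(K*t))^N / N.factorial)
      (fun k => div_nonneg (pow_nonneg hKt k) (Nat.cast_nonneg _))
      (fun k => chainIter_nonneg hgnn k n)
      (FloorSemiring.tendsto_pow_div_factorial_atTop (3*(K*t)))
      (fun N => ?_)
    have h := hptws N n
    convert h using 2
  -- weight facts
  obtain ⟨C, hC⟩ := hw2
  have hwpos : ∀ n, 0 < w n := fun n => lt_of_lt_of_le one_pos (hw1 n)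
  have hamgm : ∀ x y : ℝ, 0 < x → 0 < y → 2 ≤ x/y + y/x := by
    intro x y hx hy
    rw [div_add_div _ _ (ne_of_gt hy) (ne_of_gt hx), le_div_iff₀ (by positivity)]
    nlinarith [sq_nonneg (x - y)]
  have hCge1 : (1:ℝ) ≤ C := by
    have h := hC 0
    have h2 := hamgm (w (0+1)) (w 0) (hwpos _) (hwpos _)
    linarith
  have hC0 : (0:ℝ) ≤ C := by linarith
  have hCup : ∀ n, w (n+1) ≤ C * w n := by
    intro n
    have h := hC n
    have h1 : 0 < w n / w (n+1) := div_pos (hwpos _) (hwpos _)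
    have h2 : w (n+1) / w n ≤ C := by linarith
    calc w (n+1) = w (n+1) / w n * w n := (div_mul_cancel₀ _ (hwpos n).ne').symm
      _ ≤ C * w n := mul_le_mul_of_nonneg_right h2 (hwpos n).le
  have hCdown : ∀ n, w n ≤ C * w (n+1) := by
    intro n
    have h := hC n
    have h1 : 0 < w (n+1) / w n := div_pos (hwpos _) (hwpos _)
    have h2 : w n / w (n+1) ≤ C := by linarith
    calc w n = w n / w (n+1) * w (n+1) := (div_mul_cancel₀ _ (hwpos (n+1)).ne').symm
      _ ≤ C * w (n+1) := mul_le_mul_of_nonneg_right h2 (hwpos (n+1)).le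
  have hCdown' : ∀ n : ℤ, w (n-1) ≤ C * w n := by
    intro n
    have h := hCdown (n-1)
    simpa [sub_add_cancel] using h
  have hCup' : ∀ n : ℤ, w n ≤ C * w (n-1) := by
    intro n
    have h := hCup (n-1)
    simpa [sub_add_cancel] using h
  
  by_cases hpinf : p = ∞
  · subst hpinf
    unfold wnorm2 at h₀ ht₀ ⊢
    rw [if_pos rfl] at h₀ ht₀ ⊢
    have hwnn : ∀ n, 0 ≤ w n := fun n => (hwpos n).le
    set S₁ := ⨆ n, ENNReal.ofReal (w n * (|ta₀ n| + |tb₀ n|)) with hS₁def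
    set S₂ := ⨆ n : ℤ, ENNReal.ofReal (w n *
      (|a₀ (n + 1) - a₀ n| + |b₀ (n + 1) - b₀ n|)) with hS₂def
    have hS₁ne : S₁ ≠ ⊤ := ht₀
    have hW1 : ∀ n : ℤ, ENNReal.ofReal (w n * (|ta₀ n| + |tb₀ n|)) ≤ S₁ := by
      intro n
      have h := le_iSup (fun m : ℤ => ENNReal.ofReal (w m * (|ta₀ m| + |tb₀ m|))) n
      rw [← hS₁def] at h
      exact h
    have hS₂ne : S₂ ≠ ⊤ := h₀
    have hW2 : ∀ n : ℤ, ENNReal.ofReal (w n *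
        (|a₀ (n + 1) - a₀ n| + |b₀ (n + 1) - b₀ n|)) ≤ S₂ := by
      intro n
      have h := le_iSup (fun m : ℤ => ENNReal.ofReal (w m *
        (|a₀ (m + 1) - a₀ m| + |b₀ (m + 1) - b₀ m|))) n
      rw [← hS₂def] at h
      exact h
    have hW2' : ∀ n : ℤ, ENNReal.ofReal (w (n-1) *
        (|a₀ n - a₀ (n-1)| + |b₀ n - b₀ (n-1)|)) ≤ S₂ := by
      intro n
      have h := hW2 (n-1)
      simpa [sub_add_cancel] using h
    set G0 := S₁ + ENNReal.ofReal (K*t) * (S₂ + ENNReal.ofReal C * S₂) with hG0def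
    have hG0ne : G0 ≠ ⊤ := by
      rw [hG0def]
      refine ENNReal.add_ne_top.2 ⟨hS₁ne, ENNReal.mul_ne_top ENNReal.ofReal_ne_top
        (ENNReal.add_ne_top.2 ⟨hS₂ne, ENNReal.mul_ne_top ENNReal.ofReal_ne_top hS₂ne⟩)⟩
    have hG0' : ∀ n : ℤ, ENNReal.ofReal (w n) * ENNReal.ofReal (g n) ≤ G0 := by
      intro n
      have e1 : w n * g n = w n * (|ta₀ n| + |tb₀ n|) + K * t *
          (w n * (|a₀ (n+1) - a₀ n| + |b₀ (n+1) - b₀ n|) +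
           w n * (|a₀ n - a₀ (n-1)| + |b₀ n - b₀ (n-1)|)) := by rw [hgdef]; ring
      rw [← ENNReal.ofReal_mul (hwnn n), e1,
        ENNReal.ofReal_add (mul_nonneg (hwnn n) (by positivity))
          (mul_nonneg hKt (add_nonneg (mul_nonneg (hwnn n) (by positivity))
            (mul_nonneg (hwnn n) (by positivity)))),
        ENNReal.ofReal_mul hKt,
        ENNReal.ofReal_add (mul_nonneg (hwnn n) (by positivity))
          (mul_nonneg (hwnn n) (by positivity)), hG0def]
      refine add_le_add (hW1 n)
        (mul_le_mul_right (add_le_add (hW2 n) ?_) _)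
      calc ENNReal.ofReal (w n * (|a₀ n - a₀ (n-1)| + |b₀ n - b₀ (n-1)|))
          ≤ ENNReal.ofReal (C * (w (n-1) * (|a₀ n - a₀ (n-1)| + |b₀ n - b₀ (n-1)|))) := by
            refine ENNReal.ofReal_le_ofReal ?_
            rw [← mul_assoc]
            exact mul_le_mul_of_nonneg_right (hCup' n) (by positivity)
        _ = ENNReal.ofReal C * ENNReal.ofReal (w (n-1) *
              (|a₀ n - a₀ (n-1)| + |b₀ n - b₀ (n-1)|)) := ENNReal.ofReal_mul hC0
        _ ≤ ENNReal.ofReal C * S₂ := mul_le_mul_right (hW2' n) _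
    have hone : (1:ℝ≥0∞) ≤ ENNReal.ofReal C := ENNReal.one_le_ofReal.2 hCge1
    have hρ : ENNReal.ofReal (3*C) = 3 * ENNReal.ofReal C := by
      rw [ENNReal.ofReal_mul (by norm_num : (0:ℝ) ≤ 3)]
      norm_num
    have hchain : ∀ (k : ℕ) (n : ℤ),
        ENNReal.ofReal (w n) * ENNReal.ofReal (chainIter g k n) ≤
        (ENNReal.ofReal (3*C))^k * G0 := by
      intro k
      induction k with
      | zero => intro n; simpa [chainIter] using hG0' n
      | succ k ih =>
        intro n
        have hsplit : ENNReal.ofReal (chainIter g (k+1) n) =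
            ENNReal.ofReal (chainIter g k (n-1)) + ENNReal.ofReal (chainIter g k n)
              + ENNReal.ofReal (chainIter g k (n+1)) := by
          show ENNReal.ofReal (chainIter g k (n-1) + chainIter g k n + chainIter g k (n+1)) = _
          rw [ENNReal.ofReal_add (add_nonneg (chainIter_nonneg hgnn k _)
            (chainIter_nonneg hgnn k _)) (chainIter_nonneg hgnn k _),
            ENNReal.ofReal_add (chainIter_nonneg hgnn k _) (chainIter_nonneg hgnn k _)]
        rw [hsplit, mul_add, mul_add]
        have hL : ENNReal.ofReal (w n) * ENNReal.ofReal (chainIter g k (n-1)) ≤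
            ENNReal.ofReal C * ((ENNReal.ofReal (3*C))^k * G0) := by
          calc ENNReal.ofReal (w n) * ENNReal.ofReal (chainIter g k (n-1))
              ≤ (ENNReal.ofReal C * ENNReal.ofReal (w (n-1))) *
                  ENNReal.ofReal (chainIter g k (n-1)) := by
                refine mul_le_mul_left ?_ _
                rw [← ENNReal.ofReal_mul hC0]
                exact ENNReal.ofReal_le_ofReal (hCup' n)
            _ = ENNReal.ofReal C * (ENNReal.ofReal (w (n-1)) *
                  ENNReal.ofReal (chainIter g k (n-1))) := mul_assoc _ _ _
            _ ≤ ENNReal.ofReal C * ((ENNReal.ofReal (3*C))^k * G0) :=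
                mul_le_mul_right (ih (n-1)) _
        have hR : ENNReal.ofReal (w n) * ENNReal.ofReal (chainIter g k (n+1)) ≤
            ENNReal.ofReal C * ((ENNReal.ofReal (3*C))^k * G0) := by
          calc ENNReal.ofReal (w n) * ENNReal.ofReal (chainIter g k (n+1))
              ≤ (ENNReal.ofReal C * ENNReal.ofReal (w (n+1))) *
                  ENNReal.ofReal (chainIter g k (n+1)) := by
                refine mul_le_mul_left ?_ _
                rw [← ENNReal.ofReal_mul hC0]
                exact ENNReal.ofReal_le_ofReal (hCdown n)
            _ = ENNReal.ofReal C * (ENNReal.ofReal (w (n+1)) *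
                  ENNReal.ofReal (chainIter g k (n+1))) := mul_assoc _ _ _
            _ ≤ ENNReal.ofReal C * ((ENNReal.ofReal (3*C))^k * G0) :=
                mul_le_mul_right (ih (n+1)) _
        have hMid : ENNReal.ofReal (w n) * ENNReal.ofReal (chainIter g k n) ≤
            ENNReal.ofReal C * ((ENNReal.ofReal (3*C))^k * G0) :=
          le_trans (ih n) (le_mul_of_one_le_left zero_le hone)
        calc ENNReal.ofReal (w n) * ENNReal.ofReal (chainIter g k (n-1))
              + ENNReal.ofReal (w n) * ENNReal.ofReal (chainIter g k n)
              + ENNReal.ofReal (w n) * ENNReal.ofReal (chainIter g k (n+1))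
            ≤ ENNReal.ofReal C * ((ENNReal.ofReal (3*C))^k * G0)
              + ENNReal.ofReal C * ((ENNReal.ofReal (3*C))^k * G0)
              + ENNReal.ofReal C * ((ENNReal.ofReal (3*C))^k * G0) :=
              add_le_add (add_le_add hL hMid) hR
          _ = (3 * ENNReal.ofReal C) * ((ENNReal.ofReal (3*C))^k * G0) := by ring
          _ = (ENNReal.ofReal (3*C))^(k+1) * G0 := by
              rw [← hρ, pow_succ]; ring
    have hfinal : ∀ n : ℤ, ENNReal.ofReal (w n * (|a t n - a₀ n| + |b t n - b₀ n|)) ≤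
        (∑' k:ℕ, ENNReal.ofReal ((K*t)^k / k.factorial) * (ENNReal.ofReal (3*C))^k) * G0 := by
      intro n
      rw [ENNReal.ofReal_mul (hwnn n)]
      calc ENNReal.ofReal (w n) * ENNReal.ofReal (|a t n - a₀ n| + |b t n - b₀ n|)
          ≤ ENNReal.ofReal (w n) * ∑' k, ENNReal.ofReal ((K*t)^k / k.factorial) *
              ENNReal.ofReal (chainIter g k n) := mul_le_mul_right (hE n) _
        _ = ∑' k, ENNReal.ofReal (w n) * (ENNReal.ofReal ((K*t)^k / k.factorial) *
              ENNReal.ofReal (chainIter g k n)) := ENNReal.tsum_mul_left.symm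
        _ ≤ ∑' k, (ENNReal.ofReal ((K*t)^k / k.factorial) * (ENNReal.ofReal (3*C))^k) * G0 := by
            refine ENNReal.tsum_le_tsum fun k => ?_
            rw [mul_left_comm, mul_assoc]
            exact mul_le_mul_right (hchain k n) _
        _ = (∑' k:ℕ, ENNReal.ofReal ((K*t)^k / k.factorial) *
              (ENNReal.ofReal (3*C))^k) * G0 := ENNReal.tsum_mul_right
    have hΛne : (∑' k:ℕ, ENNReal.ofReal ((K*t)^k / k.factorial) *
        (ENNReal.ofReal (3*C))^k) * G0 ≠ ⊤ :=
      ENNReal.mul_ne_top (exp_series_ne_top hKt (by positivity)) hG0ne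
    exact ne_top_of_le_ne_top hΛne (iSup_le hfinal)
  · -- p < ∞
    have hq1 : (1:ℝ) ≤ p.toReal := by
      rw [← ENNReal.toReal_one]
      exact ENNReal.toReal_mono hpinf hp
    set q := p.toReal with hqdef
    have hq0 : (0:ℝ) < q := lt_of_lt_of_le one_pos hq1
    have hqinvpos : (0:ℝ) < 1/q := by positivity
    have hwnn : ∀ n, 0 ≤ w n := fun n => (hwpos n).le
    unfold wnorm2 at h₀ ht₀ ⊢
    rw [if_neg hpinf] at h₀ ht₀ ⊢
    simp only at h₀ ht₀ ⊢
    have hD₀ : (∑' n : ℤ, ENNReal.ofReal (w n *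
        (|a₀ (n+1) - a₀ n|^q + |b₀ (n+1) - b₀ n|^q))) ≠ ⊤ := by
      intro hcon
      rw [hcon] at h₀
      exact h₀ (ENNReal.top_rpow_of_pos hqinvpos)
    have hT₀ : (∑' n : ℤ, ENNReal.ofReal (w n * (|ta₀ n|^q + |tb₀ n|^q))) ≠ ⊤ := by
      intro hcon
      rw [hcon] at ht₀
      exact ht₀ (ENNReal.top_rpow_of_pos hqinvpos)
    suffices hS : (∑' n : ℤ, ENNReal.ofReal (w n *
        (|a t n - a₀ n|^q + |b t n - b₀ n|^q))) ≠ ⊤ by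
      intro hcon
      rw [ENNReal.rpow_eq_top_iff] at hcon
      rcases hcon with ⟨_, hneg⟩ | ⟨htop, _⟩
      · exact absurd hneg (not_lt.2 hqinvpos.le)
      · exact hS htop
    -- abbreviations as equations
    have hchain_nn : ∀ (k : ℕ) (n:ℤ), 0 ≤ chainIter g k n := fun k n => chainIter_nonneg hgnn k n
    have hofsplit : ∀ (k : ℕ) (n : ℤ), ENNReal.ofReal (chainIter g (k+1) n) =
        ENNReal.ofReal (chainIter g k (n-1)) + ENNReal.ofReal (chainIter g k n)
          + ENNReal.ofReal (chainIter g k (n+1)) := by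
      intro k n
      show ENNReal.ofReal (chainIter g k (n-1) + chainIter g k n + chainIter g k (n+1)) = _
      rw [ENNReal.ofReal_add (add_nonneg (hchain_nn k _) (hchain_nn k _)) (hchain_nn k _),
        ENNReal.ofReal_add (hchain_nn k _) (hchain_nn k _)]
    -- per-term bound
    have hterm : ∀ n : ℤ, ENNReal.ofReal (w n * (|a t n - a₀ n|^q + |b t n - b₀ n|^q)) ≤
        2 * (ENNReal.ofReal (w n) * (∑' k : ℕ, ENNReal.ofReal ((K*t)^k / k.factorial) *
          ENNReal.ofReal (chainIter g k n))^q) := by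
      intro n
      rw [ENNReal.ofReal_mul (hwnn n),
        ENNReal.ofReal_add (by positivity) (by positivity)]
      have h1 : ENNReal.ofReal (|a t n - a₀ n|^q) ≤
          (∑' k : ℕ, ENNReal.ofReal ((K*t)^k / k.factorial) *
            ENNReal.ofReal (chainIter g k n))^q := by
        rw [← ENNReal.ofReal_rpow_of_nonneg (abs_nonneg _) hq0.le]
        refine ENNReal.rpow_le_rpow (le_trans (ENNReal.ofReal_le_ofReal
          (le_add_of_nonneg_right (abs_nonneg _))) (hE n)) hq0.le
      have h2 : ENNReal.ofReal (|b t n - b₀ n|^q) ≤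
          (∑' k : ℕ, ENNReal.ofReal ((K*t)^k / k.factorial) *
            ENNReal.ofReal (chainIter g k n))^q := by
        rw [← ENNReal.ofReal_rpow_of_nonneg (abs_nonneg _) hq0.le]
        refine ENNReal.rpow_le_rpow (le_trans (ENNReal.ofReal_le_ofReal
          (le_add_of_nonneg_left (abs_nonneg _))) (hE n)) hq0.le
      calc ENNReal.ofReal (w n) *
            (ENNReal.ofReal (|a t n - a₀ n|^q) + ENNReal.ofReal (|b t n - b₀ n|^q))
          ≤ ENNReal.ofReal (w n) *
            ((∑' k : ℕ, ENNReal.ofReal ((K*t)^k / k.factorial) *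
              ENNReal.ofReal (chainIter g k n))^q +
             (∑' k : ℕ, ENNReal.ofReal ((K*t)^k / k.factorial) *
              ENNReal.ofReal (chainIter g k n))^q) :=
            mul_le_mul_right (add_le_add h1 h2) _
        _ = 2 * (ENNReal.ofReal (w n) * (∑' k : ℕ, ENNReal.ofReal ((K*t)^k / k.factorial) *
              ENNReal.ofReal (chainIter g k n))^q) := by ring
    -- Minkowski
    have hmink := tsum_Lp_tsum_le (fun n => ENNReal.ofReal (w n))
      (fun n => ENNReal.ofReal_ne_top)
      (fun k n => ENNReal.ofReal ((K*t)^k / k.factorial) * ENNReal.ofReal (chainIter g k n)) hq1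
    -- per-k norm
    have hYq : ∀ k : ℕ, (∑' n : ℤ, ENNReal.ofReal (w n) *
          (ENNReal.ofReal ((K*t)^k / k.factorial) * ENNReal.ofReal (chainIter g k n))^q)^(1/q)
        = ENNReal.ofReal ((K*t)^k / k.factorial) *
          (∑' n : ℤ, ENNReal.ofReal (w n) * (ENNReal.ofReal (chainIter g k n))^q)^(1/q) := by
      intro k
      have e1 : ∀ n : ℤ, ENNReal.ofReal (w n) *
          (ENNReal.ofReal ((K*t)^k / k.factorial) * ENNReal.ofReal (chainIter g k n))^q
          = (ENNReal.ofReal ((K*t)^k / k.factorial))^q *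
            (ENNReal.ofReal (w n) * (ENNReal.ofReal (chainIter g k n))^q) := by
        intro n
        rw [ENNReal.mul_rpow_of_nonneg _ _ hq0.le]
        ring
      rw [tsum_congr e1, ENNReal.tsum_mul_left,
        ENNReal.mul_rpow_of_nonneg _ _ hqinvpos.le, ← ENNReal.rpow_mul,
        mul_one_div, div_self hq0.ne', ENNReal.rpow_one]
    -- recursion for the H-sums
    have hHrec : ∀ k : ℕ,
        (∑' n : ℤ, ENNReal.ofReal (w n) * (ENNReal.ofReal (chainIter g (k+1) n))^q) ≤
        ((4:ℝ≥0∞)^q * (2 * ENNReal.ofReal C + 1)) *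
          ∑' n : ℤ, ENNReal.ofReal (w n) * (ENNReal.ofReal (chainIter g k n))^q := by
      intro k
      calc (∑' n : ℤ, ENNReal.ofReal (w n) * (ENNReal.ofReal (chainIter g (k+1) n))^q)
          = ∑' n : ℤ, ENNReal.ofReal (w n) * (ENNReal.ofReal (chainIter g k (n-1))
              + ENNReal.ofReal (chainIter g k n) + ENNReal.ofReal (chainIter g k (n+1)))^q :=
            tsum_congr fun n => by rw [hofsplit k n]
        _ ≤ ∑' n : ℤ, ENNReal.ofReal (w n) * ((4:ℝ≥0∞)^q *
              ((ENNReal.ofReal (chainIter g k (n-1)))^q + (ENNReal.ofReal (chainIter g k n))^q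
                + (ENNReal.ofReal (chainIter g k (n+1)))^q)) :=
            ENNReal.tsum_le_tsum fun n =>
              mul_le_mul_right (ennreal_add3_rpow_le _ _ _ hq0.le) _
        _ = (4:ℝ≥0∞)^q * ((∑' n : ℤ, ENNReal.ofReal (w n) * (ENNReal.ofReal (chainIter g k (n-1)))^q)
              + (∑' n : ℤ, ENNReal.ofReal (w n) * (ENNReal.ofReal (chainIter g k n))^q)
              + (∑' n : ℤ, ENNReal.ofReal (w n) * (ENNReal.ofReal (chainIter g k (n+1)))^q)) := by
            rw [tsum_congr (fun n : ℤ => show ENNReal.ofReal (w n) * ((4:ℝ≥0∞)^q *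
              ((ENNReal.ofReal (chainIter g k (n-1)))^q + (ENNReal.ofReal (chainIter g k n))^q
                + (ENNReal.ofReal (chainIter g k (n+1)))^q))
              = (4:ℝ≥0∞)^q * (ENNReal.ofReal (w n) * (ENNReal.ofReal (chainIter g k (n-1)))^q)
                + ((4:ℝ≥0∞)^q * (ENNReal.ofReal (w n) * (ENNReal.ofReal (chainIter g k n))^q)
                + (4:ℝ≥0∞)^q * (ENNReal.ofReal (w n) * (ENNReal.ofReal (chainIter g k (n+1)))^q))
              from by ring)]
            rw [ENNReal.tsum_add, ENNReal.tsum_add, ENNReal.tsum_mul_left,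
              ENNReal.tsum_mul_left, ENNReal.tsum_mul_left]
            ring
        _ ≤ (4:ℝ≥0∞)^q * ((ENNReal.ofReal C *
              ∑' n : ℤ, ENNReal.ofReal (w n) * (ENNReal.ofReal (chainIter g k n))^q)
              + (∑' n : ℤ, ENNReal.ofReal (w n) * (ENNReal.ofReal (chainIter g k n))^q)
              + (ENNReal.ofReal C *
              ∑' n : ℤ, ENNReal.ofReal (w n) * (ENNReal.ofReal (chainIter g k n))^q)) := by
            refine mul_le_mul_right (add_le_add (add_le_add ?_ le_rfl) ?_) _
            · exact tsum_shift_down w C hC0 hCup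
                (fun m => (ENNReal.ofReal (chainIter g k m))^q)
            · exact tsum_shift_up w C hC0 hCdown'
                (fun m => (ENNReal.ofReal (chainIter g k m))^q)
        _ = ((4:ℝ≥0∞)^q * (2 * ENNReal.ofReal C + 1)) *
              ∑' n : ℤ, ENNReal.ofReal (w n) * (ENNReal.ofReal (chainIter g k n))^q := by ring
    have hHle : ∀ k : ℕ,
        (∑' n : ℤ, ENNReal.ofReal (w n) * (ENNReal.ofReal (chainIter g k n))^q) ≤
        ((4:ℝ≥0∞)^q * (2 * ENNReal.ofReal C + 1))^k *
          ∑' n : ℤ, ENNReal.ofReal (w n) * (ENNReal.ofReal (chainIter g 0 n))^q := by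
      intro k
      induction k with
      | zero => simp
      | succ k ih =>
        calc (∑' n : ℤ, ENNReal.ofReal (w n) * (ENNReal.ofReal (chainIter g (k+1) n))^q)
            ≤ ((4:ℝ≥0∞)^q * (2 * ENNReal.ofReal C + 1)) *
                ∑' n : ℤ, ENNReal.ofReal (w n) * (ENNReal.ofReal (chainIter g k n))^q := hHrec k
          _ ≤ ((4:ℝ≥0∞)^q * (2 * ENNReal.ofReal C + 1)) *
              (((4:ℝ≥0∞)^q * (2 * ENNReal.ofReal C + 1))^k *
                ∑' n : ℤ, ENNReal.ofReal (w n) * (ENNReal.ofReal (chainIter g 0 n))^q) :=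
              mul_le_mul_right ih _
          _ = ((4:ℝ≥0∞)^q * (2 * ENNReal.ofReal C + 1))^(k+1) *
                ∑' n : ℤ, ENNReal.ofReal (w n) * (ENNReal.ofReal (chainIter g 0 n))^q := by
              rw [pow_succ]; ring
    -- ρ as an ofReal
    have hρeq : (4:ℝ≥0∞)^q * (2 * ENNReal.ofReal C + 1) = ENNReal.ofReal (4^q * (2*C+1)) := by
      rw [ENNReal.ofReal_mul (by positivity)]
      congr 1
      · rw [show ((4:ℝ≥0∞)) = ENNReal.ofReal (4:ℝ) by norm_num]
        rw [ENNReal.ofReal_rpow_of_nonneg (by norm_num : (0:ℝ) ≤ 4) hq0.le]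
      · rw [ENNReal.ofReal_add (by positivity) (by norm_num : (0:ℝ) ≤ 1),
          ENNReal.ofReal_mul (by norm_num : (0:ℝ) ≤ 2)]
        norm_num
    have hρpowE : ∀ k:ℕ, (((4:ℝ≥0∞)^q * (2 * ENNReal.ofReal C + 1))^k)^(1/q)
        = (ENNReal.ofReal ((4^q * (2*C+1))^(1/q)))^k := by
      intro k
      rw [← ENNReal.rpow_natCast ((4:ℝ≥0∞)^q * (2 * ENNReal.ofReal C + 1)) k,
        ← ENNReal.rpow_mul, mul_comm ((k:ℕ):ℝ) (1/q), ENNReal.rpow_mul, hρeq,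
        ENNReal.ofReal_rpow_of_nonneg (by positivity) hqinvpos.le,
        ENNReal.rpow_natCast]
    -- the Λ bound
    have hΛ : (∑' k : ℕ, (∑' n : ℤ, ENNReal.ofReal (w n) *
          (ENNReal.ofReal ((K*t)^k / k.factorial) * ENNReal.ofReal (chainIter g k n))^q)^(1/q))
        ≤ (∑' k : ℕ, ENNReal.ofReal ((K*t)^k / k.factorial) *
            (ENNReal.ofReal ((4^q * (2*C+1))^(1/q)))^k) *
          (∑' n : ℤ, ENNReal.ofReal (w n) * (ENNReal.ofReal (chainIter g 0 n))^q)^(1/q) := by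
      rw [← ENNReal.tsum_mul_right]
      refine ENNReal.tsum_le_tsum fun k => ?_
      rw [hYq k]
      calc ENNReal.ofReal ((K*t)^k / k.factorial) *
            (∑' n : ℤ, ENNReal.ofReal (w n) * (ENNReal.ofReal (chainIter g k n))^q)^(1/q)
          ≤ ENNReal.ofReal ((K*t)^k / k.factorial) *
            ((((4:ℝ≥0∞)^q * (2 * ENNReal.ofReal C + 1))^k *
              ∑' n : ℤ, ENNReal.ofReal (w n) * (ENNReal.ofReal (chainIter g 0 n))^q)^(1/q)) :=
            mul_le_mul_right (ENNReal.rpow_le_rpow (hHle k) hqinvpos.le) _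
        _ = ENNReal.ofReal ((K*t)^k / k.factorial) *
            ((ENNReal.ofReal ((4^q * (2*C+1))^(1/q)))^k *
              (∑' n : ℤ, ENNReal.ofReal (w n) *
                (ENNReal.ofReal (chainIter g 0 n))^q)^(1/q)) := by
            rw [ENNReal.mul_rpow_of_nonneg _ _ hqinvpos.le, hρpowE]
        _ = ENNReal.ofReal ((K*t)^k / k.factorial) *
              (ENNReal.ofReal ((4^q * (2*C+1))^(1/q)))^k *
              (∑' n : ℤ, ENNReal.ofReal (w n) *
                (ENNReal.ofReal (chainIter g 0 n))^q)^(1/q) := by ring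
    -- finiteness of the base sum
    have hH0 : (∑' n : ℤ, ENNReal.ofReal (w n) * (ENNReal.ofReal (chainIter g 0 n))^q) ≠ ⊤ := by
      have hgn : ∀ n : ℤ, ENNReal.ofReal (w n) * (ENNReal.ofReal (chainIter g 0 n))^q ≤
          (4:ℝ≥0∞)^q * (ENNReal.ofReal (w n) * (ENNReal.ofReal (|ta₀ n| + |tb₀ n|))^q)
          + ((4:ℝ≥0∞)^q * ((ENNReal.ofReal (K*t))^q * (ENNReal.ofReal (w n) *
              (ENNReal.ofReal (|a₀ (n+1) - a₀ n| + |b₀ (n+1) - b₀ n|))^q))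
          + (4:ℝ≥0∞)^q * ((ENNReal.ofReal (K*t))^q * (ENNReal.ofReal (w n) *
              (ENNReal.ofReal (|a₀ n - a₀ (n-1)| + |b₀ n - b₀ (n-1)|))^q))) := by
        intro n
        have e1 : ENNReal.ofReal (chainIter g 0 n) =
            ENNReal.ofReal (|ta₀ n| + |tb₀ n|)
            + ENNReal.ofReal (K*t) * ENNReal.ofReal (|a₀ (n+1) - a₀ n| + |b₀ (n+1) - b₀ n|)
            + ENNReal.ofReal (K*t) * ENNReal.ofReal (|a₀ n - a₀ (n-1)| + |b₀ n - b₀ (n-1)|) := by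
          show ENNReal.ofReal (g n) = _
          rw [show g n
            = ((|ta₀ n| + |tb₀ n|) + K * t * (|a₀ (n+1) - a₀ n| + |b₀ (n+1) - b₀ n|))
              + K * t * (|a₀ n - a₀ (n-1)| + |b₀ n - b₀ (n-1)|) from by
            simp only [hgdef]; ring]
          rw [ENNReal.ofReal_add (add_nonneg (by positivity) (mul_nonneg hKt (by positivity)))
            (mul_nonneg hKt (by positivity)),
            ENNReal.ofReal_add (by positivity) (mul_nonneg hKt (by positivity)),
            ENNReal.ofReal_mul hKt, ENNReal.ofReal_mul hKt]
        rw [e1]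
        calc ENNReal.ofReal (w n) * ((ENNReal.ofReal (|ta₀ n| + |tb₀ n|)
              + ENNReal.ofReal (K*t) * ENNReal.ofReal (|a₀ (n+1) - a₀ n| + |b₀ (n+1) - b₀ n|)
              + ENNReal.ofReal (K*t) * ENNReal.ofReal (|a₀ n - a₀ (n-1)| + |b₀ n - b₀ (n-1)|)))^q
            ≤ ENNReal.ofReal (w n) * ((4:ℝ≥0∞)^q * ((ENNReal.ofReal (|ta₀ n| + |tb₀ n|))^q
              + (ENNReal.ofReal (K*t) * ENNReal.ofReal (|a₀ (n+1) - a₀ n| + |b₀ (n+1) - b₀ n|))^q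
              + (ENNReal.ofReal (K*t) * ENNReal.ofReal (|a₀ n - a₀ (n-1)| + |b₀ n - b₀ (n-1)|))^q)) :=
              mul_le_mul_right (ennreal_add3_rpow_le _ _ _ hq0.le) _
          _ = (4:ℝ≥0∞)^q * (ENNReal.ofReal (w n) * (ENNReal.ofReal (|ta₀ n| + |tb₀ n|))^q)
              + ((4:ℝ≥0∞)^q * ((ENNReal.ofReal (K*t))^q * (ENNReal.ofReal (w n) *
                  (ENNReal.ofReal (|a₀ (n+1) - a₀ n| + |b₀ (n+1) - b₀ n|))^q))
              + (4:ℝ≥0∞)^q * ((ENNReal.ofReal (K*t))^q * (ENNReal.ofReal (w n) *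
                  (ENNReal.ofReal (|a₀ n - a₀ (n-1)| + |b₀ n - b₀ (n-1)|))^q))) := by
              rw [ENNReal.mul_rpow_of_nonneg _ _ hq0.le,
                ENNReal.mul_rpow_of_nonneg (ENNReal.ofReal (K*t)) _ hq0.le]
              ring
      have habs2 : ∀ (u v : ℤ → ℝ), (∑' n : ℤ, ENNReal.ofReal (w n) *
            (ENNReal.ofReal (|u n| + |v n|))^q) ≤
          (2:ℝ≥0∞)^q * ∑' n : ℤ, ENNReal.ofReal (w n * (|u n|^q + |v n|^q)) := by
        intro u v
        calc (∑' n : ℤ, ENNReal.ofReal (w n) * (ENNReal.ofReal (|u n| + |v n|))^q)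
            ≤ ∑' n : ℤ, (2:ℝ≥0∞)^q * ENNReal.ofReal (w n * (|u n|^q + |v n|^q)) := by
              refine ENNReal.tsum_le_tsum fun n => ?_
              rw [ENNReal.ofReal_add (abs_nonneg _) (abs_nonneg _)]
              calc ENNReal.ofReal (w n) * (ENNReal.ofReal |u n| + ENNReal.ofReal |v n|)^q
                  ≤ ENNReal.ofReal (w n) * ((2:ℝ≥0∞)^q *
                      ((ENNReal.ofReal |u n|)^q + (ENNReal.ofReal |v n|)^q)) :=
                    mul_le_mul_right (ennreal_add_rpow_le' _ _ hq0.le) _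
                _ = (2:ℝ≥0∞)^q * ENNReal.ofReal (w n * (|u n|^q + |v n|^q)) := by
                    rw [ENNReal.ofReal_rpow_of_nonneg (abs_nonneg _) hq0.le,
                      ENNReal.ofReal_rpow_of_nonneg (abs_nonneg _) hq0.le,
                      ENNReal.ofReal_mul (hwnn n),
                      ENNReal.ofReal_add (by positivity) (by positivity)]
                    ring
          _ = (2:ℝ≥0∞)^q * ∑' n : ℤ, ENNReal.ofReal (w n * (|u n|^q + |v n|^q)) :=
              ENNReal.tsum_mul_left
      have hSig1 : (∑' n : ℤ, ENNReal.ofReal (w n) * (ENNReal.ofReal (|ta₀ n| + |tb₀ n|))^q) ≠ ⊤ := by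
        refine ne_top_of_le_ne_top ?_ (habs2 ta₀ tb₀)
        exact ENNReal.mul_ne_top (ENNReal.rpow_ne_top_of_nonneg hq0.le ENNReal.ofNat_ne_top) hT₀
      have hSig2 : (∑' n : ℤ, ENNReal.ofReal (w n) *
          (ENNReal.ofReal (|a₀ (n+1) - a₀ n| + |b₀ (n+1) - b₀ n|))^q) ≠ ⊤ := by
        refine ne_top_of_le_ne_top ?_
          (habs2 (fun n => a₀ (n+1) - a₀ n) (fun n => b₀ (n+1) - b₀ n))
        exact ENNReal.mul_ne_top (ENNReal.rpow_ne_top_of_nonneg hq0.le ENNReal.ofNat_ne_top) hD₀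
      have hSig3 : (∑' n : ℤ, ENNReal.ofReal (w n) *
          (ENNReal.ofReal (|a₀ n - a₀ (n-1)| + |b₀ n - b₀ (n-1)|))^q) ≠ ⊤ := by
        have e : (∑' n : ℤ, ENNReal.ofReal (w n) *
            (ENNReal.ofReal (|a₀ n - a₀ (n-1)| + |b₀ n - b₀ (n-1)|))^q)
            = ∑' n : ℤ, ENNReal.ofReal (w n) * ((fun m : ℤ =>
              (ENNReal.ofReal (|a₀ (m+1) - a₀ m| + |b₀ (m+1) - b₀ m|))^q) (n-1)) := by
          refine tsum_congr fun n => ?_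
          simp [sub_add_cancel]
        rw [e]
        refine ne_top_of_le_ne_top ?_ (tsum_shift_down w C hC0 hCup (fun m => (ENNReal.ofReal (|a₀ (m+1) - a₀ m| + |b₀ (m+1) - b₀ m|))^q))
        exact ENNReal.mul_ne_top ENNReal.ofReal_ne_top hSig2
      refine ne_top_of_le_ne_top ?_ (ENNReal.tsum_le_tsum hgn)
      rw [ENNReal.tsum_add, ENNReal.tsum_add, ENNReal.tsum_mul_left, ENNReal.tsum_mul_left,
        ENNReal.tsum_mul_left, ENNReal.tsum_mul_left, ENNReal.tsum_mul_left]
      have h4q : ((4:ℝ≥0∞)^q) ≠ ⊤ := ENNReal.rpow_ne_top_of_nonneg hq0.le (by simp)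
      have hKtq : ((ENNReal.ofReal (K*t))^q) ≠ ⊤ :=
        ENNReal.rpow_ne_top_of_nonneg hq0.le ENNReal.ofReal_ne_top
      refine ENNReal.add_ne_top.2 ⟨ENNReal.mul_ne_top h4q hSig1, ENNReal.add_ne_top.2
        ⟨ENNReal.mul_ne_top h4q (ENNReal.mul_ne_top hKtq hSig2),
         ENNReal.mul_ne_top h4q (ENNReal.mul_ne_top hKtq hSig3)⟩⟩
    -- put it together
    have hRfin : (∑' n : ℤ, ENNReal.ofReal (w n) *
        (∑' k : ℕ, ENNReal.ofReal ((K*t)^k / k.factorial) *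
          ENNReal.ofReal (chainIter g k n))^q) ≠ ⊤ := by
      have hid : (∑' n : ℤ, ENNReal.ofReal (w n) *
          (∑' k : ℕ, ENNReal.ofReal ((K*t)^k / k.factorial) *
            ENNReal.ofReal (chainIter g k n))^q)
          = ((∑' n : ℤ, ENNReal.ofReal (w n) *
          (∑' k : ℕ, ENNReal.ofReal ((K*t)^k / k.factorial) *
            ENNReal.ofReal (chainIter g k n))^q)^(1/q))^q := by
        rw [← ENNReal.rpow_mul, one_div, inv_mul_cancel₀ hq0.ne', ENNReal.rpow_one]
      rw [hid]
      refine ENNReal.rpow_ne_top_of_nonneg hq0.le ?_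
      refine ne_top_of_le_ne_top ?_ (le_trans hmink hΛ)
      exact ENNReal.mul_ne_top (exp_series_ne_top hKt (by positivity))
        (ENNReal.rpow_ne_top_of_nonneg hqinvpos.le hH0)
    refine ne_top_of_le_ne_top ?_ (ENNReal.tsum_le_tsum hterm)
    rw [ENNReal.tsum_mul_left]
    exact ENNReal.mul_ne_top ENNReal.ofNat_ne_top hRfin

lemma wnorm2_congr_abs (w : ℤ → ℝ) (p : ℝ≥0∞) (f g f' g' : ℤ → ℝ)
    (hf : ∀ n, |f n| = |f' n|) (hg : ∀ n, |g n| = |g' n|) :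
    wnorm2 w p f g = wnorm2 w p f' g' := by
  unfold wnorm2
  split_ifs
  · exact iSup_congr fun n => by rw [hf, hg]
  · congr 1
    exact tsum_congr fun n => by rw [hf, hg]


/-- Main theorem: preservation of spatial asymptotics: with
`‖(a₀⁺−a₀, b₀⁺−b₀)‖_{w,p} < ∞` and `‖(ã₀, b̃₀)‖_{w,p} < ∞`, the bounded Toda solution
with `a(0) = a₀ + ã₀ ≠ 0`, `b(0) = b₀ + b̃₀` satisfies `a(t) = a₀ + ã(t)`,
`b(t) = b₀ + b̃(t)` with `‖(ã(t), b̃(t))‖_{w,p} < ∞` for all `t`. -/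
theorem toda_preservation_of_spatial_asymptotics
    (w : ℤ → ℝ) (hw1 : ∀ n, 1 ≤ w n)
    (hw2 : ∃ C : ℝ, ∀ n, w (n + 1) / w n + w n / w (n + 1) ≤ C)
    (p : ℝ≥0∞) (hp : 1 ≤ p)
    (a₀ b₀ ta₀ tb₀ : ℤ → ℝ)
    (ha₀bdd : ∃ C, ∀ n, |a₀ n| + |b₀ n| ≤ C)
    (hta₀bdd : ∃ C, ∀ n, |ta₀ n| + |tb₀ n| ≤ C)
    (h₀ : wnorm2 w p (fun n => a₀ (n + 1) - a₀ n) (fun n => b₀ (n + 1) - b₀ n) ≠ ∞)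
    (ht₀ : wnorm2 w p ta₀ tb₀ ≠ ∞)
    (a b : ℝ → ℤ → ℝ)
    (hbdd : ∀ T : ℝ, ∃ C, ∀ t ∈ Set.Icc (-T) T, ∀ n, |a t n| + |b t n| ≤ C)
    (toda_a : ∀ t n, HasDerivAt (fun s => a s n) (a t n * (b t (n + 1) - b t n)) t)
    (toda_b : ∀ t n, HasDerivAt (fun s => b s n)
      (2 * ((a t n) ^ 2 - (a t (n - 1)) ^ 2)) t)
    (hinit_a : ∀ n, a 0 n = a₀ n + ta₀ n)
    (hinit_b : ∀ n, b 0 n = b₀ n + tb₀ n)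
    (hinit_ne : ∀ n, a 0 n ≠ 0) :
    ∀ t, wnorm2 w p (fun n => a t n - a₀ n) (fun n => b t n - b₀ n) ≠ ∞ := by
  intro t
  rcases le_or_gt 0 t with ht | ht
  · exact toda_core w hw1 hw2 p hp a₀ b₀ ta₀ tb₀ ha₀bdd h₀ ht₀ a b hbdd
      toda_a toda_b hinit_a hinit_b t ht
  · -- time reflection
    obtain ⟨Cb, hCb⟩ := ha₀bdd
    have ha₀bdd' : ∃ C, ∀ n, |a₀ n| + |-b₀ n| ≤ C :=
      ⟨Cb, fun n => by rw [abs_neg]; exact hCb n⟩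
    have h₀' : wnorm2 w p (fun n => a₀ (n + 1) - a₀ n)
        (fun n => -b₀ (n + 1) - -b₀ n) ≠ ∞ := by
      rw [← wnorm2_congr_abs w p (fun n => a₀ (n + 1) - a₀ n) (fun n => b₀ (n + 1) - b₀ n)
        (fun n => a₀ (n + 1) - a₀ n) (fun n => -b₀ (n + 1) - -b₀ n)
        (fun n => rfl)
        (fun n => by
          show |b₀ (n+1) - b₀ n| = |-b₀ (n+1) - -b₀ n|
          rw [show -b₀ (n+1) - -b₀ n = -(b₀ (n+1) - b₀ n) from by ring, abs_neg])]
      exact h₀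
    have ht₀' : wnorm2 w p ta₀ (fun n => -tb₀ n) ≠ ∞ := by
      rw [← wnorm2_congr_abs w p ta₀ tb₀ ta₀ (fun n => -tb₀ n)
        (fun n => rfl) (fun n => by
          show |tb₀ n| = |-tb₀ n|
          rw [abs_neg])]
      exact ht₀
    have hbdd' : ∀ T : ℝ, ∃ C, ∀ s ∈ Set.Icc (-T) T, ∀ n,
        |a (-s) n| + |-(b (-s) n)| ≤ C := by
      intro T
      obtain ⟨C, hC⟩ := hbdd T
      exact ⟨C, fun s hs n => by
        rw [abs_neg]
        exact hC (-s) ⟨by linarith [hs.2], by linarith [hs.1]⟩ n⟩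
    have toda_a' : ∀ s (n : ℤ), HasDerivAt (fun σ => a (-σ) n)
        (a (-s) n * ((-(b (-s) (n+1))) - (-(b (-s) n)))) s := by
      intro s n
      have h := (toda_a (-s) n).comp s (hasDerivAt_neg s)
      refine h.congr_deriv ?_
      ring
    have toda_b' : ∀ s (n : ℤ), HasDerivAt (fun σ => -(b (-σ) n))
        (2 * ((a (-s) n)^2 - (a (-s) (n-1))^2)) s := by
      intro s n
      have h := ((toda_b (-s) n).comp s (hasDerivAt_neg s)).neg
      refine h.congr_deriv ?_
      ring
    have hinit_a' : ∀ n, a (-(0:ℝ)) n = a₀ n + ta₀ n := by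
      intro n; rw [neg_zero]; exact hinit_a n
    have hinit_b' : ∀ n, -(b (-(0:ℝ)) n) = -b₀ n + -tb₀ n := by
      intro n; rw [neg_zero, hinit_b n]; ring
    have key := toda_core w hw1 hw2 p hp a₀ (fun n => -b₀ n) ta₀ (fun n => -tb₀ n)
      ha₀bdd' h₀' ht₀' (fun s n => a (-s) n) (fun s n => -(b (-s) n)) hbdd'
      toda_a' toda_b' hinit_a' hinit_b' (-t) (by linarith)
    have e := wnorm2_congr_abs w p (fun n => a t n - a₀ n) (fun n => b t n - b₀ n)
      (fun n => a (-(-t)) n - a₀ n) (fun n => -(b (-(-t)) n) - -(b₀ n))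
      (fun n => by show |a t n - a₀ n| = |a (-(-t)) n - a₀ n|; rw [neg_neg])
      (fun n => by
        show |b t n - b₀ n| = |-(b (-(-t)) n) - -(b₀ n)|
        rw [neg_neg, show -(b t n) - -(b₀ n) = -(b t n - b₀ n) from by ring, abs_neg])
    rw [e]
    exact key
end

section
/- Short-range persistence (Lemma): If (a(t), b(t)) is a bounded Toda solution and Σ_n w(n)(|a(n,t₀) − 1/2| + |b(n,t₀)|) < ∞ for one t₀, where w(n) ≥ 1 satisfies sup_n(w(n+1)/w(n) + w(n)/w(n+1)) < ∞, then Σ_n w(n)(|a(n,t) − 1/2| + |b(n,t)|) < ∞ for all t ∈ ℝ. -/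
open MeasureTheory Set Filter

private noncomputable def todaU (a b : ℝ → ℤ → ℝ) (s : ℝ) (n : ℤ) : ℝ := |a s n - 1 / 2| + |b s n|

private noncomputable def todaS (w : ℤ → ℝ) (a b : ℝ → ℤ → ℝ) (N : ℕ) (s : ℝ) : ℝ :=
  ∑ n ∈ Finset.Icc (-(N : ℤ)) (N : ℤ), w n * todaU a b s n

private lemma todaU_nonneg (a b : ℝ → ℤ → ℝ) (s : ℝ) (n : ℤ) : 0 ≤ todaU a b s n := by
  unfold todaU; positivity

private lemma toda_w_bound (w : ℤ → ℝ) (hw1 : ∀ n, 1 ≤ w n) (Cw : ℝ) (hCw : 1 ≤ Cw)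
    (hwr : ∀ n, w (n + 1) ≤ Cw * w n) (hwl : ∀ n, w n ≤ Cw * w (n + 1)) :
    ∀ N : ℕ, ∀ n : ℤ, n.natAbs ≤ N → w n ≤ Cw ^ N * w 0 := by
  intro N
  induction N with
  | zero =>
    intro n hn
    have : n = 0 := by omega
    simp [this]
  | succ N ih =>
    intro n hn
    have hCw0 : (0:ℝ) ≤ Cw := le_trans zero_le_one hCw
    have hw00 : (0:ℝ) ≤ w 0 := le_trans zero_le_one (hw1 0)
    have hstep : Cw ^ N * w 0 ≤ Cw ^ (N + 1) * w 0 := by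
      have : Cw ^ N ≤ Cw ^ (N + 1) := pow_le_pow_right₀ hCw (Nat.le_succ N)
      nlinarith
    rcases le_or_gt n.natAbs N with h | h
    · exact (ih n h).trans hstep
    · rcases lt_or_ge n 0 with hneg | hpos
      · have h1 : (n + 1).natAbs ≤ N := by omega
        calc w n ≤ Cw * w (n + 1) := hwl n
          _ ≤ Cw * (Cw ^ N * w 0) := mul_le_mul_of_nonneg_left (ih _ h1) hCw0
          _ = Cw ^ (N + 1) * w 0 := by ring
      · have h1 : (n - 1).natAbs ≤ N := by omega
        have h2 : w n ≤ Cw * w (n - 1) := by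
          have := hwr (n - 1); simpa using this
        calc w n ≤ Cw * w (n - 1) := h2
          _ ≤ Cw * (Cw ^ N * w 0) := mul_le_mul_of_nonneg_left (ih _ h1) hCw0
          _ = Cw ^ (N + 1) * w 0 := by ring

set_option maxHeartbeats 1000000 in
private lemma toda_step
    (w : ℤ → ℝ) (hw1 : ∀ n, 1 ≤ w n)
    (Cw : ℝ) (hCw : 1 ≤ Cw)
    (hwr : ∀ n, w (n + 1) ≤ Cw * w n) (hwl : ∀ n, w n ≤ Cw * w (n + 1))
    (a b : ℝ → ℤ → ℝ)
    (toda_a : ∀ t n, HasDerivAt (fun s => a s n) (a t n * (b t (n + 1) - b t n)) t)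
    (toda_b : ∀ t n, HasDerivAt (fun s => b s n)
      (2 * ((a t n) ^ 2 - (a t (n - 1)) ^ 2)) t)
    (T Cb : ℝ) (hCb : 0 ≤ Cb)
    (hbd : ∀ s ∈ Set.Icc (-T) T, ∀ n, |a s n| + |b s n| ≤ Cb)
    (s₀ s₁ : ℝ) (hs₀ : s₀ ∈ Set.Icc (-T) T) (hs₁ : s₁ ∈ Set.Icc (-T) T)
    (hδ : 15 * Cw ^ 2 * Cb * |s₁ - s₀| ≤ 1 / 4)
    (h₀ : Summable fun n => w n * (|a s₀ n - 1 / 2| + |b s₀ n|)) :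
    Summable fun n => w n * (|a s₁ n - 1 / 2| + |b s₁ n|) := by
  classical
  have hw0 : ∀ n, (0:ℝ) < w n := fun n => lt_of_lt_of_le zero_lt_one (hw1 n)
  have hCw0 : (0:ℝ) ≤ Cw := le_trans zero_le_one hCw
  have hw00 : (0:ℝ) ≤ w 0 := (hw0 0).le
  set J : Set ℝ := Set.uIcc s₀ s₁ with hJdef
  have hJT : J ⊆ Set.Icc (-T) T := (Set.ordConnected_Icc).uIcc_subset hs₀ hs₁
  set Cu : ℝ := Cb + 1 with hCudef
  have hCu0 : (0:ℝ) ≤ Cu := by positivity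
  -- continuity
  have ca : ∀ n, Continuous fun s => a s n := fun n =>
    Differentiable.continuous (fun s => (toda_a s n).differentiableAt)
  have cb : ∀ n, Continuous fun s => b s n := fun n =>
    Differentiable.continuous (fun s => (toda_b s n).differentiableAt)
  have cu : ∀ n, Continuous fun s => todaU a b s n := fun n => by
    unfold todaU; exact ((ca n).sub continuous_const).abs.add (cb n).abs
  have hIntJ : ∀ f : ℝ → ℝ, Continuous f → IntegrableOn f J := fun f hf =>
    hf.integrableOn_uIcc
  -- uniform bound on u
  have huC : ∀ s ∈ Set.Icc (-T) T, ∀ n, todaU a b s n ≤ Cu := by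
    intro s hs n
    have h1 := hbd s hs n
    have h2 : |a s n - 1 / 2| ≤ |a s n| + 1 / 2 := by
      have := abs_add_le (a s n) (-(1/2 : ℝ))
      rw [abs_neg, abs_of_nonneg (by norm_num : (0:ℝ) ≤ (1/2:ℝ))] at this
      simpa [sub_eq_add_neg] using this
    unfold todaU
    have h3 : |b s n| ≤ Cb := le_trans (le_add_of_nonneg_left (abs_nonneg _)) h1
    have h4 : |a s n| ≤ Cb := le_trans (le_add_of_nonneg_right (abs_nonneg _)) h1
    rw [hCudef]; linarith
  -- derivative bound
  have hderiv : ∀ s ∈ Set.Icc (-T) T, ∀ n : ℤ,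
      |a s n * (b s (n + 1) - b s n)| + |2 * ((a s n) ^ 2 - (a s (n - 1)) ^ 2)|
        ≤ 5 * Cb * (todaU a b s (n - 1) + todaU a b s n + todaU a b s (n + 1)) := by
    intro s hs n
    have ha : |a s n| ≤ Cb := le_trans (le_add_of_nonneg_right (abs_nonneg _)) (hbd s hs n)
    have ha' : |a s (n - 1)| ≤ Cb := le_trans (le_add_of_nonneg_right (abs_nonneg _)) (hbd s hs (n - 1))
    have e1 : |a s n * (b s (n + 1) - b s n)| = |a s n| * |b s (n + 1) - b s n| := abs_mul _ _
    have e2 : |b s (n + 1) - b s n| ≤ |b s (n + 1)| + |b s n| := abs_sub _ _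
    have e3 : |2 * ((a s n) ^ 2 - (a s (n - 1)) ^ 2)|
        = 2 * (|a s n - a s (n - 1)| * |a s n + a s (n - 1)|) := by
      have : 2 * ((a s n) ^ 2 - (a s (n - 1)) ^ 2)
          = 2 * ((a s n - a s (n - 1)) * (a s n + a s (n - 1))) := by ring
      rw [this, abs_mul, abs_mul]
      norm_num
    have e4 : |a s n - a s (n - 1)| ≤ |a s n - 1 / 2| + |a s (n - 1) - 1 / 2| := by
      have : a s n - a s (n - 1) = (a s n - 1 / 2) - (a s (n - 1) - 1 / 2) := by ring
      rw [this]; exact abs_sub _ _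
    have e5 : |a s n + a s (n - 1)| ≤ 2 * Cb := by
      have := abs_add_le (a s n) (a s (n - 1)); linarith
    have p1 : |a s n| * |b s (n + 1) - b s n| ≤ Cb * (|b s (n + 1)| + |b s n|) :=
      mul_le_mul ha e2 (abs_nonneg _) hCb
    have p2 : |a s n - a s (n - 1)| * |a s n + a s (n - 1)|
        ≤ (|a s n - 1 / 2| + |a s (n - 1) - 1 / 2|) * (2 * Cb) :=
      mul_le_mul e4 e5 (abs_nonneg _) (by positivity)
    unfold todaU
    have n1 : (0:ℝ) ≤ |a s (n-1) - 1/2| := abs_nonneg _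
    have n2 : (0:ℝ) ≤ |b s (n-1)| := abs_nonneg _
    have n3 : (0:ℝ) ≤ |a s n - 1/2| := abs_nonneg _
    have n4 : (0:ℝ) ≤ |b s n| := abs_nonneg _
    have n5 : (0:ℝ) ≤ |a s (n+1) - 1/2| := abs_nonneg _
    have n6 : (0:ℝ) ≤ |b s (n+1)| := abs_nonneg _
    rw [e1, e3]
    nlinarith [p1, p2]
  -- FTC bound
  have hFTC : ∀ σ ∈ J, ∀ n : ℤ, todaU a b σ n ≤ todaU a b s₀ n +
      ∫ s in J, 5 * Cb * (todaU a b s (n - 1) + todaU a b s n + todaU a b s (n + 1)) := by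
    intro σ hσ n
    have hsub : Set.uIoc s₀ σ ⊆ J :=
      le_trans Set.uIoc_subset_uIcc (Set.uIcc_subset_uIcc Set.left_mem_uIcc hσ)
    set fa : ℝ → ℝ := fun s => a s n * (b s (n + 1) - b s n) with hfa
    set fb : ℝ → ℝ := fun s => 2 * ((a s n) ^ 2 - (a s (n - 1)) ^ 2) with hfb
    have cfa : Continuous fa := (ca n).mul ((cb (n + 1)).sub (cb n))
    have cfb : Continuous fb := continuous_const.mul (((ca n).pow 2).sub ((ca (n - 1)).pow 2))
    have hai : a σ n - a s₀ n = ∫ s in s₀..σ, fa s :=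
      (intervalIntegral.integral_eq_sub_of_hasDerivAt (fun s _ => toda_a s n)
        (cfa.intervalIntegrable _ _)).symm
    have hbi : b σ n - b s₀ n = ∫ s in s₀..σ, fb s :=
      (intervalIntegral.integral_eq_sub_of_hasDerivAt (fun s _ => toda_b s n)
        (cfb.intervalIntegrable _ _)).symm
    have key : ∀ (f : ℝ → ℝ), Continuous f →
        |∫ s in s₀..σ, f s| ≤ ∫ s in J, |f s| := by
      intro f hf
      have t1 : |∫ s in s₀..σ, f s| ≤ ∫ s in Set.uIoc s₀ σ, |f s| := by
        simpa [Real.norm_eq_abs] using intervalIntegral.norm_integral_le_integral_norm_uIoc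
          (f := f) (a := s₀) (b := σ) (μ := volume)
      have t2 : ∫ s in Set.uIoc s₀ σ, |f s| ≤ ∫ s in J, |f s| :=
        setIntegral_mono_set (hIntJ _ hf.abs)
          (Filter.Eventually.of_forall fun s => abs_nonneg _)
          (HasSubset.Subset.eventuallyLE hsub)
      linarith
    have t3 : |a σ n - 1 / 2| ≤ |a s₀ n - 1 / 2| + ∫ s in J, |fa s| := by
      have u1 : |a σ n - 1 / 2| ≤ |a s₀ n - 1 / 2| + |a σ n - a s₀ n| := by
        have := abs_add_le (a s₀ n - 1 / 2) (a σ n - a s₀ n)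
        have e : (a s₀ n - 1 / 2) + (a σ n - a s₀ n) = a σ n - 1 / 2 := by ring
        rw [e] at this; exact this
      have u2 := key fa cfa
      rw [← hai] at u2
      linarith
    have t4 : |b σ n| ≤ |b s₀ n| + ∫ s in J, |fb s| := by
      have u1 : |b σ n| ≤ |b s₀ n| + |b σ n - b s₀ n| := by
        have := abs_add_le (b s₀ n) (b σ n - b s₀ n)
        have e : (b s₀ n) + (b σ n - b s₀ n) = b σ n := by ring
        rw [e] at this; exact this
      have u2 := key fb cfb
      rw [← hbi] at u2
      linarith
    have t5 : (∫ s in J, |fa s|) + ∫ s in J, |fb s|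
        ≤ ∫ s in J, 5 * Cb * (todaU a b s (n - 1) + todaU a b s n + todaU a b s (n + 1)) := by
      rw [← MeasureTheory.integral_add (hIntJ _ cfa.abs) (hIntJ _ cfb.abs)]
      apply setIntegral_mono_on (hIntJ _ (cfa.abs.add cfb.abs))
        (hIntJ _ (continuous_const.mul (((cu (n - 1)).add (cu n)).add (cu (n + 1)))))
        measurableSet_uIcc
      intro s hs
      exact hderiv s (hJT hs) n
    unfold todaU
    unfold todaU at t5
    linarith
  -- S basics
  have hScont : ∀ N, Continuous (todaS w a b N) := fun N => by
    unfold todaS; exact continuous_finset_sum _ fun n _ => continuous_const.mul (cu n)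
  have hS0 : ∀ (N : ℕ) (s : ℝ), 0 ≤ todaS w a b N s := fun N s =>
    Finset.sum_nonneg fun n _ => mul_nonneg (hw0 n).le (todaU_nonneg _ _ _ _)
  set F₀ : ℝ := ∑' n, w n * (|a s₀ n - 1 / 2| + |b s₀ n|) with hFdef
  have hF0 : 0 ≤ F₀ := tsum_nonneg fun n => mul_nonneg (hw0 n).le (by positivity)
  have hSF : ∀ N, todaS w a b N s₀ ≤ F₀ := by
    intro N
    unfold todaS todaU
    exact h₀.sum_le_tsum _ (fun n _ => mul_nonneg (hw0 n).le (by positivity))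
  -- shift bound
  have hkey : ∀ (N : ℕ) (s : ℝ) (c : ℤ), c.natAbs ≤ 1 →
      ∑ n ∈ Finset.Icc (-(N:ℤ)) (N:ℤ), w (n + c) * todaU a b s (n + c) ≤ todaS w a b (N + 1) s := by
    intro N s c hc
    have e : ∑ n ∈ Finset.Icc (-(N:ℤ)) (N:ℤ), w (n + c) * todaU a b s (n + c)
        = ∑ n ∈ Finset.Icc (-(N:ℤ) + c) ((N:ℤ) + c), w n * todaU a b s n := by
      rw [← Finset.map_add_right_Icc, Finset.sum_map]
      rfl
    rw [e]
    unfold todaS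
    apply Finset.sum_le_sum_of_subset_of_nonneg
    · apply Finset.Icc_subset_Icc <;> push_cast <;> omega
    · intro n _ _; exact mul_nonneg (hw0 n).le (todaU_nonneg _ _ _ _)
  have hshift : ∀ (N : ℕ) (s : ℝ),
      ∑ n ∈ Finset.Icc (-(N:ℤ)) (N:ℤ),
        w n * (5 * Cb * (todaU a b s (n - 1) + todaU a b s n + todaU a b s (n + 1)))
        ≤ 15 * Cw * Cb * todaS w a b (N + 1) s := by
    intro N s
    have b1 : ∑ n ∈ Finset.Icc (-(N:ℤ)) (N:ℤ), w n * todaU a b s (n - 1)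
        ≤ Cw * todaS w a b (N + 1) s := by
      have step1 : ∑ n ∈ Finset.Icc (-(N:ℤ)) (N:ℤ), w n * todaU a b s (n - 1)
          ≤ ∑ n ∈ Finset.Icc (-(N:ℤ)) (N:ℤ), Cw * (w (n + (-1)) * todaU a b s (n + (-1))) := by
        apply Finset.sum_le_sum
        intro n _
        have hw' : w n ≤ Cw * w (n - 1) := by have := hwr (n - 1); simpa using this
        have : w n * todaU a b s (n - 1) ≤ (Cw * w (n - 1)) * todaU a b s (n - 1) :=
          mul_le_mul_of_nonneg_right hw' (todaU_nonneg _ _ _ _)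
        simpa [sub_eq_add_neg, mul_assoc] using this
      rw [← Finset.mul_sum] at step1
      exact step1.trans (mul_le_mul_of_nonneg_left (hkey N s (-1) (by norm_num)) hCw0)
    have b2 : ∑ n ∈ Finset.Icc (-(N:ℤ)) (N:ℤ), w n * todaU a b s n ≤ todaS w a b (N + 1) s := by
      have := hkey N s 0 (by norm_num)
      simpa using this
    have b3 : ∑ n ∈ Finset.Icc (-(N:ℤ)) (N:ℤ), w n * todaU a b s (n + 1)
        ≤ Cw * todaS w a b (N + 1) s := by
      have step1 : ∑ n ∈ Finset.Icc (-(N:ℤ)) (N:ℤ), w n * todaU a b s (n + 1)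
          ≤ ∑ n ∈ Finset.Icc (-(N:ℤ)) (N:ℤ), Cw * (w (n + 1) * todaU a b s (n + 1)) := by
        apply Finset.sum_le_sum
        intro n _
        have : w n * todaU a b s (n + 1) ≤ (Cw * w (n + 1)) * todaU a b s (n + 1) :=
          mul_le_mul_of_nonneg_right (hwl n) (todaU_nonneg _ _ _ _)
        simpa [mul_assoc] using this
      rw [← Finset.mul_sum] at step1
      exact step1.trans (mul_le_mul_of_nonneg_left (hkey N s 1 (by norm_num)) hCw0)
    have expand : ∑ n ∈ Finset.Icc (-(N:ℤ)) (N:ℤ),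
        w n * (5 * Cb * (todaU a b s (n - 1) + todaU a b s n + todaU a b s (n + 1)))
        = 5 * Cb * ((∑ n ∈ Finset.Icc (-(N:ℤ)) (N:ℤ), w n * todaU a b s (n - 1))
          + (∑ n ∈ Finset.Icc (-(N:ℤ)) (N:ℤ), w n * todaU a b s n)
          + (∑ n ∈ Finset.Icc (-(N:ℤ)) (N:ℤ), w n * todaU a b s (n + 1))) := by
      simp only [← Finset.sum_add_distrib, Finset.mul_sum]
      exact Finset.sum_congr rfl fun n _ => by ring
    rw [expand]
    have hSn : 0 ≤ todaS w a b (N + 1) s := hS0 _ _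
    nlinarith [mul_le_mul_of_nonneg_left b1 hCb, mul_le_mul_of_nonneg_left b2 hCb,
      mul_le_mul_of_nonneg_left b3 hCb,
      mul_le_mul_of_nonneg_left (mul_le_mul_of_nonneg_right hCw hSn) hCb]
  -- constants
  obtain ⟨q, hqdef⟩ : ∃ q : ℝ, q = 15 * Cw * Cb * |s₁ - s₀| := ⟨_, rfl⟩
  have hq0 : 0 ≤ q := by rw [hqdef]; positivity
  have hqCw : q * Cw ≤ 1 / 4 := by
    have e : q * Cw = 15 * Cw ^ 2 * Cb * |s₁ - s₀| := by rw [hqdef]; ring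
    rw [e]; exact hδ
  have hq4 : q ≤ 1 / 4 := by nlinarith
  have hvol : (volume J).toReal = |s₁ - s₀| := by
    have e1 : volume J = ENNReal.ofReal (s₀ ⊔ s₁ - s₀ ⊓ s₁) := by
      rw [hJdef, Set.uIcc, Real.volume_Icc]
    have e2 : s₀ ⊔ s₁ - s₀ ⊓ s₁ = |s₁ - s₀| := by
      simp [max_sub_min_eq_abs, abs_sub_comm]
    rw [e1, e2, ENNReal.toReal_ofReal (abs_nonneg _)]
  -- main claim by induction
  have hclaim : ∀ m N : ℕ, ∀ σ ∈ J, todaS w a b N σ ≤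
      2 * F₀ + q ^ m * ((2 * ((N:ℝ) + m) + 1) * Cw ^ (N + m) * (w 0 * Cu)) := by
    intro m
    induction m with
    | zero =>
      intro N σ hσ
      have hcard : (Finset.Icc (-(N:ℤ)) (N:ℤ)).card = 2 * N + 1 := by
        rw [Int.card_Icc]; omega
      have hb : todaS w a b N σ ≤ (Finset.Icc (-(N:ℤ)) (N:ℤ)).card • (Cw ^ N * w 0 * Cu) := by
        apply Finset.sum_le_card_nsmul
        intro n hn
        rw [Finset.mem_Icc] at hn
        have h1 : w n ≤ Cw ^ N * w 0 := toda_w_bound w hw1 Cw hCw hwr hwl N n (by omega)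
        exact mul_le_mul h1 (huC σ (hJT hσ) n) (todaU_nonneg _ _ _ _) (by positivity)
      rw [hcard, nsmul_eq_mul] at hb
      simp only [pow_zero, Nat.add_zero, Nat.cast_zero, add_zero, one_mul] at hb ⊢
      push_cast at hb ⊢
      nlinarith [hb, hF0]
    | succ m ih =>
      intro N σ hσ
      have hgn : ∀ n : ℤ, Continuous fun s =>
          w n * (5 * Cb * (todaU a b s (n - 1) + todaU a b s n + todaU a b s (n + 1))) :=
        fun n => continuous_const.mul
          (continuous_const.mul (((cu (n - 1)).add (cu n)).add (cu (n + 1))))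
      have h1 : todaS w a b N σ ≤ todaS w a b N s₀ +
          ∫ s in J, ∑ n ∈ Finset.Icc (-(N:ℤ)) (N:ℤ),
            w n * (5 * Cb * (todaU a b s (n - 1) + todaU a b s n + todaU a b s (n + 1))) := by
        rw [MeasureTheory.integral_finset_sum _ (fun n _ => hIntJ _ (hgn n))]
        unfold todaS
        rw [← Finset.sum_add_distrib]
        refine Finset.sum_le_sum fun n _ => ?_
        have h3 : w n * todaU a b σ n ≤ w n * (todaU a b s₀ n +
            ∫ s in J, 5 * Cb * (todaU a b s (n - 1) + todaU a b s n + todaU a b s (n + 1))) :=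
          mul_le_mul_of_nonneg_left (hFTC σ hσ n) (hw0 n).le
        rw [mul_add, ← MeasureTheory.integral_const_mul] at h3
        exact h3
      set B : ℝ := 2 * F₀ + q ^ m * ((2 * ((N:ℝ) + 1 + m) + 1) * Cw ^ (N + 1 + m) * (w 0 * Cu))
        with hBdef
      have hB0 : 0 ≤ B := by
        rw [hBdef]
        have : (0:ℝ) ≤ q ^ m * ((2 * ((N:ℝ) + 1 + m) + 1) * Cw ^ (N + 1 + m) * (w 0 * Cu)) := by
          positivity
        linarith
      have h4 : ∀ s ∈ J, (∑ n ∈ Finset.Icc (-(N:ℤ)) (N:ℤ),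
          w n * (5 * Cb * (todaU a b s (n - 1) + todaU a b s n + todaU a b s (n + 1))))
          ≤ 15 * Cw * Cb * B := fun s hs =>
        (hshift N s).trans (mul_le_mul_of_nonneg_left
          (by
            have := ih (N + 1) s hs
            rw [hBdef]
            convert this using 4 <;> push_cast <;> rfl
            ) (by positivity))
      have h5 : (∫ s in J, ∑ n ∈ Finset.Icc (-(N:ℤ)) (N:ℤ),
          w n * (5 * Cb * (todaU a b s (n - 1) + todaU a b s n + todaU a b s (n + 1))))
          ≤ |s₁ - s₀| * (15 * Cw * Cb * B) := by
        have hc : IntegrableOn (fun _ : ℝ => 15 * Cw * Cb * B) J := by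
          refine integrableOn_const ?_
          exact (IsCompact.measure_lt_top isCompact_uIcc).ne
        have hcont : Continuous fun s => ∑ n ∈ Finset.Icc (-(N:ℤ)) (N:ℤ),
            w n * (5 * Cb * (todaU a b s (n - 1) + todaU a b s n + todaU a b s (n + 1))) :=
          continuous_finset_sum _ fun n _ => hgn n
        have := setIntegral_mono_on (hIntJ _ hcont) hc measurableSet_uIcc h4
        rw [MeasureTheory.setIntegral_const, smul_eq_mul, measureReal_def, hvol] at this
        exact this
      have h6 := hSF N
      have e7 : |s₁ - s₀| * (15 * Cw * Cb * B) = 2 * q * F₀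
          + q ^ (m + 1) * ((2 * ((N:ℝ) + 1 + m) + 1) * Cw ^ (N + 1 + m) * (w 0 * Cu)) := by
        rw [hBdef, hqdef]; ring
      have goalrw : q ^ (m + 1) * ((2 * ((N:ℝ) + ((m + 1 : ℕ) : ℝ)) + 1) * Cw ^ (N + (m + 1)) * (w 0 * Cu))
          = q ^ (m + 1) * ((2 * ((N:ℝ) + 1 + m) + 1) * Cw ^ (N + 1 + m) * (w 0 * Cu)) := by
        have e : N + (m + 1) = N + 1 + m := by omega
        rw [e]; push_cast; ring
      rw [goalrw]
      nlinarith [h1, h5, h6, e7, hq4, hF0]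
  -- uniform bound at s₁
  have hbound : ∀ N : ℕ, todaS w a b N s₁ ≤ 2 * F₀ := by
    intro N
    have hmem : s₁ ∈ J := Set.right_mem_uIcc
    set A : ℝ := (2 * (N:ℝ) + 3) * Cw ^ N * (w 0 * Cu) with hAdef
    have hA0 : 0 ≤ A := by rw [hAdef]; positivity
    have key : ∀ m : ℕ, todaS w a b N s₁ ≤ 2 * F₀ + A * (1 / 2) ^ m := by
      intro m
      refine (hclaim m N s₁ hmem).trans ?_
      have h2m : ((m:ℝ) + 1) ≤ 2 ^ m := by
        have := Nat.lt_two_pow_self (n := m)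
        exact_mod_cast this
      have grow : (2 * ((N:ℝ) + m) + 1) ≤ (2 * N + 3) * 2 ^ m := by
        have hp : (0:ℝ) ≤ 2 ^ m := by positivity
        nlinarith
      have hqq : (0:ℝ) ≤ 2 * (q * Cw) := by positivity
      have hpp : (2 * (q * Cw)) ^ m ≤ (1 / 2) ^ m :=
        pow_le_pow_left₀ hqq (by linarith) m
      have eL : q ^ m * ((2 * ((N:ℝ) + m) + 1) * Cw ^ (N + m) * (w 0 * Cu))
          = (Cw ^ N * (w 0 * Cu) * (q * Cw) ^ m) * (2 * ((N:ℝ) + m) + 1) := by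
        rw [pow_add, mul_pow]; ring
      have s1' : (Cw ^ N * (w 0 * Cu) * (q * Cw) ^ m) * (2 * ((N:ℝ) + m) + 1)
          ≤ (Cw ^ N * (w 0 * Cu) * (q * Cw) ^ m) * ((2 * N + 3) * 2 ^ m) :=
        mul_le_mul_of_nonneg_left grow (by positivity)
      have s2' : (Cw ^ N * (w 0 * Cu) * (q * Cw) ^ m) * ((2 * (N:ℝ) + 3) * 2 ^ m)
          = A * (2 * (q * Cw)) ^ m := by
        rw [hAdef, mul_pow]; ring
      have s3' : A * (2 * (q * Cw)) ^ m ≤ A * (1 / 2) ^ m :=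
        mul_le_mul_of_nonneg_left hpp hA0
      have : q ^ m * ((2 * ((N:ℝ) + m) + 1) * Cw ^ (N + m) * (w 0 * Cu)) ≤ A * (1 / 2) ^ m := by
        rw [eL]; exact le_trans s1' (le_trans (le_of_eq s2') s3')
      linarith
    have hlim : Tendsto (fun m : ℕ => 2 * F₀ + A * (1 / 2) ^ m) atTop (nhds (2 * F₀)) := by
      have h2 : Tendsto (fun m : ℕ => ((1:ℝ) / 2) ^ m) atTop (nhds 0) :=
        tendsto_pow_atTop_nhds_zero_of_lt_one (by norm_num) (by norm_num)
      have h3 : Tendsto (fun m : ℕ => 2 * F₀ + A * (1 / 2) ^ m) atTop (nhds (2 * F₀ + A * 0)) :=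
        Tendsto.add tendsto_const_nhds (Tendsto.mul tendsto_const_nhds h2)
      rw [mul_zero, add_zero] at h3
      exact h3
    exact ge_of_tendsto hlim (Filter.Eventually.of_forall key)
  -- conclude summability
  apply summable_of_sum_le (c := 2 * F₀)
  · intro n
    exact mul_nonneg (hw0 n).le (by positivity)
  · intro F
    set N : ℕ := F.sup fun n => n.natAbs with hNdef
    have hsub : F ⊆ Finset.Icc (-(N:ℤ)) (N:ℤ) := by
      intro n hn
      rw [Finset.mem_Icc]
      have h : n.natAbs ≤ N := Finset.le_sup hn
      omega
    calc ∑ n ∈ F, w n * (|a s₁ n - 1 / 2| + |b s₁ n|) ≤ todaS w a b N s₁ := by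
          unfold todaS todaU
          exact Finset.sum_le_sum_of_subset_of_nonneg hsub
            (fun n _ _ => mul_nonneg (hw0 n).le (by positivity))
      _ ≤ 2 * F₀ := hbound N


/-- Short-range persistence: if `(a(t), b(t))` is a bounded Toda solution
and `Σ_n w(n)(|a(n,t₀) − 1/2| + |b(n,t₀)|) < ∞` for one `t₀`, where `w(n) ≥ 1` satisfies
`sup_n(w(n+1)/w(n) + w(n)/w(n+1)) < ∞`, then the same sum is finite for all `t ∈ ℝ`. -/
theorem toda_short_range_persistence
    (w : ℤ → ℝ) (hw1 : ∀ n, 1 ≤ w n)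
    (hw2 : ∃ C : ℝ, ∀ n, w (n + 1) / w n + w n / w (n + 1) ≤ C)
    (a b : ℝ → ℤ → ℝ)
    (hbdd : ∀ T : ℝ, ∃ C, ∀ t ∈ Set.Icc (-T) T, ∀ n, |a t n| + |b t n| ≤ C)
    (toda_a : ∀ t n, HasDerivAt (fun s => a s n) (a t n * (b t (n + 1) - b t n)) t)
    (toda_b : ∀ t n, HasDerivAt (fun s => b s n)
      (2 * ((a t n) ^ 2 - (a t (n - 1)) ^ 2)) t)
    (t₀ : ℝ)
    (h₀ : Summable (fun n => w n * (|a t₀ n - 1 / 2| + |b t₀ n|))) :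
    ∀ t, Summable (fun n => w n * (|a t n - 1 / 2| + |b t n|)) := by
  intro t
  have hw0 : ∀ n, (0:ℝ) < w n := fun n => lt_of_lt_of_le zero_lt_one (hw1 n)
  obtain ⟨C0, hC0⟩ := hw2
  obtain ⟨Cw, hCwdef⟩ : ∃ Cw : ℝ, Cw = max C0 1 := ⟨_, rfl⟩
  have hCw : 1 ≤ Cw := hCwdef ▸ le_max_right _ _
  have hwr : ∀ n, w (n + 1) ≤ Cw * w n := by
    intro n
    have h2 : 0 < w n / w (n + 1) := div_pos (hw0 n) (hw0 (n + 1))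
    have h1 : w (n + 1) / w n ≤ C0 := by linarith [hC0 n]
    have h3 : w (n + 1) ≤ C0 * w n := (div_le_iff₀ (hw0 n)).mp h1
    have h4 : C0 * w n ≤ Cw * w n :=
      mul_le_mul_of_nonneg_right (hCwdef ▸ le_max_left _ _) (hw0 n).le
    linarith
  have hwl : ∀ n, w n ≤ Cw * w (n + 1) := by
    intro n
    have h2 : 0 < w (n + 1) / w n := div_pos (hw0 (n + 1)) (hw0 n)
    have h1 : w n / w (n + 1) ≤ C0 := by linarith [hC0 n]
    have h3 : w n ≤ C0 * w (n + 1) := (div_le_iff₀ (hw0 (n + 1))).mp h1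
    have h4 : C0 * w (n + 1) ≤ Cw * w (n + 1) :=
      mul_le_mul_of_nonneg_right (hCwdef ▸ le_max_left _ _) (hw0 (n + 1)).le
    linarith
  obtain ⟨T, hTdef⟩ : ∃ T : ℝ, T = |t₀| + |t| := ⟨_, rfl⟩
  obtain ⟨C1, hC1⟩ := hbdd T
  obtain ⟨Cb, hCbdef⟩ : ∃ Cb : ℝ, Cb = max C1 0 := ⟨_, rfl⟩
  have hCb : 0 ≤ Cb := hCbdef ▸ le_max_right _ _
  have hbd : ∀ s ∈ Set.Icc (-T) T, ∀ n, |a s n| + |b s n| ≤ Cb := fun s hs n =>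
    (hC1 s hs n).trans (hCbdef ▸ le_max_left _ _)
  obtain ⟨D, hDdef⟩ : ∃ D : ℝ, D = |t - t₀| := ⟨_, rfl⟩
  have hD0 : 0 ≤ D := hDdef ▸ abs_nonneg _
  set m : ℕ := ⌈60 * Cw ^ 2 * Cb * D⌉₊ + 1 with hmdef
  have hm0 : (0:ℝ) < (m:ℝ) := by positivity
  have hmne : (m:ℝ) ≠ 0 := ne_of_gt hm0
  have hmge : 60 * Cw ^ 2 * Cb * D ≤ (m:ℝ) := by
    have h1 := Nat.le_ceil (60 * Cw ^ 2 * Cb * D)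
    have h2 : ((⌈60 * Cw ^ 2 * Cb * D⌉₊ : ℝ)) ≤ (m:ℝ) := by
      rw [hmdef]; push_cast; linarith
    linarith
  set s : ℕ → ℝ := fun j => t₀ + ((j:ℝ) / (m:ℝ)) * (t - t₀) with hsdef
  have hmem : ∀ j : ℕ, j ≤ m → s j ∈ Set.Icc (-T) T := by
    intro j hj
    have hl0 : 0 ≤ (j:ℝ) / (m:ℝ) := by positivity
    have hl1 : (j:ℝ) / (m:ℝ) ≤ 1 := by
      rw [div_le_one hm0]; exact_mod_cast hj
    have he : s j = (1 - (j:ℝ)/(m:ℝ)) * t₀ + ((j:ℝ)/(m:ℝ)) * t := by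
      rw [hsdef]; ring
    have habs : |s j| ≤ |t₀| + |t| := by
      rw [he]
      calc |(1 - (j:ℝ)/(m:ℝ)) * t₀ + ((j:ℝ)/(m:ℝ)) * t|
          ≤ |(1 - (j:ℝ)/(m:ℝ)) * t₀| + |((j:ℝ)/(m:ℝ)) * t| := abs_add_le _ _
        _ = (1 - (j:ℝ)/(m:ℝ)) * |t₀| + ((j:ℝ)/(m:ℝ)) * |t| := by
            rw [abs_mul, abs_mul, abs_of_nonneg (by linarith), abs_of_nonneg hl0]
        _ ≤ |t₀| + |t| := by
            have := abs_nonneg t₀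
            have := abs_nonneg t
            nlinarith
    rw [hTdef]
    constructor
    · linarith [abs_le.mp habs |>.1]
    · linarith [abs_le.mp habs |>.2]
  have hstep : ∀ j : ℕ, |s (j + 1) - s j| = D / (m:ℝ) := by
    intro j
    have he : s (j + 1) - s j = (t - t₀) / (m:ℝ) := by
      rw [hsdef]
      push_cast
      field_simp
      ring
    rw [he, abs_div, hDdef]
    congr 1
    exact abs_of_pos hm0
  have hsmall : ∀ j : ℕ, 15 * Cw ^ 2 * Cb * |s (j + 1) - s j| ≤ 1 / 4 := by
    intro j
    rw [hstep j]
    rw [← mul_div_assoc, div_le_iff₀ hm0]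
    nlinarith
  have main : ∀ j : ℕ, j ≤ m →
      Summable (fun n => w n * (|a (s j) n - 1 / 2| + |b (s j) n|)) := by
    intro j
    induction j with
    | zero =>
      intro _
      have h : s 0 = t₀ := by rw [hsdef]; simp
      rw [h]
      exact h₀
    | succ j ih =>
      intro hj
      have hsum := ih (le_trans (Nat.le_succ j) hj)
      exact toda_step w hw1 Cw hCw hwr hwl a b toda_a toda_b T Cb hCb hbd
        (s j) (s (j + 1)) (hmem j (by omega)) (hmem (j + 1) hj) (hsmall j) hsum
  have hfin : s m = t := by
    rw [hsdef]
    simp only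
    rw [div_self hmne]
    ring
  have := main m le_rfl
  rwa [hfin] at this
end

section
/- Decaying power-law asymptotics are preserved: if a(n,0) = 1/2 + α n^{-δ} + O(n^{-δ-ε}), b(n,0) = β n^{-δ} + O(n^{-δ-ε}) as n → +∞ (with α, β ∈ ℝ, δ ≥ 0, 0 < ε ≤ 1) and (a(0)−1/2, b(0)) is bounded, then the Toda solution satisfies a(n,t) = 1/2 + α n^{-δ} + O(n^{-δ-ε}) and b(n,t) = β n^{-δ} + O(n^{-δ-ε}) as n → +∞, for every fixed t ∈ ℝ. -/
open Asymptotics Filter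

lemma abs_zpow_neg_le_one' {δ : ℝ} (hδ : 0 ≤ δ) (n : ℤ) : |(n:ℝ) ^ (-δ)| ≤ 1 := by
  rcases eq_or_ne n 0 with h | h
  · subst h
    push_cast
    rw [abs_of_nonneg (Real.rpow_nonneg le_rfl _)]
    exact Real.zero_rpow_le_one _
  · calc |(n:ℝ) ^ (-δ)| ≤ |(n:ℝ)| ^ (-δ) := Real.abs_rpow_le_abs_rpow _ _
      _ ≤ 1 := Real.rpow_le_one_of_one_le_of_nonpos
          (by exact_mod_cast Int.one_le_abs (by simpa using h)) (neg_nonpos.2 hδ)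

lemma rpow_gap_le' {δ x : ℝ} (hδ : 0 ≤ δ) (hx : 1 ≤ x) :
    |(x+1) ^ (-δ) - x ^ (-δ)| ≤ δ * x ^ (-δ - 1) := by
  have hx0 : 0 < x := lt_of_lt_of_le one_pos hx
  have hcont : ContinuousOn (fun y : ℝ => y ^ (-δ)) (Set.Icc x (x+1)) := by
    apply ContinuousOn.rpow_const continuousOn_id
    intro y hy
    exact Or.inl (ne_of_gt (lt_of_lt_of_le hx0 hy.1))
  have hd : ∀ y ∈ Set.Ioo x (x+1),
      HasDerivAt (fun y : ℝ => y ^ (-δ)) (-δ * y ^ (-δ - 1)) y := fun y hy =>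
    Real.hasDerivAt_rpow_const (Or.inl (ne_of_gt (lt_trans hx0 hy.1)))
  obtain ⟨c, hc, hceq⟩ := exists_hasDerivAt_eq_slope (fun y : ℝ => y ^ (-δ))
    (fun y => -δ * y ^ (-δ - 1)) (by linarith) hcont hd
  have h1 : (x+1) ^ (-δ) - x ^ (-δ) = -δ * c ^ (-δ - 1) := by
    rw [hceq, show x + 1 - x = 1 by ring, div_one]
  rw [h1, abs_mul, abs_neg, abs_of_nonneg hδ]
  apply mul_le_mul_of_nonneg_left _ hδ
  rw [abs_of_nonneg (Real.rpow_nonneg (le_of_lt (lt_trans hx0 hc.1)) _)]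
  exact Real.rpow_le_rpow_of_nonpos hx0 (le_of_lt hc.1) (by linarith)


lemma integral_poly_term (c K : ℝ) (i : ℕ) (t : ℝ) :
    ∫ s in (0:ℝ)..t, c * K ^ (i+1) / (Nat.factorial i) * s ^ i
      = c * (K*t) ^ (i+1) / (Nat.factorial (i+1)) := by
  rw [intervalIntegral.integral_const_mul, integral_pow]
  have h0 : (0:ℝ)^(i+1) = 0 := zero_pow (Nat.succ_ne_zero i)
  have hfac : (0:ℝ) < (Nat.factorial i : ℝ) := by exact_mod_cast Nat.factorial_pos i
  rw [h0, Nat.factorial_succ, mul_pow]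
  push_cast
  field_simp
  ring

lemma gronwall_seq' {R R' : ℝ → ℤ → ℝ × ℝ} {T A B K : ℝ}
    (hT : 0 ≤ T) (hA : 0 ≤ A) (hK : 0 ≤ K)
    (hderiv : ∀ n, ∀ t ∈ Set.Icc (0:ℝ) T, HasDerivAt (fun s => R s n) (R' t n) t)
    (hcont : ∀ n, ContinuousOn (fun t => R' t n) (Set.Icc 0 T))
    (hBnd : ∀ t ∈ Set.Icc (0:ℝ) T, ∀ n, ‖R t n‖ ≤ B)
    (hA0 : ∀ n, ‖R 0 n‖ ≤ A)
    (hK' : ∀ t ∈ Set.Icc (0:ℝ) T, ∀ n : ℤ, ∀ u : ℝ, 0 ≤ u →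
      ‖R t (n-1)‖ ≤ u → ‖R t n‖ ≤ u → ‖R t (n+1)‖ ≤ u →
      ‖R' t n‖ ≤ K * (u + 1)) :
    ∀ t ∈ Set.Icc (0:ℝ) T, ∀ n, ‖R t n‖ + 1 ≤ (A + 1) * Real.exp (K * T) := by
  set S : ℕ → ℝ → ℝ := fun j t =>
    (A + 1) * ∑ i ∈ Finset.range j, (K*t)^i / (Nat.factorial i) +
      (B + 1) * (K*t)^j / (Nat.factorial j) with hS
  have key : ∀ j : ℕ, ∀ t ∈ Set.Icc (0:ℝ) T, ∀ n, ‖R t n‖ + 1 ≤ S j t := by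
    intro j
    induction j with
    | zero =>
      intro t ht n
      simp only [hS, Finset.range_zero, Finset.sum_empty, pow_zero, Nat.factorial_zero]
      have := hBnd t ht n
      push_cast
      linarith
    | succ j ih =>
      intro t ht n
      -- derivative bound along [0,t]
      have htT : Set.Icc (0:ℝ) t ⊆ Set.Icc 0 T := Set.Icc_subset_Icc le_rfl ht.2
      have hRd : ∀ s ∈ Set.Icc (0:ℝ) t, ‖R' s n‖ ≤ K * S j s := by
        intro s hs
        have hsT : s ∈ Set.Icc (0:ℝ) T := htT hs
        have h1 := ih s hsT (n-1)
        have h2 := ih s hsT n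
        have h3 := ih s hsT (n+1)
        have hu : (0:ℝ) ≤ S j s - 1 := by have := norm_nonneg (R s n); linarith
        have := hK' s hsT n (S j s - 1) hu (by linarith) (by linarith) (by linarith)
        rwa [sub_add_cancel] at this
      -- FTC
      have hIcc : Set.uIcc (0:ℝ) t = Set.Icc 0 t := Set.uIcc_of_le ht.1
      have hcont' : ContinuousOn (fun s => R' s n) (Set.Icc 0 t) :=
        (hcont n).mono htT
      have hinteg : IntervalIntegrable (fun s => R' s n) MeasureTheory.volume 0 t := by
        apply ContinuousOn.intervalIntegrable
        rwa [hIcc]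
      have hftc : ∫ s in (0:ℝ)..t, R' s n = R t n - R 0 n := by
        apply intervalIntegral.integral_eq_sub_of_hasDerivAt
        · intro s hs
          exact hderiv n s (htT (hIcc ▸ hs))
        · exact hinteg
      have hnorm1 : ‖R t n‖ ≤ ‖R 0 n‖ + ‖∫ s in (0:ℝ)..t, R' s n‖ := by
        have : R t n = R 0 n + ∫ s in (0:ℝ)..t, R' s n := by rw [hftc]; abel
        rw [this]
        exact norm_add_le _ _
      have hnorm2 : ‖∫ s in (0:ℝ)..t, R' s n‖ ≤ ∫ s in (0:ℝ)..t, ‖R' s n‖ :=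
        intervalIntegral.norm_integral_le_integral_norm ht.1
      have hSint : IntervalIntegrable (fun s => K * S j s) MeasureTheory.volume 0 t := by
        apply Continuous.intervalIntegrable
        fun_prop
      have hnormint : IntervalIntegrable (fun s => ‖R' s n‖) MeasureTheory.volume 0 t := by
        apply ContinuousOn.intervalIntegrable
        rw [hIcc]
        exact hcont'.norm
      have hmono : ∫ s in (0:ℝ)..t, ‖R' s n‖ ≤ ∫ s in (0:ℝ)..t, K * S j s :=
        intervalIntegral.integral_mono_on ht.1 hnormint hSint hRd
      -- compute the integral
      have hcomp : ∫ s in (0:ℝ)..t, K * S j s =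
          (A + 1) * ∑ i ∈ Finset.range j, (K*t)^(i+1) / (Nat.factorial (i+1)) +
            (B + 1) * (K*t)^(j+1) / (Nat.factorial (j+1)) := by
        have hexp : ∀ s : ℝ, K * S j s =
            (∑ i ∈ Finset.range j, (A+1) * K^(i+1) / (Nat.factorial i) * s^i) +
              (B+1) * K^(j+1) / (Nat.factorial j) * s^j := by
          intro s
          simp only [hS]
          rw [mul_add, Finset.mul_sum, Finset.mul_sum]
          congr 1
          · apply Finset.sum_congr rfl
            intro i _
            rw [mul_pow]; ring
          · rw [mul_pow]; ring
        have hterm : ∀ (c : ℝ) (i : ℕ), IntervalIntegrable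
            (fun s : ℝ => c * K^(i+1) / (Nat.factorial i) * s^i)
            MeasureTheory.volume 0 t := by
          intro c i
          apply Continuous.intervalIntegrable
          fun_prop
        have hsum : IntervalIntegrable
            (fun x : ℝ => ∑ i ∈ Finset.range j, (A+1) * K^(i+1) / (Nat.factorial i) * x^i)
            MeasureTheory.volume 0 t := by
          apply Continuous.intervalIntegrable
          apply continuous_finset_sum
          intro i _
          fun_prop
        rw [intervalIntegral.integral_congr (fun s _ => hexp s),
          intervalIntegral.integral_add hsum (hterm (B+1) j),
          intervalIntegral.integral_finset_sum (fun i _ => hterm (A+1) i)]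
        simp only [integral_poly_term]
        rw [Finset.mul_sum]
        simp only [mul_div_assoc]
      have hfin : ‖R t n‖ + 1 ≤ (A + 1) +
          ((A + 1) * ∑ i ∈ Finset.range j, (K*t)^(i+1) / (Nat.factorial (i+1)) +
            (B + 1) * (K*t)^(j+1) / (Nat.factorial (j+1))) := by
        have := hA0 n
        calc ‖R t n‖ + 1 ≤ (‖R 0 n‖ + ‖∫ s in (0:ℝ)..t, R' s n‖) + 1 := by linarith
          _ ≤ (A + ∫ s in (0:ℝ)..t, K * S j s) + 1 := by linarith [le_trans hnorm2 hmono]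
          _ = _ := by rw [hcomp]; ring
      -- rearrange to S (j+1) t
      have hrearr : S (j+1) t = (A + 1) +
          ((A + 1) * ∑ i ∈ Finset.range j, (K*t)^(i+1) / (Nat.factorial (i+1)) +
            (B + 1) * (K*t)^(j+1) / (Nat.factorial (j+1))) := by
        simp only [hS]
        rw [Finset.sum_range_succ']
        simp [Nat.factorial_zero]
        ring
      rw [hrearr]
      exact hfin
  intro t ht n
  have hlim : Filter.Tendsto (fun j : ℕ => (A + 1) * Real.exp (K * T) +
      (B + 1) * (K*t)^j / (Nat.factorial j)) Filter.atTop
      (nhds ((A + 1) * Real.exp (K * T))) := by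
    have h0 : Filter.Tendsto (fun j : ℕ => (K*t)^j / (Nat.factorial j) : ℕ → ℝ)
        Filter.atTop (nhds 0) := FloorSemiring.tendsto_pow_div_factorial_atTop (K*t)
    have := (h0.const_mul (B+1)).const_add ((A + 1) * Real.exp (K * T))
    simpa [mul_div_assoc] using this
  apply ge_of_tendsto' hlim
  intro j
  have hx : 0 ≤ K * t := mul_nonneg hK ht.1
  have h1 : ∑ i ∈ Finset.range j, (K*t)^i / (Nat.factorial i) ≤ Real.exp (K*t) :=
    Real.sum_le_exp_of_nonneg hx j
  have h2 : Real.exp (K*t) ≤ Real.exp (K*T) :=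
    Real.exp_le_exp.2 (mul_le_mul_of_nonneg_left ht.2 hK)
  have := key j t ht n
  have hA1 : (0:ℝ) ≤ A + 1 := by linarith
  calc ‖R t n‖ + 1 ≤ S j t := this
    _ ≤ (A + 1) * Real.exp (K * T) + (B + 1) * (K*t)^j / (Nat.factorial j) := by
        simp only [hS]
        have : (A + 1) * ∑ i ∈ Finset.range j, (K*t)^i / (Nat.factorial i) ≤
            (A + 1) * Real.exp (K * T) :=
          mul_le_mul_of_nonneg_left (le_trans h1 h2) hA1
        linarith


set_option maxHeartbeats 2000000 in
/-- Decaying power-law asymptotics are preserved: if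
`a(n,0) = 1/2 + α n^{-δ} + O(n^{-δ-ε})`, `b(n,0) = β n^{-δ} + O(n^{-δ-ε})` as `n → +∞`
(with `δ ≥ 0`, `0 < ε ≤ 1`) and `(a(0) − 1/2, b(0))` is bounded, then the bounded Toda
solution satisfies the same asymptotics for every fixed `t ∈ ℝ`. -/
theorem toda_power_asymptotics_preserved
    (α β δ ε : ℝ) (hδ : 0 ≤ δ) (hε0 : 0 < ε) (hε1 : ε ≤ 1)
    (a b : ℝ → ℤ → ℝ)
    (hbdd : ∀ T : ℝ, ∃ C, ∀ t ∈ Set.Icc (-T) T, ∀ n, |a t n| + |b t n| ≤ C)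
    (toda_a : ∀ t n, HasDerivAt (fun s => a s n) (a t n * (b t (n + 1) - b t n)) t)
    (toda_b : ∀ t n, HasDerivAt (fun s => b s n)
      (2 * ((a t n) ^ 2 - (a t (n - 1)) ^ 2)) t)
    (ha0 : (fun n : ℤ => a 0 n - 1 / 2 - α * (n : ℝ) ^ (-δ)) =O[atTop]
      (fun n : ℤ => (n : ℝ) ^ (-δ - ε)))
    (hb0 : (fun n : ℤ => b 0 n - β * (n : ℝ) ^ (-δ)) =O[atTop]
      (fun n : ℤ => (n : ℝ) ^ (-δ - ε))) :
    ∀ t, ((fun n : ℤ => a t n - 1 / 2 - α * (n : ℝ) ^ (-δ)) =O[atTop]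
        (fun n : ℤ => (n : ℝ) ^ (-δ - ε))) ∧
      ((fun n : ℤ => b t n - β * (n : ℝ) ^ (-δ)) =O[atTop]
        (fun n : ℤ => (n : ℝ) ^ (-δ - ε))) := by
  have haC : ∀ n, Continuous fun t => a t n :=
    fun n => continuous_iff_continuousAt.2 fun t => (toda_a t n).differentiableAt.continuousAt
  have hbC : ∀ n, Continuous fun t => b t n :=
    fun n => continuous_iff_continuousAt.2 fun t => (toda_b t n).differentiableAt.continuousAt
  intro t₀
  set T : ℝ := |t₀| with hTdef
  have hT : (0:ℝ) ≤ T := abs_nonneg t₀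
  set σ : ℝ := if t₀ < 0 then -1 else 1 with hσdef
  have hσT : σ * T = t₀ := by
    rcases lt_or_ge t₀ 0 with h | h
    · rw [hσdef, if_pos h, hTdef, abs_of_neg h]; ring
    · rw [hσdef, if_neg (not_lt.2 h), hTdef, abs_of_nonneg h]; ring
  have hσabs : |σ| = 1 := by
    rcases lt_or_ge t₀ 0 with h | h
    · rw [hσdef, if_pos h]; norm_num
    · rw [hσdef, if_neg (not_lt.2 h)]; norm_num
  have hmem : ∀ s ∈ Set.Icc (0:ℝ) T, σ * s ∈ Set.Icc (-T) T := by
    intro s hs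
    have h1 : |σ * s| ≤ T := by
      rw [abs_mul, hσabs, one_mul, abs_of_nonneg hs.1]; exact hs.2
    exact ⟨neg_le_of_abs_le h1, le_of_abs_le h1⟩
  clear_value T σ
  obtain ⟨C, hC⟩ := hbdd T
  have hC0 : 0 ≤ C :=
    le_trans (by positivity) (hC 0 ⟨neg_nonpos.2 hT, hT⟩ 0)
  have habd : ∀ s ∈ Set.Icc (0:ℝ) T, ∀ n, |a (σ*s) n| ≤ C := by
    intro s hs n
    have h1 := hC (σ*s) (hmem s hs) n
    have h2 := abs_nonneg (b (σ*s) n)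
    linarith
  have hbbd : ∀ s ∈ Set.Icc (0:ℝ) T, ∀ n, |b (σ*s) n| ≤ C := by
    intro s hs n
    have h1 := hC (σ*s) (hmem s hs) n
    have h2 := abs_nonneg (a (σ*s) n)
    linarith
  have he0 : (0:ℝ) ≤ δ + ε := by linarith
  have hc2 : (1:ℝ) ≤ 2 ^ (δ+ε) := Real.one_le_rpow one_le_two he0
  set c2 : ℝ := 2 ^ (δ+ε) with hc2def
  clear_value c2
  set P : ℝ := (|α|+|β|)*(δ+2) with hPdef
  have hP0 : (0:ℝ) ≤ P := by
    rw [hPdef]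
    exact mul_nonneg (by positivity) (by linarith)
  have hβP : |β| *(δ+2) ≤ P := by
    rw [hPdef]; nlinarith [abs_nonneg α, hδ]
  have hαP : |α| *(δ+2) ≤ P := by
    rw [hPdef]; nlinarith [abs_nonneg β, hδ]
  clear_value P
  set D : ℝ := C + 1 + |α| + |β| with hDdef
  have hD0 : (0:ℝ) < D := by
    rw [hDdef]
    have := abs_nonneg α; have := abs_nonneg β; linarith
  clear_value D
  set K : ℝ := 4*(C+1)*(c2+1)*(1 + P) with hKdef
  have hK0 : (0:ℝ) ≤ K := by
    rw [hKdef]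
    exact mul_nonneg (mul_nonneg (by linarith) (by linarith)) (by linarith)
  clear_value K
  -- pointwise bound on the residuals along the whole trajectory
  have hrabd : ∀ s ∈ Set.Icc (0:ℝ) T, ∀ n : ℤ,
      |a (σ*s) n - 1/2 - α * (n:ℝ)^(-δ)| ≤ D := by
    intro s hs n
    have h1 := abs_le.1 (habd s hs n)
    have h2 : |α * (n:ℝ)^(-δ)| ≤ |α| := by
      rw [abs_mul]
      calc |α| * |(n:ℝ)^(-δ)| ≤ |α| * 1 :=
            mul_le_mul_of_nonneg_left (abs_zpow_neg_le_one' hδ n) (abs_nonneg α)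
        _ = |α| := mul_one _
    have h2' := abs_le.1 h2
    have h3 : (0:ℝ) ≤ |β| := abs_nonneg β
    rw [hDdef]
    apply abs_le.2
    constructor <;> nlinarith [h1.1, h1.2, h2'.1, h2'.2]
  have hrbbd : ∀ s ∈ Set.Icc (0:ℝ) T, ∀ n : ℤ,
      |b (σ*s) n - β * (n:ℝ)^(-δ)| ≤ D := by
    intro s hs n
    have h1 := abs_le.1 (hbbd s hs n)
    have h2 : |β * (n:ℝ)^(-δ)| ≤ |β| := by
      rw [abs_mul]
      calc |β| * |(n:ℝ)^(-δ)| ≤ |β| * 1 :=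
            mul_le_mul_of_nonneg_left (abs_zpow_neg_le_one' hδ n) (abs_nonneg β)
        _ = |β| := mul_one _
    have h2' := abs_le.1 h2
    have h3 : (0:ℝ) ≤ |α| := abs_nonneg α
    rw [hDdef]
    apply abs_le.2
    constructor <;> nlinarith [h1.1, h1.2, h2'.1, h2'.2]
  -- initial data constants
  rw [isBigO_iff] at ha0 hb0
  obtain ⟨d1, hd1⟩ := ha0
  obtain ⟨d2, hd2⟩ := hb0
  obtain ⟨m1, hm1⟩ := eventually_atTop.1 hd1
  obtain ⟨m2, hm2⟩ := eventually_atTop.1 hd2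
  simp only [Real.norm_eq_abs] at hm1 hm2
  set m : ℤ := max (max m1 m2) 1 with hmdef
  have hm1le : (1:ℤ) ≤ m := le_max_right _ _
  have hm1m : m1 ≤ m := le_trans (le_max_left _ _) (le_max_left _ _)
  have hm2m : m2 ≤ m := le_trans (le_max_right _ _) (le_max_left _ _)
  have hm1R : (1:ℝ) ≤ (m:ℝ) := by exact_mod_cast hm1le
  clear_value m
  set A : ℝ := |d1| + |d2| + (m:ℝ)^(δ+ε) * D with hAdef
  have hA0 : (0:ℝ) ≤ A := by
    rw [hAdef]
    have h1 : (0:ℝ) ≤ (m:ℝ)^(δ+ε) * D :=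
      mul_nonneg (Real.rpow_nonneg (by linarith) _) hD0.le
    have := abs_nonneg d1; have := abs_nonneg d2; linarith
  clear_value A
  set M : ℝ := (A + 1) * Real.exp (K * T) with hMdef
  have hM0 : (0:ℝ) ≤ M := by
    rw [hMdef]
    exact mul_nonneg (by linarith) (Real.exp_pos _).le
  clear_value M
  -- the key uniform bound, for every truncation level ν
  have main : ∀ ν : ℝ, 1 ≤ ν → ∀ n : ℤ,
      (min (max (n:ℝ) 1) ν)^(δ+ε) * |a t₀ n - 1/2 - α * (n:ℝ)^(-δ)| ≤ M ∧
      (min (max (n:ℝ) 1) ν)^(δ+ε) * |b t₀ n - β * (n:ℝ)^(-δ)| ≤ M := by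
    intro ν hν
    set x : ℤ → ℝ := fun n => min (max (n:ℝ) 1) ν with hxdef
    set w : ℤ → ℝ := fun n => x n ^ (δ+ε) with hwdef
    clear_value x
    have hx1 : ∀ n, 1 ≤ x n := by
      intro n; simp only [hxdef]; exact le_min (le_max_right _ _) hν
    have hx0 : ∀ n, 0 < x n := fun n => lt_of_lt_of_le one_pos (hx1 n)
    have hxν : ∀ n, x n ≤ ν := by
      intro n; simp only [hxdef]; exact min_le_right _ _
    have hxmono : ∀ p q : ℤ, p ≤ q → x p ≤ x q := by
      intro p q h; simp only [hxdef]
      exact min_le_min (max_le_max (by exact_mod_cast h) le_rfl) le_rfl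
    have hxle : ∀ n : ℤ, 1 ≤ n → x n ≤ (n:ℝ) := by
      intro n hn; simp only [hxdef]
      exact le_trans (min_le_left _ _) (max_le le_rfl (by exact_mod_cast hn))
    have hxrat : ∀ n : ℤ, x n ≤ 2 * x (n-1) := by
      intro n
      have hcast : ((n-1:ℤ):ℝ) = (n:ℝ) - 1 := by push_cast; ring
      have hmax : max (n:ℝ) 1 ≤ 2 * max ((n:ℝ)-1) 1 := by
        rcases le_total (n:ℝ) 2 with h | h
        · have h1 : max (n:ℝ) 1 ≤ 2 := max_le h one_le_two
          have h2 : (1:ℝ) ≤ max ((n:ℝ)-1) 1 := le_max_right _ _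
          linarith
        · rw [max_eq_left (by linarith), max_eq_left (by linarith)]
          linarith
      have heq : 2 * x (n-1) = min (2 * max ((n:ℝ)-1) 1) (2*ν) := by
        simp only [hxdef, hcast]
        rw [mul_min_of_nonneg _ _ (by norm_num : (0:ℝ) ≤ 2)]
      have hxn : x n = min (max (n:ℝ) 1) ν := by simp only [hxdef]
      rw [hxn, heq]
      exact le_min (le_trans (min_le_left _ _) hmax)
        (le_trans (min_le_right _ _) (by linarith))
    clear_value w
    have hw1 : ∀ n, 1 ≤ w n := by
      intro n; simp only [hwdef]; exact Real.one_le_rpow (hx1 n) he0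
    have hw0 : ∀ n, 0 ≤ w n := fun n => le_trans zero_le_one (hw1 n)
    have hwmono : ∀ p q : ℤ, p ≤ q → w p ≤ w q := by
      intro p q h; simp only [hwdef]
      exact Real.rpow_le_rpow (hx0 p).le (hxmono p q h) he0
    have hwB : ∀ n, w n ≤ ν ^ (δ+ε) := by
      intro n; simp only [hwdef]
      exact Real.rpow_le_rpow (hx0 n).le (hxν n) he0
    have hwle : ∀ n : ℤ, 1 ≤ n → w n ≤ (n:ℝ)^(δ+ε) := by
      intro n hn; simp only [hwdef]
      exact Real.rpow_le_rpow (hx0 n).le (hxle n hn) he0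
    have hwrat : ∀ n : ℤ, w n ≤ c2 * w (n-1) := by
      intro n
      simp only [hwdef]
      calc x n ^ (δ+ε) ≤ (2 * x (n-1)) ^ (δ+ε) :=
            Real.rpow_le_rpow (hx0 n).le (hxrat n) he0
        _ = c2 * x (n-1) ^ (δ+ε) := by
            rw [Real.mul_rpow (by norm_num) (hx0 (n-1)).le, hc2def]
    have hdecay : ∀ n : ℤ, 1 ≤ n → w n * (n:ℝ)^(-δ-ε) ≤ 1 := by
      intro n hn
      have hn0 : (0:ℝ) < (n:ℝ) := by exact_mod_cast lt_of_lt_of_le zero_lt_one hn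
      have h2 : (0:ℝ) ≤ (n:ℝ)^(-δ-ε) := Real.rpow_nonneg hn0.le _
      calc w n * (n:ℝ)^(-δ-ε) ≤ (n:ℝ)^(δ+ε) * (n:ℝ)^(-δ-ε) :=
            mul_le_mul_of_nonneg_right (hwle n hn) h2
        _ = (n:ℝ)^((δ+ε) + (-δ-ε)) := (Real.rpow_add hn0 _ _).symm
        _ = 1 := by rw [show (δ+ε) + (-δ-ε) = 0 by ring, Real.rpow_zero]
    have gapF : ∀ n : ℤ, w n * |((n+1:ℤ):ℝ)^(-δ) - ((n:ℤ):ℝ)^(-δ)| ≤ δ + 2 := by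
      intro n
      rcases le_or_gt 1 n with hn | hn
      · have hn1 : (1:ℝ) ≤ (n:ℝ) := by exact_mod_cast hn
        have hn0 : (0:ℝ) < (n:ℝ) := lt_of_lt_of_le zero_lt_one hn1
        have hcast : ((n+1:ℤ):ℝ) = (n:ℝ) + 1 := by push_cast; ring
        have hgap : |((n+1:ℤ):ℝ)^(-δ) - ((n:ℤ):ℝ)^(-δ)| ≤ δ * (n:ℝ)^(-δ-1) := by
          rw [hcast]; exact rpow_gap_le' hδ hn1
        calc w n * |((n+1:ℤ):ℝ)^(-δ) - ((n:ℤ):ℝ)^(-δ)|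
            ≤ (n:ℝ)^(δ+ε) * (δ * (n:ℝ)^(-δ-1)) :=
              mul_le_mul (hwle n hn) hgap (abs_nonneg _) (Real.rpow_nonneg hn0.le _)
          _ = δ * ((n:ℝ)^(δ+ε) * (n:ℝ)^(-δ-1)) := by ring
          _ = δ * (n:ℝ)^((δ+ε) + (-δ-1)) := by rw [← Real.rpow_add hn0]
          _ ≤ δ * 1 := by
              refine mul_le_mul_of_nonneg_left ?_ hδ
              rw [show (δ+ε) + (-δ-1) = ε - 1 by ring]
              exact Real.rpow_le_one_of_one_le_of_nonpos hn1 (by linarith)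
          _ ≤ δ + 2 := by linarith
      · have hwn : w n = 1 := by
          rw [hwdef]
          simp only [hxdef]
          rw [max_eq_right (by exact_mod_cast hn.le : (n:ℝ) ≤ 1),
            min_eq_left hν, Real.one_rpow]
        rw [hwn, one_mul]
        have h1 := abs_zpow_neg_le_one' hδ (n+1)
        have h2 := abs_zpow_neg_le_one' hδ n
        calc |((n+1:ℤ):ℝ)^(-δ) - ((n:ℤ):ℝ)^(-δ)|
            ≤ |((n+1:ℤ):ℝ)^(-δ)| + |((n:ℤ):ℝ)^(-δ)| := abs_sub _ _
          _ ≤ δ + 2 := by linarith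
    have gapB : ∀ n : ℤ, w n * |((n:ℤ):ℝ)^(-δ) - ((n-1:ℤ):ℝ)^(-δ)| ≤ c2 * (δ + 2) := by
      intro n
      have h := gapF (n-1)
      rw [sub_add_cancel] at h
      calc w n * |((n:ℤ):ℝ)^(-δ) - ((n-1:ℤ):ℝ)^(-δ)|
          ≤ (c2 * w (n-1)) * |((n:ℤ):ℝ)^(-δ) - ((n-1:ℤ):ℝ)^(-δ)| :=
            mul_le_mul_of_nonneg_right (hwrat n) (abs_nonneg _)
        _ = c2 * (w (n-1) * |((n:ℤ):ℝ)^(-δ) - ((n-1:ℤ):ℝ)^(-δ)|) := by ring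
        _ ≤ c2 * (δ + 2) := mul_le_mul_of_nonneg_left h (by linarith)
    -- the weighted pair and its derivative
    set R : ℝ → ℤ → ℝ × ℝ := fun s n =>
      (w n * (a (σ*s) n - 1/2 - α * (n:ℝ)^(-δ)),
       w n * (b (σ*s) n - β * (n:ℝ)^(-δ))) with hRdef
    set R' : ℝ → ℤ → ℝ × ℝ := fun s n =>
      (w n * (a (σ*s) n * (b (σ*s) (n+1) - b (σ*s) n) * σ),
       w n * (2 * ((a (σ*s) n)^2 - (a (σ*s) (n-1))^2) * σ)) with hR'def
    clear_value R R'
    have hlin : ∀ t : ℝ, HasDerivAt (fun s : ℝ => σ * s) σ t := fun t => by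
      simpa using (hasDerivAt_id t).const_mul σ
    have hderiv : ∀ n, ∀ t ∈ Set.Icc (0:ℝ) T, HasDerivAt (fun s => R s n) (R' t n) t := by
      intro n t _
      simp only [hRdef, hR'def]
      apply HasDerivAt.prodMk
      · have h1 : HasDerivAt (fun s => a (σ*s) n)
            (a (σ*t) n * (b (σ*t) (n+1) - b (σ*t) n) * σ) t :=
          (toda_a (σ*t) n).comp t (hlin t)
        exact ((h1.sub_const (1/2)).sub_const (α * (n:ℝ)^(-δ))).const_mul (w n)
      · have h2 : HasDerivAt (fun s => b (σ*s) n)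
            (2 * ((a (σ*t) n)^2 - (a (σ*t) (n-1))^2) * σ) t :=
          (toda_b (σ*t) n).comp t (hlin t)
        exact (h2.sub_const (β * (n:ℝ)^(-δ))).const_mul (w n)
    have hacont : ∀ q : ℤ, Continuous (fun t : ℝ => a (σ*t) q) :=
      fun q => (haC q).comp (continuous_const.mul continuous_id)
    have hbcont : ∀ q : ℤ, Continuous (fun t : ℝ => b (σ*t) q) :=
      fun q => (hbC q).comp (continuous_const.mul continuous_id)
    have hcont : ∀ n, ContinuousOn (fun t => R' t n) (Set.Icc (0:ℝ) T) := by
      intro n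
      simp only [hR'def]
      apply Continuous.continuousOn
      apply Continuous.prodMk
      · exact continuous_const.mul ((((hacont n).mul
          (((hbcont (n+1)).sub (hbcont n)))).mul continuous_const))
      · exact continuous_const.mul ((continuous_const.mul
          (((hacont n).pow 2).sub ((hacont (n-1)).pow 2))).mul continuous_const)
    have hBnd : ∀ t ∈ Set.Icc (0:ℝ) T, ∀ n, ‖R t n‖ ≤ ν^(δ+ε) * D := by
      intro t ht n
      simp only [hRdef]
      rw [norm_prod_le_iff]
      constructor
      · show ‖w n * (a (σ*t) n - 1/2 - α * (n:ℝ)^(-δ))‖ ≤ ν^(δ+ε) * D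
        rw [Real.norm_eq_abs, abs_mul, abs_of_nonneg (hw0 n)]
        exact mul_le_mul (hwB n) (hrabd t ht n) (abs_nonneg _) (Real.rpow_nonneg (by linarith) _)
      · show ‖w n * (b (σ*t) n - β * (n:ℝ)^(-δ))‖ ≤ ν^(δ+ε) * D
        rw [Real.norm_eq_abs, abs_mul, abs_of_nonneg (hw0 n)]
        exact mul_le_mul (hwB n) (hrbbd t ht n) (abs_nonneg _) (Real.rpow_nonneg (by linarith) _)
    have h0mem : (0:ℝ) ∈ Set.Icc (0:ℝ) T := ⟨le_rfl, hT⟩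
    have hσ0 : σ * 0 = 0 := mul_zero σ
    have hInit : ∀ n, ‖R 0 n‖ ≤ A := by
      intro n
      simp only [hRdef]
      rw [norm_prod_le_iff]
      rcases le_or_gt m n with hn | hn
      · -- large n : use the O-bound
        have hn1 : (1:ℤ) ≤ n := le_trans hm1le hn
        have hn1R : (1:ℝ) ≤ (n:ℝ) := by exact_mod_cast hn1
        have hn0 : (0:ℝ) < (n:ℝ) := lt_of_lt_of_le zero_lt_one hn1R
        have hg0 : (0:ℝ) ≤ (n:ℝ)^(-δ-ε) := Real.rpow_nonneg hn0.le _
        have hwd := hdecay n hn1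
        have hAterm : (0:ℝ) ≤ (m:ℝ)^(δ+ε) * D :=
          mul_nonneg (Real.rpow_nonneg (by linarith) _) hD0.le
        constructor
        · have h1 := hm1 n (le_trans hm1m hn)
          show ‖w n * (a (σ*0) n - 1/2 - α * (n:ℝ)^(-δ))‖ ≤ A
          rw [Real.norm_eq_abs, abs_mul, abs_of_nonneg (hw0 n), hσ0]
          calc w n * |a 0 n - 1/2 - α * (n:ℝ)^(-δ)|
              ≤ w n * (d1 * |(n:ℝ)^(-δ-ε)|) := mul_le_mul_of_nonneg_left h1 (hw0 n)
            _ ≤ w n * (|d1| * (n:ℝ)^(-δ-ε)) := by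
                rw [abs_of_nonneg hg0]
                exact mul_le_mul_of_nonneg_left
                  (mul_le_mul_of_nonneg_right (le_abs_self d1) hg0) (hw0 n)
            _ = |d1| * (w n * (n:ℝ)^(-δ-ε)) := by ring
            _ ≤ |d1| * 1 := mul_le_mul_of_nonneg_left hwd (abs_nonneg d1)
            _ ≤ A := by rw [hAdef]; have := abs_nonneg d2; linarith
        · have h1 := hm2 n (le_trans hm2m hn)
          show ‖w n * (b (σ*0) n - β * (n:ℝ)^(-δ))‖ ≤ A
          rw [Real.norm_eq_abs, abs_mul, abs_of_nonneg (hw0 n), hσ0]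
          calc w n * |b 0 n - β * (n:ℝ)^(-δ)|
              ≤ w n * (d2 * |(n:ℝ)^(-δ-ε)|) := mul_le_mul_of_nonneg_left h1 (hw0 n)
            _ ≤ w n * (|d2| * (n:ℝ)^(-δ-ε)) := by
                rw [abs_of_nonneg hg0]
                exact mul_le_mul_of_nonneg_left
                  (mul_le_mul_of_nonneg_right (le_abs_self d2) hg0) (hw0 n)
            _ = |d2| * (w n * (n:ℝ)^(-δ-ε)) := by ring
            _ ≤ |d2| * 1 := mul_le_mul_of_nonneg_left hwd (abs_nonneg d2)
            _ ≤ A := by rw [hAdef]; have := abs_nonneg d1; linarith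
      · -- small n : use boundedness
        have hwm : w n ≤ (m:ℝ)^(δ+ε) := le_trans (hwmono n m hn.le) (hwle m hm1le)
        have hra := hrabd 0 h0mem n
        have hrb := hrbbd 0 h0mem n
        constructor
        · show ‖w n * (a (σ*0) n - 1/2 - α * (n:ℝ)^(-δ))‖ ≤ A
          rw [Real.norm_eq_abs, abs_mul, abs_of_nonneg (hw0 n)]
          calc w n * |a (σ*0) n - 1/2 - α * (n:ℝ)^(-δ)|
              ≤ (m:ℝ)^(δ+ε) * D := mul_le_mul hwm hra (abs_nonneg _) (Real.rpow_nonneg (by linarith) _)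
            _ ≤ A := by
                rw [hAdef]
                have := abs_nonneg d1; have := abs_nonneg d2; linarith
        · show ‖w n * (b (σ*0) n - β * (n:ℝ)^(-δ))‖ ≤ A
          rw [Real.norm_eq_abs, abs_mul, abs_of_nonneg (hw0 n)]
          calc w n * |b (σ*0) n - β * (n:ℝ)^(-δ)|
              ≤ (m:ℝ)^(δ+ε) * D := mul_le_mul hwm hrb (abs_nonneg _) (Real.rpow_nonneg (by linarith) _)
            _ ≤ A := by
                rw [hAdef]
                have := abs_nonneg d1; have := abs_nonneg d2; linarith
    -- the key derivative estimate
    have hKest : ∀ t ∈ Set.Icc (0:ℝ) T, ∀ n : ℤ, ∀ u : ℝ, 0 ≤ u →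
        ‖R t (n-1)‖ ≤ u → ‖R t n‖ ≤ u → ‖R t (n+1)‖ ≤ u →
        ‖R' t n‖ ≤ K * (u + 1) := by
      intro t ht n u hu hm' hn' hp'
      have compbd : ∀ q : ℤ, ‖R t q‖ ≤ u →
          w q * |a (σ*t) q - 1/2 - α * (q:ℝ)^(-δ)| ≤ u ∧
          w q * |b (σ*t) q - β * (q:ℝ)^(-δ)| ≤ u := by
        intro q hq
        constructor
        · have h := le_trans (norm_fst_le (R t q)) hq
          simp only [hRdef] at h
          rw [Real.norm_eq_abs, abs_mul, abs_of_nonneg (hw0 q)] at h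
          exact h
        · have h := le_trans (norm_snd_le (R t q)) hq
          simp only [hRdef] at h
          rw [Real.norm_eq_abs, abs_mul, abs_of_nonneg (hw0 q)] at h
          exact h
      obtain ⟨hra_m, hrb_m⟩ := compbd (n-1) hm'
      obtain ⟨hra_n, hrb_n⟩ := compbd n hn'
      obtain ⟨hra_p, hrb_p⟩ := compbd (n+1) hp'
      have habs_a := habd t ht n
      have habs_am := habd t ht (n-1)
      -- difference estimates
      have hbdiff : w n * |b (σ*t) (n+1) - b (σ*t) n| ≤ 2*u + |β| *(δ+2) := by
        have hid : b (σ*t) (n+1) - b (σ*t) n =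
            (b (σ*t) (n+1) - β * ((n+1:ℤ):ℝ)^(-δ)) - (b (σ*t) n - β * ((n:ℤ):ℝ)^(-δ))
              + β * (((n+1:ℤ):ℝ)^(-δ) - ((n:ℤ):ℝ)^(-δ)) := by ring
        have htri : |b (σ*t) (n+1) - b (σ*t) n| ≤
            |b (σ*t) (n+1) - β * ((n+1:ℤ):ℝ)^(-δ)| + |b (σ*t) n - β * ((n:ℤ):ℝ)^(-δ)|
              + |β| * |((n+1:ℤ):ℝ)^(-δ) - ((n:ℤ):ℝ)^(-δ)| := by
          rw [hid]
          calc |_ - _ + β * _| ≤ |_ - _| + |β * (((n+1:ℤ):ℝ)^(-δ) - ((n:ℤ):ℝ)^(-δ))| :=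
                abs_add_le _ _
            _ ≤ _ := by
                rw [abs_mul]
                have := abs_sub (b (σ*t) (n+1) - β * ((n+1:ℤ):ℝ)^(-δ))
                  (b (σ*t) n - β * ((n:ℤ):ℝ)^(-δ))
                linarith
        have e1 : w n * |b (σ*t) (n+1) - β * ((n+1:ℤ):ℝ)^(-δ)| ≤ u :=
          le_trans (mul_le_mul_of_nonneg_right (hwmono n (n+1) (by linarith))
            (abs_nonneg _)) hrb_p
        have e3 : w n * (|β| * |((n+1:ℤ):ℝ)^(-δ) - ((n:ℤ):ℝ)^(-δ)|) ≤ |β| * (δ+2) := by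
          have := mul_le_mul_of_nonneg_left (gapF n) (abs_nonneg β)
          calc w n * (|β| * |((n+1:ℤ):ℝ)^(-δ) - ((n:ℤ):ℝ)^(-δ)|)
              = |β| * (w n * |((n+1:ℤ):ℝ)^(-δ) - ((n:ℤ):ℝ)^(-δ)|) := by ring
            _ ≤ |β| * (δ+2) := this
        calc w n * |b (σ*t) (n+1) - b (σ*t) n|
            ≤ w n * (|b (σ*t) (n+1) - β * ((n+1:ℤ):ℝ)^(-δ)|
                + |b (σ*t) n - β * ((n:ℤ):ℝ)^(-δ)|
                + |β| * |((n+1:ℤ):ℝ)^(-δ) - ((n:ℤ):ℝ)^(-δ)|) :=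
              mul_le_mul_of_nonneg_left htri (hw0 n)
          _ = w n * |b (σ*t) (n+1) - β * ((n+1:ℤ):ℝ)^(-δ)|
                + w n * |b (σ*t) n - β * ((n:ℤ):ℝ)^(-δ)|
                + w n * (|β| * |((n+1:ℤ):ℝ)^(-δ) - ((n:ℤ):ℝ)^(-δ)|) := by ring
          _ ≤ u + u + |β| * (δ+2) := by linarith [e1, hrb_n, e3]
          _ = 2*u + |β| *(δ+2) := by ring
      have hadiff : w n * |a (σ*t) n - a (σ*t) (n-1)| ≤ (1+c2)*u + |α| *(c2*(δ+2)) := by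
        have hid : a (σ*t) n - a (σ*t) (n-1) =
            (a (σ*t) n - 1/2 - α * ((n:ℤ):ℝ)^(-δ))
              - (a (σ*t) (n-1) - 1/2 - α * ((n-1:ℤ):ℝ)^(-δ))
              + α * (((n:ℤ):ℝ)^(-δ) - ((n-1:ℤ):ℝ)^(-δ)) := by ring
        have htri : |a (σ*t) n - a (σ*t) (n-1)| ≤
            |a (σ*t) n - 1/2 - α * ((n:ℤ):ℝ)^(-δ)|
              + |a (σ*t) (n-1) - 1/2 - α * ((n-1:ℤ):ℝ)^(-δ)|
              + |α| * |((n:ℤ):ℝ)^(-δ) - ((n-1:ℤ):ℝ)^(-δ)| := by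
          rw [hid]
          calc |_ - _ + α * _| ≤ |_ - _| + |α * (((n:ℤ):ℝ)^(-δ) - ((n-1:ℤ):ℝ)^(-δ))| :=
                abs_add_le _ _
            _ ≤ _ := by
                rw [abs_mul]
                have := abs_sub (a (σ*t) n - 1/2 - α * ((n:ℤ):ℝ)^(-δ))
                  (a (σ*t) (n-1) - 1/2 - α * ((n-1:ℤ):ℝ)^(-δ))
                linarith
        have e2 : w n * |a (σ*t) (n-1) - 1/2 - α * ((n-1:ℤ):ℝ)^(-δ)| ≤ c2 * u := by
          calc w n * |a (σ*t) (n-1) - 1/2 - α * ((n-1:ℤ):ℝ)^(-δ)|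
              ≤ (c2 * w (n-1)) * |a (σ*t) (n-1) - 1/2 - α * ((n-1:ℤ):ℝ)^(-δ)| :=
                mul_le_mul_of_nonneg_right (hwrat n) (abs_nonneg _)
            _ = c2 * (w (n-1) * |a (σ*t) (n-1) - 1/2 - α * ((n-1:ℤ):ℝ)^(-δ)|) := by ring
            _ ≤ c2 * u := mul_le_mul_of_nonneg_left hra_m (by linarith)
        have e3 : w n * (|α| * |((n:ℤ):ℝ)^(-δ) - ((n-1:ℤ):ℝ)^(-δ)|) ≤ |α| * (c2*(δ+2)) := by
          have := mul_le_mul_of_nonneg_left (gapB n) (abs_nonneg α)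
          calc w n * (|α| * |((n:ℤ):ℝ)^(-δ) - ((n-1:ℤ):ℝ)^(-δ)|)
              = |α| * (w n * |((n:ℤ):ℝ)^(-δ) - ((n-1:ℤ):ℝ)^(-δ)|) := by ring
            _ ≤ |α| * (c2*(δ+2)) := this
        calc w n * |a (σ*t) n - a (σ*t) (n-1)|
            ≤ w n * (|a (σ*t) n - 1/2 - α * ((n:ℤ):ℝ)^(-δ)|
                + |a (σ*t) (n-1) - 1/2 - α * ((n-1:ℤ):ℝ)^(-δ)|
                + |α| * |((n:ℤ):ℝ)^(-δ) - ((n-1:ℤ):ℝ)^(-δ)|) :=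
              mul_le_mul_of_nonneg_left htri (hw0 n)
          _ = w n * |a (σ*t) n - 1/2 - α * ((n:ℤ):ℝ)^(-δ)|
                + w n * |a (σ*t) (n-1) - 1/2 - α * ((n-1:ℤ):ℝ)^(-δ)|
                + w n * (|α| * |((n:ℤ):ℝ)^(-δ) - ((n-1:ℤ):ℝ)^(-δ)|) := by ring
          _ ≤ u + c2 * u + |α| * (c2*(δ+2)) := by linarith [hra_n, e2, e3]
          _ = (1+c2)*u + |α| *(c2*(δ+2)) := by ring
      -- component 1
      have hcomp1 : ‖(R' t n).1‖ ≤ K * (u+1) := by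
        simp only [hR'def]
        rw [Real.norm_eq_abs, abs_mul, abs_of_nonneg (hw0 n), abs_mul, abs_mul, hσabs, mul_one]
        have hstep1 : w n * (|a (σ*t) n| * |b (σ*t) (n+1) - b (σ*t) n|)
            ≤ C * (2*u + |β| *(δ+2)) := by
          calc w n * (|a (σ*t) n| * |b (σ*t) (n+1) - b (σ*t) n|)
              = |a (σ*t) n| * (w n * |b (σ*t) (n+1) - b (σ*t) n|) := by ring
            _ ≤ C * (2*u + |β| *(δ+2)) :=
                mul_le_mul habs_a hbdiff (mul_nonneg (hw0 n) (abs_nonneg _)) hC0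
        have hstep2 : C * (2*u + |β| *(δ+2)) ≤ K * (u+1) := by
          have hCle : C ≤ (C+1)*(c2+1) := by nlinarith
          have h2up : 2*u + |β| *(δ+2) ≤ 4*(1+P)*(u+1) := by nlinarith [mul_nonneg hP0 hu]
          calc C * (2*u + |β| *(δ+2)) ≤ ((C+1)*(c2+1)) * (4*(1+P)*(u+1)) := by
                apply mul_le_mul hCle h2up ?_ (by nlinarith)
                have := mul_nonneg (abs_nonneg β) (by linarith : (0:ℝ) ≤ δ+2)
                linarith
            _ = K * (u+1) := by rw [hKdef]; ring
        linarith
      -- component 2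
      have hcomp2 : ‖(R' t n).2‖ ≤ K * (u+1) := by
        simp only [hR'def]
        rw [Real.norm_eq_abs, abs_mul, abs_of_nonneg (hw0 n), abs_mul, hσabs, mul_one]
        have hfac : (a (σ*t) n)^2 - (a (σ*t) (n-1))^2 =
            (a (σ*t) n + a (σ*t) (n-1)) * (a (σ*t) n - a (σ*t) (n-1)) := by ring
        have hsum : |a (σ*t) n + a (σ*t) (n-1)| ≤ 2*C := by
          calc |a (σ*t) n + a (σ*t) (n-1)| ≤ |a (σ*t) n| + |a (σ*t) (n-1)| := abs_add_le _ _
            _ ≤ 2*C := by linarith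
        have hstep1 : w n * |2 * ((a (σ*t) n)^2 - (a (σ*t) (n-1))^2)|
            ≤ 2 * (2*C) * ((1+c2)*u + |α| *(c2*(δ+2))) := by
          rw [hfac, abs_mul, abs_mul, abs_two]
          calc w n * (2 * (|a (σ*t) n + a (σ*t) (n-1)| * |a (σ*t) n - a (σ*t) (n-1)|))
              = 2 * (|a (σ*t) n + a (σ*t) (n-1)| * (w n * |a (σ*t) n - a (σ*t) (n-1)|)) := by
                ring
            _ ≤ 2 * ((2*C) * ((1+c2)*u + |α| *(c2*(δ+2)))) := by
                apply mul_le_mul_of_nonneg_left ?_ (by norm_num : (0:ℝ) ≤ 2)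
                apply mul_le_mul hsum hadiff (mul_nonneg (hw0 n) (abs_nonneg _)) (by linarith)
            _ = 2 * (2*C) * ((1+c2)*u + |α| *(c2*(δ+2))) := by ring
        have hstep2 : 2 * (2*C) * ((1+c2)*u + |α| *(c2*(δ+2))) ≤ K * (u+1) := by
          have hαc2 : |α| *(c2*(δ+2)) ≤ c2 * P := by nlinarith [abs_nonneg α, hδ]
          have hs1 : (1+c2)*u + |α| *(c2*(δ+2)) ≤ (1+c2)*(u+P) := by nlinarith
          have hs2 : u + P ≤ (1+P)*(u+1) := by nlinarith [mul_nonneg hP0 hu]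
          have hs3 : (1+c2)*(u+P) ≤ (1+c2)*((1+P)*(u+1)) :=
            mul_le_mul_of_nonneg_left hs2 (by linarith)
          have hC4 : 2*(2*C) ≤ 4*(C+1) := by linarith
          calc 2 * (2*C) * ((1+c2)*u + |α| *(c2*(δ+2)))
              ≤ (4*(C+1)) * ((1+c2)*((1+P)*(u+1))) := by
                apply mul_le_mul hC4 (le_trans hs1 hs3) ?_ (by linarith)
                have h1 : (0:ℝ) ≤ (1+c2)*u := by nlinarith
                have h2 : (0:ℝ) ≤ |α| *(c2*(δ+2)) :=
                  mul_nonneg (abs_nonneg α) (mul_nonneg (by linarith) (by linarith))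
                linarith
            _ = K * (u+1) := by rw [hKdef]; ring
        linarith
      rw [show ‖R' t n‖ = max ‖(R' t n).1‖ ‖(R' t n).2‖ from Prod.norm_def _]
      exact max_le hcomp1 hcomp2
    -- apply Gronwall
    have hfinal := gronwall_seq' hT hA0 hK0 hderiv hcont hBnd hInit hKest
    intro n
    have h := hfinal T ⟨hT, le_rfl⟩ n
    have h1 : ‖R T n‖ ≤ M := by rw [hMdef]; linarith
    constructor
    · have h2 := le_trans (norm_fst_le (R T n)) h1
      simp only [hRdef] at h2
      rw [Real.norm_eq_abs, abs_mul, abs_of_nonneg (hw0 n), hσT] at h2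
      simp only [hwdef, hxdef] at h2
      exact h2
    · have h2 := le_trans (norm_snd_le (R T n)) h1
      simp only [hRdef] at h2
      rw [Real.norm_eq_abs, abs_mul, abs_of_nonneg (hw0 n), hσT] at h2
      simp only [hwdef, hxdef] at h2
      exact h2
  -- conclude the big-O statements
  constructor
  · rw [isBigO_iff]
    refine ⟨M, ?_⟩
    filter_upwards [eventually_ge_atTop (1:ℤ)] with n hn
    have h := (main (n:ℝ) (by exact_mod_cast hn) n).1
    have hmax : max (n:ℝ) 1 = (n:ℝ) := max_eq_left (by exact_mod_cast hn)
    rw [hmax, min_self] at h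
    have hn0 : (0:ℝ) < (n:ℝ) := by exact_mod_cast lt_of_lt_of_le zero_lt_one hn
    have hg0 : (0:ℝ) ≤ (n:ℝ)^(-δ-ε) := Real.rpow_nonneg hn0.le _
    have hone : (n:ℝ)^(δ+ε) * (n:ℝ)^(-δ-ε) = 1 := by
      rw [← Real.rpow_add hn0, show (δ+ε)+(-δ-ε) = 0 by ring, Real.rpow_zero]
    simp only [Real.norm_eq_abs]
    rw [abs_of_nonneg hg0]
    calc |a t₀ n - 1/2 - α*(n:ℝ)^(-δ)|
        = ((n:ℝ)^(δ+ε) * (n:ℝ)^(-δ-ε)) * |a t₀ n - 1/2 - α*(n:ℝ)^(-δ)| := by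
          rw [hone, one_mul]
      _ = ((n:ℝ)^(δ+ε) * |a t₀ n - 1/2 - α*(n:ℝ)^(-δ)|) * (n:ℝ)^(-δ-ε) := by ring
      _ ≤ M * (n:ℝ)^(-δ-ε) := mul_le_mul_of_nonneg_right h hg0
  · rw [isBigO_iff]
    refine ⟨M, ?_⟩
    filter_upwards [eventually_ge_atTop (1:ℤ)] with n hn
    have h := (main (n:ℝ) (by exact_mod_cast hn) n).2
    have hmax : max (n:ℝ) 1 = (n:ℝ) := max_eq_left (by exact_mod_cast hn)
    rw [hmax, min_self] at h
    have hn0 : (0:ℝ) < (n:ℝ) := by exact_mod_cast lt_of_lt_of_le zero_lt_one hn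
    have hg0 : (0:ℝ) ≤ (n:ℝ)^(-δ-ε) := Real.rpow_nonneg hn0.le _
    have hone : (n:ℝ)^(δ+ε) * (n:ℝ)^(-δ-ε) = 1 := by
      rw [← Real.rpow_add hn0, show (δ+ε)+(-δ-ε) = 0 by ring, Real.rpow_zero]
    simp only [Real.norm_eq_abs]
    rw [abs_of_nonneg hg0]
    calc |b t₀ n - β*(n:ℝ)^(-δ)|
        = ((n:ℝ)^(δ+ε) * (n:ℝ)^(-δ-ε)) * |b t₀ n - β*(n:ℝ)^(-δ)| := by
          rw [hone, one_mul]
      _ = ((n:ℝ)^(δ+ε) * |b t₀ n - β*(n:ℝ)^(-δ)|) * (n:ℝ)^(-δ-ε) := by ring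
      _ ≤ M * (n:ℝ)^(-δ-ε) := mul_le_mul_of_nonneg_right h hg0
end

section
/- The sequences g_j, h_j defined by g_j(n) = Σ_{ℓ=0}^j c_{j−ℓ} ⟨δ_n, H^ℓ δ_n⟩ and h_j(n) = 2a(n) Σ_{ℓ=0}^j c_{j−ℓ} ⟨δ_{n+1}, H^ℓ δ_n⟩ + c_{j+1} satisfy the recursion relations g_0 = 1, h_0 = c_1, 2g_{j+1} − h_j − h_j⁻ − 2b g_j = 0 for 0 ≤ j ≤ r, and h_{j+1} − h_{j+1}⁻ − 2(a² g_j⁺ − (a⁻)² g_j⁻) − b(h_j − h_j⁻) = 0 for 0 ≤ j < r. -/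
open scoped ENNReal

/-- The sequences `g_j(n) = Σ_{ℓ=0}^j c_{j−ℓ} ⟨δ_n, H^ℓ δ_n⟩` and
`h_j(n) = 2a(n) Σ_{ℓ=0}^j c_{j−ℓ} ⟨δ_{n+1}, H^ℓ δ_n⟩ + c_{j+1}` satisfy the Toda
hierarchy recursion relations. -/
theorem toda_hierarchy_recursion_relations
    (a b : ℤ → ℝ) (ha_bdd : ∃ C, ∀ n, |a n| ≤ C) (hb_bdd : ∃ C, ∀ n, |b n| ≤ C)
    (H : lp (fun _ : ℤ => ℝ) 2 →L[ℝ] lp (fun _ : ℤ => ℝ) 2)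
    (hH : ∀ (f : lp (fun _ : ℤ => ℝ) 2) n,
      H f n = a n * f (n + 1) + a (n - 1) * f (n - 1) + b n * f n)
    (r : ℕ) (c : ℕ → ℝ) (hc0 : c 0 = 1) (hcr : c (r + 1) = 0)
    (g h : ℕ → ℤ → ℝ)
    (hg : ∀ j n, g j n = ∑ ℓ ∈ Finset.range (j + 1),
      c (j - ℓ) * inner (𝕜 := ℝ) (lp.single 2 n (1 : ℝ)) ((H ^ ℓ) (lp.single 2 n 1)))
    (hh : ∀ j n, h j n = 2 * a n * (∑ ℓ ∈ Finset.range (j + 1),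
      c (j - ℓ) * inner (𝕜 := ℝ) (lp.single 2 (n + 1) (1 : ℝ)) ((H ^ ℓ) (lp.single 2 n 1)))
      + c (j + 1)) :
    (∀ n, g 0 n = 1) ∧ (∀ n, h 0 n = c 1) ∧
    (∀ j ≤ r, ∀ n, 2 * g (j + 1) n - h j n - h j (n - 1) - 2 * b n * g j n = 0) ∧
    (∀ j < r, ∀ n, h (j + 1) n - h (j + 1) (n - 1)
      - 2 * ((a n) ^ 2 * g j (n + 1) - (a (n - 1)) ^ 2 * g j (n - 1))
      - b n * (h j n - h j (n - 1)) = 0) := by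
  classical
  set M : ℕ → ℤ → ℤ → ℝ :=
    fun ℓ m n => ((H ^ ℓ) (lp.single 2 n 1) : lp (fun _ : ℤ => ℝ) 2) m with hMdef
  have hinner : ∀ (m n : ℤ) (ℓ : ℕ),
      inner (𝕜 := ℝ) (lp.single 2 m (1 : ℝ)) ((H ^ ℓ) (lp.single 2 n 1)) = M ℓ m n := by
    intro m n ℓ
    rw [lp.inner_single_left]
    simp [hMdef]
  have hg' : ∀ j n, g j n = ∑ ℓ ∈ Finset.range (j + 1), c (j - ℓ) * M ℓ n n := by
    intro j n; rw [hg]; simp only [hinner]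
  have hh' : ∀ j n, h j n = 2 * a n *
      (∑ ℓ ∈ Finset.range (j + 1), c (j - ℓ) * M ℓ (n + 1) n) + c (j + 1) := by
    intro j n; rw [hh]; simp only [hinner]
  have hM0 : ∀ m n, M 0 m n = if m = n then 1 else 0 := by
    intro m n
    simp only [hMdef, pow_zero, ContinuousLinearMap.one_apply, lp.single_apply, Pi.single_apply,
      eq_rec_constant, dite_eq_ite]
  have hleft : ∀ ℓ (m n : ℤ), M (ℓ + 1) m n =
      a m * M ℓ (m + 1) n + a (m - 1) * M ℓ (m - 1) n + b m * M ℓ m n := by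
    intro ℓ m n
    have h1 : (H ^ (ℓ + 1)) (lp.single 2 n 1) = H ((H ^ ℓ) (lp.single 2 n 1)) := by
      rw [pow_succ']; rw [ContinuousLinearMap.mul_apply]
    simp only [hMdef, h1, hH]
  have hHsingle : ∀ n : ℤ, H (lp.single 2 n 1) =
      a n • lp.single 2 (n + 1) (1 : ℝ) + a (n - 1) • lp.single 2 (n - 1) 1
        + b n • lp.single 2 n 1 := by
    intro n
    apply lp.ext
    funext m
    rw [hH]
    simp only [lp.coeFn_add, lp.coeFn_smul, Pi.add_apply, Pi.smul_apply, smul_eq_mul,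
      lp.single_apply, Pi.single_apply, eq_rec_constant, dite_eq_ite]
    split_ifs <;> first | (exfalso; omega) | ring1 | (ring_nf; congr 1 <;> omega)
  have hright : ∀ ℓ (m n : ℤ), M (ℓ + 1) m n =
      a (n - 1) * M ℓ m (n - 1) + a n * M ℓ m (n + 1) + b n * M ℓ m n := by
    intro ℓ m n
    have h1 : (H ^ (ℓ + 1)) (lp.single 2 n 1) = (H ^ ℓ) (H (lp.single 2 n 1)) := by
      rw [pow_succ]; rw [ContinuousLinearMap.mul_apply]
    simp only [hMdef, h1, hHsingle, map_add, map_smul, lp.coeFn_add, lp.coeFn_smul,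
      Pi.add_apply, Pi.smul_apply, smul_eq_mul]
    ring
  have hsymm : ∀ ℓ (m n : ℤ), M ℓ m n = M ℓ n m := by
    intro ℓ
    induction ℓ with
    | zero =>
      intro m n
      rw [hM0, hM0]
      simp only [eq_comm]
    | succ ℓ ih =>
      intro m n
      rw [hleft ℓ m n, hright ℓ n m, ih (m + 1) n, ih (m - 1) n, ih m n]
      ring
  refine ⟨?_, ?_, ?_, ?_⟩
  · intro n
    rw [hg']
    simp [hM0, hc0]
  · intro n
    rw [hh']
    simp [hM0]
  · intro j _ n
    have hn : n - 1 + 1 = n := by ring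
    set A : ℝ := ∑ ℓ ∈ Finset.range (j + 1), c (j - ℓ) * M ℓ (n + 1) n with hA
    set B : ℝ := ∑ ℓ ∈ Finset.range (j + 1), c (j - ℓ) * M ℓ n (n - 1) with hB
    set D : ℝ := ∑ ℓ ∈ Finset.range (j + 1), c (j - ℓ) * M ℓ n n with hD
    have e1 : g (j + 1) n = c (j + 1) + (a (n - 1) * B + a n * A + b n * D) := by
      rw [hg', Finset.sum_range_succ']
      have key : ∀ ℓ ∈ Finset.range (j + 1),
          c (j + 1 - (ℓ + 1)) * M (ℓ + 1) n n
            = a (n - 1) * (c (j - ℓ) * M ℓ n (n - 1))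
              + a n * (c (j - ℓ) * M ℓ (n + 1) n) + b n * (c (j - ℓ) * M ℓ n n) := by
        intro ℓ _
        rw [Nat.add_sub_add_right, hright, hsymm ℓ n (n + 1)]
        ring
      rw [Finset.sum_congr rfl key, Finset.sum_add_distrib, Finset.sum_add_distrib,
        ← Finset.mul_sum, ← Finset.mul_sum, ← Finset.mul_sum, ← hB, ← hA, ← hD, hM0]
      rw [if_pos rfl]
      simp only [Nat.sub_zero]
      ring
    have e2 : h j n = 2 * a n * A + c (j + 1) := by rw [hh', hA]
    have e3 : h j (n - 1) = 2 * a (n - 1) * B + c (j + 1) := by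
      rw [hh', hn, hB]
    have e4 : g j n = D := by rw [hg', hD]
    rw [e1, e2, e3, e4]; ring
  · intro j _ n
    have hn : n - 1 + 1 = n := by ring
    set A : ℝ := ∑ ℓ ∈ Finset.range (j + 1), c (j - ℓ) * M ℓ (n + 1) n with hA
    set B : ℝ := ∑ ℓ ∈ Finset.range (j + 1), c (j - ℓ) * M ℓ n (n - 1) with hB
    set T : ℝ := ∑ ℓ ∈ Finset.range (j + 1), c (j - ℓ) * M ℓ (n + 1) (n - 1) with hT
    set Dp : ℝ := ∑ ℓ ∈ Finset.range (j + 1), c (j - ℓ) * M ℓ (n + 1) (n + 1) with hDp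
    set Dm : ℝ := ∑ ℓ ∈ Finset.range (j + 1), c (j - ℓ) * M ℓ (n - 1) (n - 1) with hDm
    have e1 : h (j + 1) n =
        2 * a n * (a (n - 1) * T + a n * Dp + b n * A) + c (j + 1 + 1) := by
      rw [hh', Finset.sum_range_succ']
      have key : ∀ ℓ ∈ Finset.range (j + 1),
          c (j + 1 - (ℓ + 1)) * M (ℓ + 1) (n + 1) n
            = a (n - 1) * (c (j - ℓ) * M ℓ (n + 1) (n - 1))
              + a n * (c (j - ℓ) * M ℓ (n + 1) (n + 1))
              + b n * (c (j - ℓ) * M ℓ (n + 1) n) := by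
        intro ℓ _
        rw [Nat.add_sub_add_right, hright]
        ring
      rw [Finset.sum_congr rfl key, Finset.sum_add_distrib, Finset.sum_add_distrib,
        ← Finset.mul_sum, ← Finset.mul_sum, ← Finset.mul_sum, ← hT, ← hDp, ← hA, hM0]
      rw [if_neg (by omega : ¬(n + 1 = n))]
      ring
    have e2 : h (j + 1) (n - 1) =
        2 * a (n - 1) * (a n * T + a (n - 1) * Dm + b n * B) + c (j + 1 + 1) := by
      rw [hh', hn, Finset.sum_range_succ']
      have key : ∀ ℓ ∈ Finset.range (j + 1),
          c (j + 1 - (ℓ + 1)) * M (ℓ + 1) n (n - 1)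
            = a n * (c (j - ℓ) * M ℓ (n + 1) (n - 1))
              + a (n - 1) * (c (j - ℓ) * M ℓ (n - 1) (n - 1))
              + b n * (c (j - ℓ) * M ℓ n (n - 1)) := by
        intro ℓ _
        rw [Nat.add_sub_add_right, hleft]
        ring
      rw [Finset.sum_congr rfl key, Finset.sum_add_distrib, Finset.sum_add_distrib,
        ← Finset.mul_sum, ← Finset.mul_sum, ← Finset.mul_sum, ← hT, ← hDm, ← hB, hM0]
      rw [if_neg (by omega : ¬(n = n - 1))]
      ring
    have e3 : g j (n + 1) = Dp := by rw [hg', hDp]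
    have e4 : g j (n - 1) = Dm := by rw [hg', hDm]
    have e5 : h j n = 2 * a n * A + c (j + 1) := by rw [hh', hA]
    have e6 : h j (n - 1) = 2 * a (n - 1) * B + c (j + 1) := by rw [hh', hn, hB]
    rw [e1, e2, e3, e4, e5, e6]; ring
end

section
/- If (a₀, b₀) are bounded sequences with ‖(a₀⁺ − a₀, b₀⁺ − b₀)‖_{w,p} < ∞, then for each j the quantities g_{0,j}⁺ − g_{0,j} and h_{0,j} − h_{0,j}⁻ formed from (a₀, b₀) via the Toda hierarchy recursion satisfy ‖g_{0,j}⁺ − g_{0,j}‖_{w,p} < ∞ and ‖h_{0,j} − h_{0,j}⁻‖_{w,p} < ∞ (proved by induction on j using the recursion). -/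
open scoped ENNReal

/-- The weighted `ℓ^p_w` "norm" of a single sequence, valued in `ℝ≥0∞`. -/
noncomputable def wnorm (w : ℤ → ℝ) (p : ℝ≥0∞) (f : ℤ → ℝ) : ℝ≥0∞ :=
  if p = ∞ then ⨆ n, ENNReal.ofReal (w n * |f n|)
  else (∑' n, ENNReal.ofReal (w n * |f n| ^ p.toReal)) ^ (1 / p.toReal)

namespace TodaAux

lemma abs_mul_le {x y B : ℝ} (hB : |x| ≤ B) : |x * y| ≤ B * |y| := by
  rw [abs_mul]; exact mul_le_mul_of_nonneg_right hB (abs_nonneg y)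

lemma wnorm_ne_top_iff (w : ℤ → ℝ) (p : ℝ≥0∞) (hp : 1 ≤ p) (hp' : p ≠ ∞) (f : ℤ → ℝ) :
    wnorm w p f ≠ ∞ ↔ (∑' n, ENNReal.ofReal (w n * |f n| ^ p.toReal)) ≠ ∞ := by
  have hp0 : p ≠ 0 := by
    intro h; rw [h] at hp; exact absurd hp (by simp)
  have ht : 0 < p.toReal := ENNReal.toReal_pos hp0 hp'
  rw [wnorm, if_neg hp', Ne, ENNReal.rpow_eq_top_iff_of_pos (by positivity)]

lemma fin_dom (w : ℤ → ℝ) (hw1 : ∀ n, 1 ≤ w n) (p : ℝ≥0∞) (hp : 1 ≤ p)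
    {f g : ℤ → ℝ} {C : ℝ} (hC : 0 ≤ C)
    (h : ∀ n, |f n| ≤ C * |g n|) (hg : wnorm w p g ≠ ∞) : wnorm w p f ≠ ∞ := by
  have hw0 : ∀ n, (0:ℝ) ≤ w n := fun n => le_trans zero_le_one (hw1 n)
  by_cases hp' : p = ∞
  · simp only [wnorm, if_pos hp'] at hg ⊢
    have hb : (⨆ n, ENNReal.ofReal (w n * |f n|))
        ≤ ENNReal.ofReal C * ⨆ m, ENNReal.ofReal (w m * |g m|) := by
      refine iSup_le fun n => ?_
      calc ENNReal.ofReal (w n * |f n|)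
          ≤ ENNReal.ofReal (C * (w n * |g n|)) := by
            refine ENNReal.ofReal_le_ofReal ?_
            have := mul_le_mul_of_nonneg_left (h n) (hw0 n)
            nlinarith
        _ = ENNReal.ofReal C * ENNReal.ofReal (w n * |g n|) := ENNReal.ofReal_mul hC
        _ ≤ ENNReal.ofReal C * ⨆ m, ENNReal.ofReal (w m * |g m|) :=
            mul_le_mul_right (le_iSup (fun m => ENNReal.ofReal (w m * |g m|)) n) _
    exact ne_top_of_le_ne_top (ENNReal.mul_ne_top ENNReal.ofReal_ne_top hg) hb
  · rw [wnorm_ne_top_iff w p hp hp'] at hg ⊢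
    set t := p.toReal with ht_def
    have ht : 0 ≤ t := ENNReal.toReal_nonneg
    have hb : (∑' n, ENNReal.ofReal (w n * |f n| ^ t))
        ≤ ENNReal.ofReal (C ^ t) * ∑' n, ENNReal.ofReal (w n * |g n| ^ t) := by
      calc (∑' n, ENNReal.ofReal (w n * |f n| ^ t))
          ≤ ∑' n, ENNReal.ofReal (C ^ t) * ENNReal.ofReal (w n * |g n| ^ t) := by
            refine ENNReal.tsum_le_tsum fun n => ?_
            rw [← ENNReal.ofReal_mul (Real.rpow_nonneg hC t)]
            refine ENNReal.ofReal_le_ofReal ?_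
            have h1 : |f n| ^ t ≤ C ^ t * |g n| ^ t := by
              rw [← Real.mul_rpow hC (abs_nonneg _)]
              exact Real.rpow_le_rpow (abs_nonneg _) (h n) ht
            have := mul_le_mul_of_nonneg_left h1 (hw0 n)
            nlinarith
        _ = ENNReal.ofReal (C ^ t) * ∑' n, ENNReal.ofReal (w n * |g n| ^ t) :=
            ENNReal.tsum_mul_left
    exact ne_top_of_le_ne_top (ENNReal.mul_ne_top ENNReal.ofReal_ne_top hg) hb

lemma fin_add (w : ℤ → ℝ) (hw1 : ∀ n, 1 ≤ w n) (p : ℝ≥0∞) (hp : 1 ≤ p)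
    {f g : ℤ → ℝ} (hf : wnorm w p f ≠ ∞) (hg : wnorm w p g ≠ ∞) :
    wnorm w p (fun n => f n + g n) ≠ ∞ := by
  have hw0 : ∀ n, (0:ℝ) ≤ w n := fun n => le_trans zero_le_one (hw1 n)
  by_cases hp' : p = ∞
  · simp only [wnorm, if_pos hp'] at hf hg ⊢
    refine ne_top_of_le_ne_top (ENNReal.add_ne_top.mpr ⟨hf, hg⟩) (iSup_le fun n => ?_)
    calc ENNReal.ofReal (w n * |f n + g n|)
        ≤ ENNReal.ofReal (w n * |f n| + w n * |g n|) := by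
          refine ENNReal.ofReal_le_ofReal ?_
          have := mul_le_mul_of_nonneg_left (abs_add_le (f n) (g n)) (hw0 n)
          nlinarith
      _ = ENNReal.ofReal (w n * |f n|) + ENNReal.ofReal (w n * |g n|) :=
          ENNReal.ofReal_add (mul_nonneg (hw0 n) (abs_nonneg _))
            (mul_nonneg (hw0 n) (abs_nonneg _))
      _ ≤ (⨆ m, ENNReal.ofReal (w m * |f m|)) + ⨆ m, ENNReal.ofReal (w m * |g m|) :=
          add_le_add (le_iSup (fun m => ENNReal.ofReal (w m * |f m|)) n)
            (le_iSup (fun m => ENNReal.ofReal (w m * |g m|)) n)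
  · rw [wnorm_ne_top_iff w p hp hp'] at hf hg ⊢
    set t := p.toReal with ht_def
    have ht : 0 ≤ t := ENNReal.toReal_nonneg
    have hb : (∑' n, ENNReal.ofReal (w n * |f n + g n| ^ t))
        ≤ ENNReal.ofReal ((2:ℝ) ^ t) *
          ((∑' n, ENNReal.ofReal (w n * |f n| ^ t)) +
            ∑' n, ENNReal.ofReal (w n * |g n| ^ t)) := by
      calc (∑' n, ENNReal.ofReal (w n * |f n + g n| ^ t))
          ≤ ∑' n, ENNReal.ofReal ((2:ℝ) ^ t) *
            (ENNReal.ofReal (w n * |f n| ^ t) + ENNReal.ofReal (w n * |g n| ^ t)) := by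
            refine ENNReal.tsum_le_tsum fun n => ?_
            have key : |f n + g n| ^ t ≤ 2 ^ t * (|f n| ^ t + |g n| ^ t) := by
              have h1 : |f n + g n| ≤ 2 * max |f n| |g n| := by
                refine le_trans (abs_add_le _ _) ?_
                have := le_max_left |f n| |g n|
                have := le_max_right |f n| |g n|
                linarith
              have hmax0 : (0:ℝ) ≤ max |f n| |g n| := le_trans (abs_nonneg _) (le_max_left _ _)
              calc |f n + g n| ^ t ≤ (2 * max |f n| |g n|) ^ t :=
                    Real.rpow_le_rpow (abs_nonneg _) h1 ht
                _ = 2 ^ t * (max |f n| |g n|) ^ t := Real.mul_rpow (by norm_num) hmax0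
                _ ≤ 2 ^ t * (|f n| ^ t + |g n| ^ t) := by
                    refine mul_le_mul_of_nonneg_left ?_ (Real.rpow_nonneg (by norm_num) t)
                    rcases max_cases |f n| |g n| with ⟨hm, _⟩ | ⟨hm, _⟩ <;> rw [hm]
                    · exact le_add_of_nonneg_right (Real.rpow_nonneg (abs_nonneg _) t)
                    · exact le_add_of_nonneg_left (Real.rpow_nonneg (abs_nonneg _) t)
            calc ENNReal.ofReal (w n * |f n + g n| ^ t)
                ≤ ENNReal.ofReal ((2:ℝ) ^ t * (w n * |f n| ^ t + w n * |g n| ^ t)) := by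
                  refine ENNReal.ofReal_le_ofReal ?_
                  have := mul_le_mul_of_nonneg_left key (hw0 n)
                  nlinarith
              _ = ENNReal.ofReal ((2:ℝ) ^ t) *
                  (ENNReal.ofReal (w n * |f n| ^ t) + ENNReal.ofReal (w n * |g n| ^ t)) := by
                  rw [ENNReal.ofReal_mul (Real.rpow_nonneg (by norm_num) t),
                    ENNReal.ofReal_add (mul_nonneg (hw0 n) (Real.rpow_nonneg (abs_nonneg _) t))
                      (mul_nonneg (hw0 n) (Real.rpow_nonneg (abs_nonneg _) t))]
        _ = ENNReal.ofReal ((2:ℝ) ^ t) *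
            ((∑' n, ENNReal.ofReal (w n * |f n| ^ t)) +
              ∑' n, ENNReal.ofReal (w n * |g n| ^ t)) := by
            rw [ENNReal.tsum_mul_left, ENNReal.tsum_add]
    exact ne_top_of_le_ne_top
      (ENNReal.mul_ne_top ENNReal.ofReal_ne_top (ENNReal.add_ne_top.mpr ⟨hf, hg⟩)) hb

lemma fin_shift (w : ℤ → ℝ) (hw1 : ∀ n, 1 ≤ w n) (p : ℝ≥0∞) (hp : 1 ≤ p)
    {f : ℤ → ℝ} (k : ℤ) {C : ℝ} (hC : 0 ≤ C) (hwk : ∀ m, w (m - k) ≤ C * w m)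
    (hf : wnorm w p f ≠ ∞) : wnorm w p (fun n => f (n + k)) ≠ ∞ := by
  have hw0 : ∀ n, (0:ℝ) ≤ w n := fun n => le_trans zero_le_one (hw1 n)
  by_cases hp' : p = ∞
  · simp only [wnorm, if_pos hp'] at hf ⊢
    have hb : (⨆ n, ENNReal.ofReal (w n * |f (n + k)|))
        ≤ ENNReal.ofReal C * ⨆ m, ENNReal.ofReal (w m * |f m|) := by
      refine iSup_le fun n => ?_
      have hwn : w n ≤ C * w (n + k) := by
        have := hwk (n + k); simpa using this
      calc ENNReal.ofReal (w n * |f (n + k)|)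
          ≤ ENNReal.ofReal (C * (w (n + k) * |f (n + k)|)) := by
            refine ENNReal.ofReal_le_ofReal ?_
            have := mul_le_mul_of_nonneg_right hwn (abs_nonneg (f (n + k)))
            nlinarith
        _ = ENNReal.ofReal C * ENNReal.ofReal (w (n + k) * |f (n + k)|) := ENNReal.ofReal_mul hC
        _ ≤ ENNReal.ofReal C * ⨆ m, ENNReal.ofReal (w m * |f m|) :=
            mul_le_mul_right (le_iSup (fun m => ENNReal.ofReal (w m * |f m|)) (n + k)) _
    exact ne_top_of_le_ne_top (ENNReal.mul_ne_top ENNReal.ofReal_ne_top hf) hb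
  · rw [wnorm_ne_top_iff w p hp hp'] at hf ⊢
    set t := p.toReal with ht_def
    have hre : (∑' n, ENNReal.ofReal (w n * |f (n + k)| ^ t))
        = ∑' a, ENNReal.ofReal (w (a - k) * |f a| ^ t) := by
      rw [← (Equiv.subRight k).tsum_eq (fun n => ENNReal.ofReal (w n * |f (n + k)| ^ t))]
      simp [Equiv.subRight_apply, sub_add_cancel]
    have hb : (∑' a, ENNReal.ofReal (w (a - k) * |f a| ^ t))
        ≤ ENNReal.ofReal C * ∑' a, ENNReal.ofReal (w a * |f a| ^ t) := by
      calc (∑' a, ENNReal.ofReal (w (a - k) * |f a| ^ t))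
          ≤ ∑' a, ENNReal.ofReal C * ENNReal.ofReal (w a * |f a| ^ t) := by
            refine ENNReal.tsum_le_tsum fun a => ?_
            rw [← ENNReal.ofReal_mul hC]
            refine ENNReal.ofReal_le_ofReal ?_
            have := mul_le_mul_of_nonneg_right (hwk a) (Real.rpow_nonneg (abs_nonneg (f a)) t)
            nlinarith
        _ = ENNReal.ofReal C * ∑' a, ENNReal.ofReal (w a * |f a| ^ t) := ENNReal.tsum_mul_left
    rw [hre]
    exact ne_top_of_le_ne_top (ENNReal.mul_ne_top ENNReal.ofReal_ne_top hf) hb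

end TodaAux


/-- If `(a₀, b₀)` are bounded sequences with
`‖(a₀⁺ − a₀, b₀⁺ − b₀)‖_{w,p} < ∞`, then for each `j` the quantities
`g_{0,j}⁺ − g_{0,j}` and `h_{0,j} − h_{0,j}⁻` formed from `(a₀, b₀)` via the Toda
hierarchy recursion have finite `‖·‖_{w,p}` norm. -/
theorem toda_hierarchy_inhomogeneity_finite_norm
    (w : ℤ → ℝ) (hw1 : ∀ n, 1 ≤ w n)
    (hw2 : ∃ C : ℝ, ∀ n, w (n + 1) / w n + w n / w (n + 1) ≤ C)
    (p : ℝ≥0∞) (hp : 1 ≤ p)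
    (a₀ b₀ : ℤ → ℝ)
    (ha₀bdd : ∃ C, ∀ n, |a₀ n| + |b₀ n| ≤ C)
    (hfin_a : wnorm w p (fun n => a₀ (n + 1) - a₀ n) ≠ ∞)
    (hfin_b : wnorm w p (fun n => b₀ (n + 1) - b₀ n) ≠ ∞)
    (c : ℕ → ℝ)
    (g h : ℕ → ℤ → ℝ)
    (hgh_bdd : ∀ j, ∃ C, ∀ n, |g j n| + |h j n| ≤ C)
    (hg0 : ∀ n, g 0 n = 1) (hh0 : ∀ n, h 0 n = c 1)
    (hgrec : ∀ j n, 2 * g (j + 1) n = h j n + h j (n - 1) + 2 * b₀ n * g j n)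
    (hhrec : ∀ j n, h (j + 1) n - h (j + 1) (n - 1)
      = 2 * ((a₀ n) ^ 2 * g j (n + 1) - (a₀ (n - 1)) ^ 2 * g j (n - 1))
        + b₀ n * (h j n - h j (n - 1))) :
    ∀ j, wnorm w p (fun n => g j (n + 1) - g j n) ≠ ∞ ∧
      wnorm w p (fun n => h j n - h j (n - 1)) ≠ ∞ := by
  classical
  have hw0 : ∀ n, (0:ℝ) ≤ w n := fun n => le_trans zero_le_one (hw1 n)
  have hwpos : ∀ n, (0:ℝ) < w n := fun n => lt_of_lt_of_le one_pos (hw1 n)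
  obtain ⟨Cw, hCw⟩ := hw2
  have hCw0 : (0:ℝ) ≤ Cw := by
    have := hCw 0
    have h1 : (0:ℝ) < w 1 / w 0 := div_pos (hwpos 1) (hwpos 0)
    have h2 : (0:ℝ) < w 0 / w 1 := div_pos (hwpos 0) (hwpos 1)
    linarith
  have hsh1 : ∀ m : ℤ, w (m - 1) ≤ Cw * w m := by
    intro m
    have h0 := hCw (m - 1)
    rw [sub_add_cancel] at h0
    have h1 : (0:ℝ) < w m / w (m - 1) := div_pos (hwpos m) (hwpos (m - 1))
    have h2 : w (m - 1) / w m ≤ Cw := by linarith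
    exact (div_le_iff₀ (hwpos m)).mp h2
  have hshm1 : ∀ m : ℤ, w (m - (-1)) ≤ Cw * w m := by
    intro m
    have h0 := hCw m
    have h1 : (0:ℝ) < w m / w (m + 1) := div_pos (hwpos m) (hwpos (m + 1))
    have h2 : w (m + 1) / w m ≤ Cw := by linarith
    have := (div_le_iff₀ (hwpos m)).mp h2
    simpa [sub_neg_eq_add] using this
  obtain ⟨Ca, hCa⟩ := ha₀bdd
  have hCa0 : (0:ℝ) ≤ Ca := le_trans (by positivity) (hCa 0)
  have hCaa : ∀ n, |a₀ n| ≤ Ca := fun n =>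
    le_trans (le_add_of_nonneg_right (abs_nonneg _)) (hCa n)
  have hCab : ∀ n, |b₀ n| ≤ Ca := fun n =>
    le_trans (le_add_of_nonneg_left (abs_nonneg _)) (hCa n)
  intro j
  induction j with
  | zero =>
    constructor
    · refine TodaAux.fin_dom w hw1 p hp (C := 0) le_rfl (fun n => ?_) hfin_a
      simp [hg0]
    · refine TodaAux.fin_dom w hw1 p hp (C := 0) le_rfl (fun n => ?_) hfin_b
      simp [hh0]
  | succ j ih =>
    obtain ⟨ihg, ihh⟩ := ih
    obtain ⟨Cg, hCgh⟩ := hgh_bdd j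
    have hCg0 : (0:ℝ) ≤ Cg := le_trans (by positivity) (hCgh 0)
    have hCgg : ∀ n, |g j n| ≤ Cg := fun n =>
      le_trans (le_add_of_nonneg_right (abs_nonneg _)) (hCgh n)
    -- shifted finite-norm facts
    have finHdS : wnorm w p (fun n => h j (n + 1) - h j n) ≠ ∞ := by
      have h1 := TodaAux.fin_shift w hw1 p hp (f := fun n => h j n - h j (n - 1)) 1 hCw0 hsh1 ihh
      have heq : (fun n : ℤ => h j (n + 1) - h j (n + 1 - 1)) = fun n => h j (n + 1) - h j n := by
        funext n
        have : n + 1 - 1 = n := by ring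
        rw [this]
      rwa [heq] at h1
    have finGdm : wnorm w p (fun n => g j n - g j (n - 1)) ≠ ∞ := by
      have h1 := TodaAux.fin_shift w hw1 p hp (f := fun n => g j (n + 1) - g j n) (-1) hCw0 hshm1 ihg
      have heq : (fun n : ℤ => g j (n + -1 + 1) - g j (n + -1)) = fun n => g j n - g j (n - 1) := by
        funext n
        have e1 : n + -1 + 1 = n := by ring
        have e2 : n + -1 = n - 1 := by ring
        rw [e1, e2]
      rwa [heq] at h1
    have finAdm : wnorm w p (fun n => a₀ n - a₀ (n - 1)) ≠ ∞ := by
      have h1 := TodaAux.fin_shift w hw1 p hp (f := fun n => a₀ (n + 1) - a₀ n) (-1) hCw0 hshm1 hfin_a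
      have heq : (fun n : ℤ => a₀ (n + -1 + 1) - a₀ (n + -1)) = fun n => a₀ n - a₀ (n - 1) := by
        funext n
        have e1 : n + -1 + 1 = n := by ring
        have e2 : n + -1 = n - 1 := by ring
        rw [e1, e2]
      rwa [heq] at h1
    constructor
    · -- g part
      have hFeq : (fun n : ℤ => g (j + 1) (n + 1) - g (j + 1) n) =
          fun n => ((1/2) * (h j (n + 1) - h j n) + (1/2) * (h j n - h j (n - 1))) +
            (b₀ (n + 1) * (g j (n + 1) - g j n) + (b₀ (n + 1) - b₀ n) * g j n) := by
        funext n
        have h1 := hgrec j (n + 1)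
        have h2 := hgrec j n
        have e1 : n + 1 - 1 = n := by ring
        rw [e1] at h1
        linarith
      rw [hFeq]
      refine TodaAux.fin_add w hw1 p hp (TodaAux.fin_add w hw1 p hp ?_ ?_)
        (TodaAux.fin_add w hw1 p hp ?_ ?_)
      · refine TodaAux.fin_dom w hw1 p hp (C := 1/2) (by norm_num) (fun n => ?_) finHdS
        exact TodaAux.abs_mul_le (le_of_eq (abs_of_nonneg (by norm_num)))
      · refine TodaAux.fin_dom w hw1 p hp (C := 1/2) (by norm_num) (fun n => ?_) ihh
        exact TodaAux.abs_mul_le (le_of_eq (abs_of_nonneg (by norm_num)))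
      · refine TodaAux.fin_dom w hw1 p hp (C := Ca) hCa0 (fun n => ?_) ihg
        exact TodaAux.abs_mul_le (hCab (n + 1))
      · refine TodaAux.fin_dom w hw1 p hp (C := Cg) hCg0 (fun n => ?_) hfin_b
        rw [mul_comm]
        exact TodaAux.abs_mul_le (hCgg n)
    · -- h part
      have hHeq : (fun n : ℤ => h (j + 1) n - h (j + 1) (n - 1)) =
          fun n => ((2 * a₀ n ^ 2 * (g j (n + 1) - g j n) +
              2 * a₀ n ^ 2 * (g j n - g j (n - 1))) +
            ((2 * (a₀ n + a₀ (n - 1)) * g j (n - 1)) * (a₀ n - a₀ (n - 1)) +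
              b₀ n * (h j n - h j (n - 1)))) := by
        funext n
        rw [hhrec j n]
        ring
      rw [hHeq]
      refine TodaAux.fin_add w hw1 p hp (TodaAux.fin_add w hw1 p hp ?_ ?_)
        (TodaAux.fin_add w hw1 p hp ?_ ?_)
      · refine TodaAux.fin_dom w hw1 p hp (C := 2 * Ca ^ 2) (by positivity) (fun n => ?_) ihg
        refine TodaAux.abs_mul_le ?_
        have := hCaa n
        rw [abs_mul, abs_two, abs_pow]
        nlinarith [abs_nonneg (a₀ n)]
      · refine TodaAux.fin_dom w hw1 p hp (C := 2 * Ca ^ 2) (by positivity) (fun n => ?_) finGdm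
        refine TodaAux.abs_mul_le ?_
        have := hCaa n
        rw [abs_mul, abs_two, abs_pow]
        nlinarith [abs_nonneg (a₀ n)]
      · refine TodaAux.fin_dom w hw1 p hp (C := 4 * Ca * Cg) (by positivity) (fun n => ?_) finAdm
        refine TodaAux.abs_mul_le ?_
        have h1 := hCaa n
        have h2 := hCaa (n - 1)
        have h3 := hCgg (n - 1)
        calc |2 * (a₀ n + a₀ (n - 1)) * g j (n - 1)|
            = 2 * |a₀ n + a₀ (n - 1)| * |g j (n - 1)| := by
              rw [abs_mul, abs_mul, abs_two]
          _ ≤ 2 * (Ca + Ca) * Cg := by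
              have h4 := abs_add_le (a₀ n) (a₀ (n - 1))
              have h5 : |a₀ n + a₀ (n - 1)| ≤ Ca + Ca := le_trans h4 (by linarith)
              have h6 : (0:ℝ) ≤ |a₀ n + a₀ (n - 1)| := abs_nonneg _
              nlinarith [abs_nonneg (g j (n - 1))]
          _ = 4 * Ca * Cg := by ring
      · refine TodaAux.fin_dom w hw1 p hp (C := Ca) hCa0 (fun n => ?_) ihh
        exact TodaAux.abs_mul_le (hCab n)
end
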